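/- arXiv:1401.1887 — 12 statements merged into one kernel-verified Lean document; each statement's English description precedes it below -/
import Mathlib

section
/- Let p be an odd prime, m a positive integer, n = 2m, q = p^n, and let S = {z in F_q : z * z^{p^m} = 1}. Then every square in F_q^* can be written as y*z with y in F_{p^m}^* and z in S, and each such square admits exactly two such representations. -/
/-- for an odd prime `p`, `n = 2m`, every square in `F_{p^n}^*` can be
written as `y * z` with `y ∈ F_{p^m}^*` and `z ∈ S = {z : z * z^(p^m) = 1}`, and
each such square admits exactly two such representations. -/
theorem stmt_2 (p m : ℕ) [Fact p.Prime] (hp : Odd p) (hm : 0 < m)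
    (x : GaloisField p (2 * m))
    (hx : ∃ w : GaloisField p (2 * m), w ≠ 0 ∧ w ^ 2 = x) :
    Nat.card {yz : GaloisField p (2 * m) × GaloisField p (2 * m) //
      yz.1 ≠ 0 ∧ yz.1 ^ (p ^ m) = yz.1 ∧ yz.2 * yz.2 ^ (p ^ m) = 1 ∧
        x = yz.1 * yz.2} = 2 := by
  obtain ⟨w, hw0, hwx⟩ := hx
  haveI : Fintype (GaloisField p (2 * m)) := Fintype.ofFinite _
  have hcard : Fintype.card (GaloisField p (2 * m)) = p ^ (2 * m) := by
    rw [← Nat.card_eq_fintype_card]; exact GaloisField.card p (2 * m) (by omega)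
  have hpow : ∀ a : GaloisField p (2 * m), a ^ p ^ (2 * m) = a := by
    intro a; rw [← hcard]; exact FiniteField.pow_card a
  have hfrob2 : ∀ a : GaloisField p (2 * m), (a ^ p ^ m) ^ p ^ m = a := by
    intro a
    rw [← pow_mul, ← pow_add]
    have h : m + m = 2 * m := by omega
    rw [h]; exact hpow a
  have hpm_odd : Odd (p ^ m) := hp.pow
  set y₀ : GaloisField p (2 * m) := w * w ^ p ^ m with hy₀
  have hy₀0 : y₀ ≠ 0 := mul_ne_zero hw0 (pow_ne_zero _ hw0)
  have hx0 : x ≠ 0 := by rw [← hwx]; exact pow_ne_zero 2 hw0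
  have hy₀fix : y₀ ^ p ^ m = y₀ := by
    rw [hy₀, mul_pow, hfrob2]; ring
  have hxx : x * x ^ p ^ m = y₀ ^ 2 := by
    rw [← hwx, hy₀, ← pow_mul, mul_comm 2 (p ^ m), pow_mul]
    ring
  set z₀ : GaloisField p (2 * m) := x * y₀⁻¹ with hz₀
  have hz₀pow : z₀ ^ p ^ m = x ^ p ^ m * y₀⁻¹ := by
    rw [hz₀, mul_pow, inv_pow, hy₀fix]
  have hz₀norm : z₀ * z₀ ^ p ^ m = 1 := by
    rw [hz₀pow, hz₀]
    field_simp
    linear_combination hxx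
  have h2 : (2 : GaloisField p (2 * m)) ≠ 0 := by
    have hp2 : p ≠ 2 := by
      rintro rfl
      exact (Nat.not_odd_iff_even.mpr (by decide)) hp
    exact Ring.two_ne_zero (by rw [ringChar.eq (GaloisField p (2 * m)) p]; omega)
  have hne : ((y₀, z₀) : GaloisField p (2 * m) × GaloisField p (2 * m)) ≠ (-y₀, -z₀) := by
    intro h
    have h1 : y₀ = -y₀ := congrArg Prod.fst h
    have h0 : (2 : GaloisField p (2 * m)) * y₀ = 0 := by linear_combination h1
    rcases mul_eq_zero.mp h0 with h | h
    · exact h2 h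
    · exact hy₀0 h
  have hequiv : Nat.card {yz : GaloisField p (2 * m) × GaloisField p (2 * m) //
      yz.1 ≠ 0 ∧ yz.1 ^ (p ^ m) = yz.1 ∧ yz.2 * yz.2 ^ (p ^ m) = 1 ∧
        x = yz.1 * yz.2} =
      Nat.card (({(y₀, z₀), (-y₀, -z₀)} : Set (GaloisField p (2 * m) × GaloisField p (2 * m)))) := by
    apply Nat.card_congr
    apply Equiv.subtypeEquivRight
    rintro ⟨y, z⟩
    simp only [Set.mem_insert_iff, Set.mem_singleton_iff, Prod.mk.injEq]
    constructor
    · rintro ⟨hy0, hyfix, hznorm, hxyz⟩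
      have hysq : y ^ 2 = y₀ ^ 2 := by
        have hh : x * x ^ p ^ m = y ^ 2 * (z * z ^ p ^ m) := by
          rw [hxyz, mul_pow, hyfix]; ring
        rw [hznorm, mul_one] at hh
        rw [← hh, hxx]
      have hfac : (y - y₀) * (y + y₀) = 0 := by linear_combination hysq
      rcases mul_eq_zero.mp hfac with h | h
      · have hy : y = y₀ := by linear_combination h
        subst hy
        left
        refine ⟨rfl, ?_⟩
        rw [hz₀]
        field_simp
        linear_combination -hxyz
      · have hy : y = -y₀ := by linear_combination h
        subst hy
        right
        refine ⟨rfl, ?_⟩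
        rw [hz₀]
        field_simp
        linear_combination hxyz
    · rintro (⟨rfl, rfl⟩ | ⟨rfl, rfl⟩)
      · exact ⟨hy₀0, hy₀fix, hz₀norm, by rw [hz₀]; field_simp⟩
      · refine ⟨neg_ne_zero.mpr hy₀0, ?_, ?_, ?_⟩
        · rw [hpm_odd.neg_pow, hy₀fix]
        · calc -z₀ * (-z₀) ^ p ^ m = -z₀ * -z₀ ^ p ^ m := by rw [hpm_odd.neg_pow]
            _ = z₀ * z₀ ^ p ^ m := by ring
            _ = 1 := hz₀norm
        · rw [hz₀]; field_simp
  rw [hequiv, Nat.card_coe_set_eq, Set.ncard_pair hne]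
end

section
/- Let p be a prime, m positive, n = 2m, and let d = s(p^m - 1) + 1 be a Niho exponent with gcd(d, p^n - 1) = 1. Then the inverse of d modulo p^n - 1 is also of Niho type; specifically, d^{-1} ≡ s'(p^m - 1) + 1 (mod p^n - 1) where s' ≡ s * (2s - 1)^{-1} (mod p^m + 1), with (2s-1)^{-1} the inverse of 2s - 1 modulo p^m + 1. -/
/-- if `d = s(p^m-1)+1` is a Niho exponent with `gcd(d, p^{2m}-1) = 1`,
then its inverse modulo `p^{2m}-1` is again of Niho type: for any `s'` with
`(2s-1)·s' ≡ s (mod p^m+1)` (i.e. `s' ≡ s·(2s-1)⁻¹`), the number `s'(p^m-1)+1`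
is a multiplicative inverse of `d` modulo `p^{2m}-1`. -/
theorem stmt_5 (p m : ℕ) [Fact p.Prime] (hm : 0 < m) (s : ℤ)
    (hd : Int.gcd (s * ((p : ℤ) ^ m - 1) + 1) ((p : ℤ) ^ (2 * m) - 1) = 1)
    (s' : ℤ) (hs' : (2 * s - 1) * s' ≡ s [ZMOD ((p : ℤ) ^ m + 1)]) :
    (s * ((p : ℤ) ^ m - 1) + 1) * (s' * ((p : ℤ) ^ m - 1) + 1) ≡ 1
      [ZMOD ((p : ℤ) ^ (2 * m) - 1)] := by
  obtain ⟨k, hk⟩ := hs'.dvd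
  rw [Int.modEq_iff_dvd]
  refine ⟨-(s * s' + k), ?_⟩
  have h2 : (p : ℤ) ^ (2 * m) = (p : ℤ) ^ m * (p : ℤ) ^ m := by
    rw [two_mul, pow_add]
  rw [h2]
  linear_combination (1 - (p:ℤ)^m) * hk
end

section
/- Let m be a positive integer, n = 2m, and d = s(2^m - 1) + 1 a Niho exponent. Let cl(d) be the least positive integer k with 2^k * d ≡ d (mod 2^n - 1). Then cl(d) = m if s ≡ 2^{-1} (mod 2^m + 1), and cl(d) = n otherwise. -/
private lemma pow_sub_one_dvd_step {m k : ℕ} (hmk : m ≤ k)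
    (h : (2:ℕ)^m - 1 ∣ 2^k - 1) : (2:ℕ)^m - 1 ∣ 2^(k-m) - 1 := by
  have h1 : (2:ℕ)^(k-m) * 2^m = 2^k := by rw [← pow_add]; congr 1; omega
  have h2 : (2:ℕ)^(k-m) * (2^m - 1) = 2^(k-m)*2^m - 2^(k-m) := by
    rw [Nat.mul_sub, mul_one]
  have hx : (1:ℕ) ≤ 2^(k-m) := Nat.one_le_two_pow
  have hy : (1:ℕ) ≤ 2^m := Nat.one_le_two_pow
  have h3 : (2:ℕ)^(k-m) ≤ 2^k := by
    rw [← h1]; exact Nat.le_mul_of_pos_right _ (by positivity)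
  have key : (2:ℕ)^(k-m) - 1 = (2^k - 1) - 2^(k-m) * (2^m - 1) := by
    rw [h2]; omega
  rw [key]
  exact Nat.dvd_sub h (dvd_mul_left _ _)

/-- for the Niho exponent `d = s(2^m-1)+1`, the least positive `k`
with `2^k · d ≡ d (mod 2^{2m}-1)` (the 2-cyclotomic coset size `cl(d)`) equals `m`
when `s ≡ 2⁻¹ (mod 2^m+1)` (i.e. `2s ≡ 1`), and equals `n = 2m` otherwise. -/
theorem stmt_6 (m s : ℕ) (hm : 0 < m) :
    (2 * s ≡ 1 [MOD 2 ^ m + 1] →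
      IsLeast {k : ℕ | 0 < k ∧
        2 ^ k * (s * (2 ^ m - 1) + 1) ≡ s * (2 ^ m - 1) + 1 [MOD 2 ^ (2 * m) - 1]} m) ∧
    (¬ 2 * s ≡ 1 [MOD 2 ^ m + 1] →
      IsLeast {k : ℕ | 0 < k ∧
        2 ^ k * (s * (2 ^ m - 1) + 1) ≡ s * (2 ^ m - 1) + 1 [MOD 2 ^ (2 * m) - 1]}
        (2 * m)) := by
  have hP : (1:ℕ) ≤ 2^m := Nat.one_le_two_pow
  set D : ℕ := s * (2 ^ m - 1) + 1 with hDdef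
  set N : ℕ := 2 ^ (2*m) - 1 with hNdef
  have hDpos : 0 < D := by positivity
  -- factorization N = (2^m - 1)(2^m + 1)
  have hN : N = (2^m - 1) * (2^m + 1) := by
    obtain ⟨t, ht⟩ : ∃ t, 2^m = t + 1 := ⟨2^m - 1, by omega⟩
    have h2 : (2:ℕ)^(2*m) = 2^m * 2^m := by rw [two_mul, pow_add]
    have h3 : (t+1) * (t+1) = t * (t+1+1) + 1 := by ring
    rw [hNdef, h2, ht]
    simp only [Nat.add_sub_cancel]
    omega
  -- coprimality of the two factors
  have hodd : (2^m - 1) % 2 = 1 := by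
    have : (2:ℕ) ∣ 2^m := dvd_pow_self 2 hm.ne'
    omega
  have hcop : Nat.Coprime (2^m - 1) (2^m + 1) := by
    have h1 : 2^m + 1 = 2 + (2^m - 1) := by omega
    rw [h1, Nat.coprime_add_self_right]
    exact Nat.coprime_comm.mp ((Nat.prime_two.coprime_iff_not_dvd).mpr (by omega))
  -- D is coprime to 2^m - 1
  have hDA : Nat.Coprime (2^m - 1) D := by
    rw [hDdef]
    simpa [mul_comm] using (Nat.coprime_mul_left_add_right (2^m-1) 1 s).mpr (Nat.coprime_one_right _)
  -- the membership criterion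
  have hmemb : ∀ k : ℕ, (2 ^ k * D ≡ D [MOD N] ↔ N ∣ (2^k - 1) * D) := by
    intro k
    have hle : D ≤ 2^k * D := Nat.le_mul_of_pos_left D (by positivity)
    have heq : (2^k - 1) * D = 2^k * D - D := by
      rw [Nat.sub_mul, one_mul]
    rw [heq]
    constructor
    · intro h; exact (Nat.modEq_iff_dvd' hle).mp h.symm
    · intro h; exact ((Nat.modEq_iff_dvd' hle).mpr h).symm
  -- key identity
  have hid : 2*s + D = s * (2^m + 1) + 1 := by
    have h1 : s * (2^m - 1) = s * 2^m - s := by rw [Nat.mul_sub, mul_one]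
    have h2 : s * (2^m + 1) = s * 2^m + s := by ring
    have h3 : s ≤ s * 2^m := Nat.le_mul_of_pos_right s (by positivity)
    rw [hDdef]; omega
  -- divisibility characterization of the congruence on s
  have hBD : (2^m + 1) ∣ D ↔ 2 * s ≡ 1 [MOD 2^m + 1] := by
    have hsB : s * (2^m + 1) ≡ 0 [MOD 2^m + 1] :=
      (Nat.modEq_zero_iff_dvd).mpr (dvd_mul_left _ _)
    constructor
    · intro h
      have h0 : D ≡ 0 [MOD 2^m + 1] := (Nat.modEq_zero_iff_dvd).mpr h
      have h1 : 2*s + 0 ≡ 2*s + D [MOD 2^m + 1] := (Nat.ModEq.refl (2*s)).add h0.symm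
      have h2 : 2*s + D ≡ 0 + 1 [MOD 2^m + 1] := by rw [hid]; exact hsB.add_right 1
      simpa using h1.trans h2
    · intro h
      have h1 : 2*s + D ≡ 0 + 1 [MOD 2^m + 1] := by rw [hid]; exact hsB.add_right 1
      have h2 : 1 + D ≡ 2*s + D [MOD 2^m + 1] := h.symm.add_right D
      have h3 : 1 + D ≡ 1 + 0 [MOD 2^m + 1] := by
        simpa [add_comm] using h2.trans h1
      exact (Nat.modEq_zero_iff_dvd).mp (h3.add_left_cancel' )
  have hAdvdN : (2^m - 1) ∣ N := ⟨2^m + 1, hN⟩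
  have hBdvdN : (2^m + 1) ∣ N := ⟨2^m - 1, by rw [hN, mul_comm]⟩
  -- from membership at k, deduce (2^m-1) ∣ 2^k - 1
  have hA2k : ∀ k : ℕ, N ∣ (2^k - 1) * D → (2^m - 1) ∣ 2^k - 1 := by
    intro k h
    exact hDA.dvd_of_dvd_mul_right (dvd_trans hAdvdN h)
  -- size contradiction helper: if 0 < j < m then ¬ (2^m - 1 ∣ 2^j - 1)
  have hsize : ∀ j : ℕ, 0 < j → j < m → ¬ ((2:ℕ)^m - 1 ∣ 2^j - 1) := by
    intro j hj hjm hdvd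
    have h1 : (2:ℕ)^1 ≤ 2^j := Nat.pow_le_pow_right (by norm_num) hj
    have h2 : (2:ℕ)^j < 2^m := Nat.pow_lt_pow_right (by norm_num) hjm
    have := Nat.le_of_dvd (by omega) hdvd
    omega
  constructor
  · -- case 2s ≡ 1 : least is m
    intro h
    constructor
    · refine ⟨hm, (hmemb m).mpr ?_⟩
      rw [hN]
      exact mul_dvd_mul_left _ (hBD.mpr h)
    · rintro k ⟨hkpos, hkmod⟩
      by_contra hlt
      push_neg at hlt
      exact hsize k hkpos hlt (hA2k k ((hmemb k).mp hkmod))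
  · -- case ¬ 2s ≡ 1 : least is 2m
    intro h
    constructor
    · refine ⟨by omega, (hmemb (2*m)).mpr ?_⟩
      exact dvd_mul_right _ _
    · rintro k ⟨hkpos, hkmod⟩
      by_contra hlt
      push_neg at hlt
      have hdvd : N ∣ (2^k - 1) * D := (hmemb k).mp hkmod
      have hAk : (2^m - 1) ∣ 2^k - 1 := hA2k k hdvd
      rcases lt_trichotomy k m with hkm | hkm | hkm
      · exact hsize k hkpos hkm hAk
      · have hB : (2^m + 1) ∣ (2^k - 1) * D := dvd_trans hBdvdN hdvd
        rw [hkm] at hB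
        have : (2^m + 1) ∣ D := (hcop.symm).dvd_of_dvd_mul_left hB
        exact h (hBD.mp this)
      · have hred := pow_sub_one_dvd_step hkm.le hAk
        exact hsize (k - m) (by omega) (by omega) hred
end

section
/- Let m be a positive integer, n = 2m, q = 2^n, and let d_2 = s_2(2^m - 1) + 1 be a Niho exponent. Set l = gcd(2 s_2 - 1, 2^m + 1). Then the number of pairs (x, y) in F_q × F_q satisfying x^{2^m+1} + y^{2^m+1} = 0 and x^{d_2} + y^{d_2} = 0 equals (2^n - 1) * l + 1. -/
open Finset Polynomial

/-- Lemma "N2": with `q = 2^{2m}`, `d₂ = s₂(2^m-1)+1` a Niho exponent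
and `l = gcd(2s₂-1, 2^m+1)`, the number of pairs `(x,y) ∈ F_q²` with
`x^{2^m+1} + y^{2^m+1} = 0` and `x^{d₂} + y^{d₂} = 0` is `(2^{2m}-1)·l + 1`. -/
theorem stmt_7 (m s2 : ℕ) (hm : 0 < m) (hs2 : 1 ≤ s2) :
    Nat.card {xy : GaloisField 2 (2 * m) × GaloisField 2 (2 * m) //
      xy.1 ^ (2 ^ m + 1) + xy.2 ^ (2 ^ m + 1) = 0 ∧
      xy.1 ^ (s2 * (2 ^ m - 1) + 1) + xy.2 ^ (s2 * (2 ^ m - 1) + 1) = 0} =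
    (2 ^ (2 * m) - 1) * Nat.gcd (2 * s2 - 1) (2 ^ m + 1) + 1 := by
  classical
  set F := GaloisField 2 (2 * m) with hFdef
  letI : Fintype F := Fintype.ofFinite F
  set a := 2 ^ m + 1 with ha
  set d := s2 * (2 ^ m - 1) + 1 with hd
  set r := 2 * s2 - 1 with hr
  set l := Nat.gcd r a with hl
  have ht2 : 2 ≤ 2 ^ m := by
    calc 2 = 2 ^ 1 := (pow_one 2).symm
    _ ≤ 2 ^ m := Nat.pow_le_pow_right (by norm_num) hm
  have hapos : 0 < a := by omega
  have hdpos : 0 < d := Nat.succ_pos _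
  have hrpos : 0 < r := by omega
  have hlpos : 0 < l := Nat.gcd_pos_of_pos_left _ hrpos
  -- characteristic two
  have hadd : ∀ x y : F, x + y = 0 ↔ x = y := fun x y => by
    rw [add_eq_zero_iff_eq_neg, CharTwo.neg_eq]
  -- gcd identity
  have hsum : d + r = s2 * a := by
    have h1 : 1 ≤ 2 ^ m := by omega
    have h2 : 1 ≤ 2 * s2 := by omega
    rw [hd, hr, ha]
    zify [h1, h2]
    ring
  have hgcd : Nat.gcd a d = l := by
    apply Nat.dvd_antisymm
    · apply Nat.dvd_gcd
      · have h1 : Nat.gcd a d ∣ s2 * a := (Nat.gcd_dvd_left a d).mul_left s2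
        have h2 : Nat.gcd a d ∣ d := Nat.gcd_dvd_right a d
        have h3 : r = s2 * a - d := by
          set w := s2 * a with hw
          omega
        rw [h3]
        exact Nat.dvd_sub h1 h2
      · exact Nat.gcd_dvd_left a d
    · refine Nat.dvd_gcd (Nat.gcd_dvd_right r a) ?_
      have h1 : l ∣ s2 * a := (Nat.gcd_dvd_right r a).mul_left s2
      have h2 : l ∣ r := Nat.gcd_dvd_left r a
      have h3 : d = s2 * a - r := by
        set w := s2 * a with hw
        omega
      rw [h3]
      exact Nat.dvd_sub h1 h2
  -- cardinalities
  have hq : Fintype.card F = 2 ^ (2 * m) := by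
    have := GaloisField.card 2 (2 * m) (by omega)
    rwa [Nat.card_eq_fintype_card] at this
  have hcardu : Fintype.card Fˣ = 2 ^ (2 * m) - 1 := by
    rw [Fintype.card_units, hq]
  have hadvd : a ∣ 2 ^ (2 * m) - 1 := by
    refine ⟨2 ^ m - 1, ?_⟩
    have h1 : 1 ≤ 2 ^ m := by omega
    have h2 : 1 ≤ 2 ^ (2 * m) := Nat.one_le_two_pow
    rw [ha]
    zify [h1, h2]
    rw [two_mul, pow_add]
    ring
  have hldvd : l ∣ Fintype.card Fˣ := by
    rw [hcardu]
    exact (Nat.gcd_dvd_right r a).trans hadvd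
  -- a primitive l-th root of unity
  obtain ⟨g, hg⟩ := IsCyclic.exists_generator (α := Fˣ)
  have hog : orderOf g = Fintype.card Fˣ := by
    rw [orderOf_eq_card_of_forall_mem_zpowers hg, Nat.card_eq_fintype_card]
  have hNpos : 0 < Fintype.card Fˣ := Fintype.card_pos
  set ζ := g ^ (Fintype.card Fˣ / l) with hζ
  have hoζ : orderOf ζ = l := by
    rw [hζ, orderOf_pow, hog,
      Nat.gcd_eq_right (Nat.div_dvd_of_dvd hldvd),
      Nat.div_div_self hldvd hNpos.ne']
  have hprim : IsPrimitiveRoot ((ζ : F)) l := by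
    have : orderOf ((ζ : F)) = l := by rw [orderOf_units, hoζ]
    exact this ▸ IsPrimitiveRoot.orderOf (ζ : F)
  have hroots : (univ.filter fun u : F => u ^ l = 1).card = l := by
    have heq : (univ.filter fun u : F => u ^ l = 1) = nthRootsFinset l (1 : F) := by
      ext x
      simp [Polynomial.mem_nthRootsFinset hlpos (1 : F)]
    rw [heq, hprim.card_nthRootsFinset]
  -- the key pointwise equivalence
  have hiff : ∀ u : F, (u ^ a = 1 ∧ u ^ d = 1) ↔ u ^ l = 1 := by
    intro u
    rw [← orderOf_dvd_iff_pow_eq_one, ← orderOf_dvd_iff_pow_eq_one,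
      ← orderOf_dvd_iff_pow_eq_one, ← hgcd]
    constructor
    · rintro ⟨h1, h2⟩
      exact Nat.dvd_gcd h1 h2
    · intro h
      exact ⟨h.trans (Nat.gcd_dvd_left a d), h.trans (Nat.gcd_dvd_right a d)⟩
  -- fiber counts
  have hzero : (univ.filter fun x : F => x ^ a + (0 : F) ^ a = 0 ∧
      x ^ d + (0 : F) ^ d = 0).card = 1 := by
    have : (univ.filter fun x : F => x ^ a + (0 : F) ^ a = 0 ∧
        x ^ d + (0 : F) ^ d = 0) = {0} := by
      ext x
      simp [zero_pow hapos.ne', zero_pow hdpos.ne',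
        pow_eq_zero_iff hapos.ne', pow_eq_zero_iff hdpos.ne']
    rw [this, Finset.card_singleton]
  have hne : ∀ y : F, y ≠ 0 →
      (univ.filter fun x : F => x ^ a + y ^ a = 0 ∧ x ^ d + y ^ d = 0).card = l := by
    intro y hy
    have himg : (univ.filter fun x : F => x ^ a + y ^ a = 0 ∧ x ^ d + y ^ d = 0)
        = (univ.filter fun u : F => u ^ l = 1).image (· * y) := by
      ext x
      simp only [mem_image, mem_filter, mem_univ, true_and]
      constructor
      · rintro ⟨h1, h2⟩
        rw [hadd] at h1 h2
        refine ⟨x * y⁻¹, ?_, by rw [inv_mul_cancel_right₀ hy]⟩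
        rw [← hiff]
        constructor
        · rw [mul_pow, h1, inv_pow, mul_inv_cancel₀ (pow_ne_zero _ hy)]
        · rw [mul_pow, h2, inv_pow, mul_inv_cancel₀ (pow_ne_zero _ hy)]
      · rintro ⟨u, hu, rfl⟩
        rw [← hiff] at hu
        constructor
        · rw [hadd, mul_pow, hu.1, one_mul]
        · rw [hadd, mul_pow, hu.2, one_mul]
    rw [himg, Finset.card_image_of_injective _ (mul_left_injective₀ hy), hroots]
  -- assemble
  rw [Nat.card_eq_fintype_card, Fintype.card_subtype]
  have hfiber : (univ.filter fun p : F × F =>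
        p.1 ^ a + p.2 ^ a = 0 ∧ p.1 ^ d + p.2 ^ d = 0).card
      = ∑ y : F, (univ.filter fun x : F => x ^ a + y ^ a = 0 ∧ x ^ d + y ^ d = 0).card := by
    rw [Finset.card_eq_sum_card_fiberwise
      (f := Prod.snd) (t := univ) (fun p _ => mem_univ p.2)]
    refine Finset.sum_congr rfl fun y _ => ?_
    refine Finset.card_bij' (fun p _ => p.1) (fun x _ => (x, y)) ?_ ?_ ?_ ?_
    · intro p hp
      simp only [mem_filter, mem_univ, true_and] at hp ⊢
      obtain ⟨⟨h1, h2⟩, h3⟩ := hp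
      rw [← h3]
      exact ⟨h1, h2⟩
    · intro x hx
      simp only [mem_filter, mem_univ, true_and] at hx ⊢
      exact ⟨hx, trivial⟩
    · intro p hp
      simp only [mem_filter, mem_univ, true_and] at hp
      exact Prod.ext rfl hp.2.symm
    · intro x hx
      rfl
  rw [hfiber]
  rw [← Finset.sum_erase_add _ _ (mem_univ (0 : F)), hzero]
  have hconst : ∑ y ∈ (univ : Finset F).erase 0,
      (univ.filter fun x : F => x ^ a + y ^ a = 0 ∧ x ^ d + y ^ d = 0).card
      = (2 ^ (2 * m) - 1) * l := by
    rw [Finset.sum_congr rfl fun y hy => hne y (Finset.ne_of_mem_erase hy),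
      Finset.sum_const, Finset.card_erase_of_mem (mem_univ 0), Finset.card_univ, hq,
      smul_eq_mul]
  rw [hconst]
end

section
/- Let m be a positive integer, n = 2m, q = 2^n. Let 1 ≤ k ≤ m, let t ≥ 1 be odd, and set d_1 = s_1(2^m-1)+1, d_2 = s_2(2^m-1)+1 with s_1 = 2^{k-1} t - (t-1)/2 and s_2 = 2^{k-1} t + (t+1)/2. Let l = gcd(t, 2^m + 1). Then the number of pairs (x,y) in F_q^2 with x^{d_1} + y^{d_1} = 0 and x^{d_2} + y^{d_2} = 0 equals (2^n - 1) l + 1. -/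
lemma count_aux (F : Type*) [Field F] [Fintype F] [DecidableEq F] (d1 d2 : ℕ) (hd1 : 0 < d1) :
    Nat.card {xy : F × F // xy.1 ^ d1 = xy.2 ^ d1 ∧ xy.1 ^ d2 = xy.2 ^ d2} =
      (Fintype.card F - 1) * Nat.gcd (Nat.gcd d1 d2) (Fintype.card F - 1) + 1 := by
  classical
  set N := Fintype.card Fˣ with hN
  set D := Nat.gcd (Nat.gcd d1 d2) N with hD
  have hNcard : Fintype.card Fˣ = Fintype.card F - 1 := Fintype.card_units (α := F)
  have hD0 : 0 < D := Nat.gcd_pos_of_pos_left _ (Nat.gcd_pos_of_pos_left _ hd1)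
  have hDN : D ∣ N := Nat.gcd_dvd_right _ _
  have hN0 : 0 < N := Fintype.card_pos
  have hiff : ∀ z : Fˣ, (z ^ d1 = 1 ∧ z ^ d2 = 1) ↔ z ^ D = 1 := by
    intro z
    rw [← orderOf_dvd_iff_pow_eq_one, ← orderOf_dvd_iff_pow_eq_one,
      ← orderOf_dvd_iff_pow_eq_one, hD, Nat.dvd_gcd_iff, Nat.dvd_gcd_iff]
    exact ⟨fun h => ⟨⟨h.1, h.2⟩, orderOf_dvd_card⟩, fun h => h.1⟩
  have hcardA : Nat.card {z : Fˣ // z ^ d1 = 1 ∧ z ^ d2 = 1} = D := by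
    rw [Nat.card_congr (Equiv.subtypeEquivRight hiff)]
    obtain ⟨gen, hgen⟩ := IsCyclic.exists_ofOrder_eq_natCard (α := Fˣ)
    have hgen' : orderOf gen = N := by rw [hgen, Nat.card_eq_fintype_card]
    have hζ : orderOf (gen ^ (N / D)) = D := by
      rw [orderOf_pow, hgen', Nat.gcd_eq_right (Nat.div_dvd_of_dvd hDN),
        Nat.div_div_self hDN hN0.ne']
    have : NeZero D := ⟨hD0.ne'⟩
    have hprim : IsPrimitiveRoot (gen ^ (N / D)) D := by
      have h := IsPrimitiveRoot.orderOf (gen ^ (N / D))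
      rwa [hζ] at h
    rw [Nat.card_congr (Equiv.subtypeEquivRight
      (fun z => (mem_rootsOfUnity D z).symm) : {z : Fˣ // z ^ D = 1} ≃ (rootsOfUnity D F)),
      hprim.card_rootsOfUnity']
  let A := {z : Fˣ // z ^ d1 = 1 ∧ z ^ d2 = 1}
  let S := {xy : F × F // xy.1 ^ d1 = xy.2 ^ d1 ∧ xy.1 ^ d2 = xy.2 ^ d2}
  let f : (A × Fˣ) ⊕ PUnit.{1} → S := fun p =>
    match p with
    | Sum.inl (z, y) => ⟨((z.1 : F) * (y : F), (y : F)), by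
        constructor <;>
          rw [mul_pow, ← Units.val_pow_eq_pow_val] <;>
          [rw [z.2.1]; rw [z.2.2]] <;> rw [Units.val_one, one_mul]⟩
    | Sum.inr _ => ⟨(0, 0), rfl, rfl⟩
  have hinj : Function.Injective f := by
    rintro (⟨z, y⟩ | ⟨⟩) (⟨z', y'⟩ | ⟨⟩) h
    · have h1 : (z.1 : F) * y = z'.1 * y' := congrArg (fun s : S => (s : F × F).1) h
      have h2 : (y : F) = y' := congrArg (fun s : S => (s : F × F).2) h
      have hy : y = y' := Units.ext h2
      subst hy
      have hz : z = z' := Subtype.ext (Units.ext (mul_right_cancel₀ (Units.ne_zero y) h1))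
      rw [hz]
    · exact absurd (congrArg (fun s : S => (s : F × F).2) h) (Units.ne_zero y)
    · exact absurd (congrArg (fun s : S => (s : F × F).2) h).symm (Units.ne_zero y')
    · rfl
  have hsurj : Function.Surjective f := by
    rintro ⟨⟨x, y⟩, h1, h2⟩
    by_cases hy : y = 0
    · subst hy
      have hx : x = 0 := by
        rw [zero_pow hd1.ne'] at h1
        exact pow_eq_zero_iff hd1.ne' |>.mp h1
      subst hx
      exact ⟨Sum.inr PUnit.unit, Subtype.ext rfl⟩
    · have hx : x ≠ 0 := by
        intro h0
        rw [h0, zero_pow hd1.ne'] at h1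
        exact hy (pow_eq_zero_iff hd1.ne' |>.mp h1.symm)
      have key : ∀ d : ℕ, x ^ d = y ^ d →
          (Units.mk0 x hx * (Units.mk0 y hy)⁻¹) ^ d = 1 := by
        intro d hd
        rw [mul_pow, inv_pow, mul_inv_eq_one]
        exact Units.ext (by simpa using hd)
      refine ⟨Sum.inl (⟨Units.mk0 x hx * (Units.mk0 y hy)⁻¹, key d1 h1, key d2 h2⟩,
        Units.mk0 y hy), ?_⟩
      refine Subtype.ext (Prod.ext ?_ rfl)
      show ((Units.mk0 x hx * (Units.mk0 y hy)⁻¹ : Fˣ) : F) * y = x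
      rw [Units.val_mul]
      simp only [Units.val_mk0, Units.val_inv_eq_inv_val]
      field_simp
  have e : (A × Fˣ) ⊕ PUnit.{1} ≃ S := Equiv.ofBijective f ⟨hinj, hsurj⟩
  show Nat.card S = _
  rw [← Nat.card_congr e, Nat.card_sum, Nat.card_prod, hcardA,
    Nat.card_eq_fintype_card (α := Fˣ)]
  rw [hD, hN, hNcard]
  simp [mul_comm]

lemma arith_aux (m k t : ℕ) (hm : 0 < m) (hk : 1 ≤ k) (ht : Odd t) (ht1 : 1 ≤ t) :
    Nat.gcd (Nat.gcd ((2 ^ (k - 1) * t - (t - 1) / 2) * (2 ^ m - 1) + 1)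
      ((2 ^ (k - 1) * t + (t + 1) / 2) * (2 ^ m - 1) + 1)) (2 ^ (2 * m) - 1) =
      Nat.gcd t (2 ^ m + 1) := by
  obtain ⟨u, hu⟩ := ht
  have hP1 : 1 ≤ 2 ^ (k - 1) := Nat.one_le_two_pow
  have hPt : t ≤ 2 ^ (k - 1) * t := Nat.le_mul_of_pos_left t (by omega)
  have h1 : (t - 1) / 2 = u := by omega
  have h2 : (t + 1) / 2 = u + 1 := by omega
  have hM1 : 1 ≤ 2 ^ m := Nat.one_le_two_pow
  set M := 2 ^ m - 1 with hM
  set E := 2 ^ m + 1 with hE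
  set s1 := 2 ^ (k - 1) * t - u with hs1
  have hQ : 2 ^ (2 * m) - 1 = M * E := by
    have h : 2 ^ (2 * m) = 2 ^ m * 2 ^ m := by rw [two_mul, pow_add]
    obtain ⟨c, hc⟩ := Nat.exists_eq_add_of_le hM1
    rw [h, hM, hE, hc]
    have h4 : 1 + c - 1 = c := by omega
    rw [h4]
    have h5 : (1 + c) * (1 + c) = c * (1 + c + 1) + 1 := by ring
    omega
  have hd2 : (2 ^ (k - 1) * t + (t + 1) / 2) * M + 1 = t * M + (s1 * M + 1) := by
    rw [h2, hs1]
    have h : 2 ^ (k - 1) * t + (u + 1) = t + (2 ^ (k - 1) * t - u) := by omega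
    rw [h, add_mul]; ring
  rw [h1, hd2, hQ, Nat.gcd_add_self_right]
  -- now: gcd (gcd (s1*M+1) (t*M)) (M*E) = gcd t E
  have hcop : Nat.Coprime (s1 * M + 1) M := by
    rw [Nat.Coprime, add_comm, Nat.gcd_add_mul_right_left]
    exact Nat.gcd_one_left M
  apply Nat.dvd_antisymm
  · set g := Nat.gcd (Nat.gcd (s1 * M + 1) (t * M)) (M * E) with hg
    have hgd1 : g ∣ s1 * M + 1 := (Nat.gcd_dvd_left _ _).trans (Nat.gcd_dvd_left _ _)
    have hgcop : Nat.Coprime g M := Nat.Coprime.coprime_dvd_left hgd1 hcop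
    have hgt : g ∣ t := hgcop.dvd_of_dvd_mul_right
      ((Nat.gcd_dvd_left _ _).trans (Nat.gcd_dvd_right _ _))
    have hgE : g ∣ E := hgcop.dvd_of_dvd_mul_left (Nat.gcd_dvd_right _ _)
    exact Nat.dvd_gcd hgt hgE
  · set l := Nat.gcd t E with hl
    have hlt : l ∣ t := Nat.gcd_dvd_left _ _
    have hlE : l ∣ E := Nat.gcd_dvd_right _ _
    have hld1 : l ∣ s1 * M + 1 := by
      obtain ⟨c, hc⟩ := id hlt
      obtain ⟨e, he⟩ := id hlE
      have hlodd : ¬ 2 ∣ l := by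
        intro h2l
        have hE2 : (2 : ℕ) ∣ E := h2l.trans hlE
        rw [hE] at hE2
        have : (2 : ℕ) ∣ 2 ^ m := dvd_pow_self 2 hm.ne'
        omega
      have he' : ((2 : ℤ)) ^ m + 1 = (l : ℤ) * e := by exact_mod_cast congrArg (Nat.cast : ℕ → ℤ) he
      have ht' : (t : ℤ) = l * c := by exact_mod_cast congrArg (Nat.cast : ℕ → ℤ) hc
      have hcast : (2 : ℤ) * ((s1 : ℤ) * M + 1) =
          (l : ℤ) * ((2 * 2 ^ (k - 1) * c - c) * (l * e - 2) + e) := by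
        have hs1' : (s1 : ℤ) = 2 ^ (k - 1) * t - u := by
          rw [hs1]; push_cast [Nat.cast_sub (by omega : u ≤ 2 ^ (k - 1) * t)]; ring
        have hM' : (M : ℤ) = (l : ℤ) * e - 2 := by
          rw [hM]; push_cast [Nat.cast_sub hM1]; omega
        have hu' : 2 * (u : ℤ) = (t : ℤ) - 1 := by
          have : t = 2 * u + 1 := by omega
          omega
        rw [hs1', hM']
        have hexp : (2 : ℤ) * ((2 ^ (k - 1) * t - u) * ((l : ℤ) * e - 2) + 1) =
            (2 * 2 ^ (k - 1) * t - (t - 1)) * ((l : ℤ) * e - 2) + 2 := by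
          linear_combination (-((l : ℤ) * e - 2)) * hu'
        rw [hexp, ht']; ring
      have h2d' : l ∣ 2 * (s1 * M + 1) := by
        have h2d : (l : ℤ) ∣ ((2 * (s1 * M + 1) : ℕ) : ℤ) := by
          rw [show ((2 * (s1 * M + 1) : ℕ) : ℤ) = (2 : ℤ) * ((s1 : ℤ) * M + 1) by push_cast; ring]
          exact Dvd.intro _ hcast.symm
        exact_mod_cast h2d
      have hcop2 : Nat.Coprime l 2 := Nat.coprime_two_right.mpr (Nat.odd_iff.mpr (by omega))
      exact hcop2.dvd_of_dvd_mul_left h2d'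
    exact Nat.dvd_gcd (Nat.dvd_gcd hld1 (hlt.mul_right M)) (hlE.mul_left M)

/-- with `q = 2^{2m}`, `1 ≤ k ≤ m`, `t ≥ 1` odd,
`s₁ = 2^{k-1}t - (t-1)/2`, `s₂ = 2^{k-1}t + (t+1)/2`, `dᵢ = sᵢ(2^m-1)+1` and
`l = gcd(t, 2^m+1)`, the number of pairs `(x,y) ∈ F_q²` with
`x^{d₁}+y^{d₁} = 0` and `x^{d₂}+y^{d₂} = 0` is `(2^{2m}-1)·l + 1`. -/
theorem stmt_8 (m k t : ℕ) (hm : 0 < m) (hk : 1 ≤ k) (hkm : k ≤ m)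
    (ht : Odd t) (ht1 : 1 ≤ t) :
    Nat.card {xy : GaloisField 2 (2 * m) × GaloisField 2 (2 * m) //
      xy.1 ^ ((2 ^ (k - 1) * t - (t - 1) / 2) * (2 ^ m - 1) + 1) +
        xy.2 ^ ((2 ^ (k - 1) * t - (t - 1) / 2) * (2 ^ m - 1) + 1) = 0 ∧
      xy.1 ^ ((2 ^ (k - 1) * t + (t + 1) / 2) * (2 ^ m - 1) + 1) +
        xy.2 ^ ((2 ^ (k - 1) * t + (t + 1) / 2) * (2 ^ m - 1) + 1) = 0} =
    (2 ^ (2 * m) - 1) * Nat.gcd t (2 ^ m + 1) + 1 := by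
  classical
  set F := GaloisField 2 (2 * m) with hF
  letI : Fintype F := Fintype.ofFinite F
  have hcardF : Fintype.card F = 2 ^ (2 * m) := by
    rw [Fintype.card_eq_nat_card, hF, GaloisField.card 2 (2 * m) (by omega)]
  set d1 := (2 ^ (k - 1) * t - (t - 1) / 2) * (2 ^ m - 1) + 1 with hd1def
  set d2 := (2 ^ (k - 1) * t + (t + 1) / 2) * (2 ^ m - 1) + 1 with hd2def
  have hchar : ∀ a b : F, a + b = 0 ↔ a = b := fun a b => by
    rw [← CharTwo.sub_eq_add, sub_eq_zero]
  rw [Nat.card_congr (Equiv.subtypeEquivRight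
    (fun xy : F × F => by rw [hchar, hchar]) :
    {xy : F × F // xy.1 ^ d1 + xy.2 ^ d1 = 0 ∧ xy.1 ^ d2 + xy.2 ^ d2 = 0} ≃
    {xy : F × F // xy.1 ^ d1 = xy.2 ^ d1 ∧ xy.1 ^ d2 = xy.2 ^ d2})]
  rw [count_aux F d1 d2 (Nat.succ_pos _), hcardF, hd1def, hd2def,
    arith_aux m k t hm hk ht ht1]
end

section
/- Let n, r be positive integers and r_0 = gcd(r, n). For any a, b, c in F_{2^n}, the equation x^{2^r + 1} + a x^{2^r} + b x + c = 0 has either 0, 1, 2, or 2^{r_0} + 1 solutions x in F_{2^n}. -/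
open Polynomial

section AuxLemmas

private lemma aux_pow_mul {F : Type*} [Monoid F] (u : F) (m k : ℕ) (h : u ^ 2 ^ m = u) :
    u ^ 2 ^ (m * k) = u := by
  induction k with
  | zero => simp
  | succ k ih => rw [Nat.mul_succ, pow_add, pow_mul, ih, h]

private lemma aux_pow_gcd {F : Type*} [Monoid F] (u : F) (m n : ℕ) (hm : u ^ 2 ^ m = u)
    (hn : u ^ 2 ^ n = u) : u ^ 2 ^ Nat.gcd m n = u := by
  revert hm hn
  induction m, n using Nat.gcd.induction with
  | H0 n => intro _ hn; simpa using hn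
  | H1 m n hmpos ih =>
      intro hm hn
      rw [Nat.gcd_rec]
      refine ih ?_ hm
      have h1 : u ^ 2 ^ (m * (n / m)) = u := aux_pow_mul u m (n / m) hm
      have h2 : m * (n / m) + n % m = n := Nat.div_add_mod n m
      calc u ^ 2 ^ (n % m) = (u ^ 2 ^ (m * (n / m))) ^ 2 ^ (n % m) := by rw [h1]
        _ = u ^ 2 ^ (m * (n / m) + n % m) := by rw [pow_add, pow_mul, pow_mul, ← pow_mul]
        _ = u := by rw [h2, hn]

private lemma aux_ncard_fixed (F : Type*) [Field F] [Fintype F] [CharP F 2] (d m : ℕ)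
    (hd : 0 < d) (hm : 0 < m) (hdm : d ∣ m) (hcard : Fintype.card F = 2 ^ m) :
    ({u : F | u ^ 2 ^ d = u}).ncard = 2 ^ d := by
  classical
  have hpd1 : 1 < 2 ^ d := Nat.one_lt_two_pow hd.ne'
  set g : F[X] := X ^ 2 ^ d - X with hg
  have hgne : g ≠ 0 := FiniteField.X_pow_card_sub_X_ne_zero F hpd1
  have hgdeg : g.natDegree = 2 ^ d := FiniteField.X_pow_card_sub_X_natDegree_eq F hpd1
  have hgsep : g.Separable := galois_poly_separable 2 (2 ^ d) (dvd_pow_self 2 hd.ne')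
  obtain ⟨k, hk⟩ := hdm
  have key : ∀ a b : ℕ, a ∣ b → ((X : F[X]) ^ a - 1) ∣ (X ^ b - 1) := by
    rintro a b ⟨t, rfl⟩
    simpa [pow_mul] using sub_dvd_pow_sub_pow ((X : F[X]) ^ a) 1 t
  have hnum : (2 ^ d - 1) ∣ (2 ^ m - 1) := by
    have := Nat.sub_dvd_pow_sub_pow (2 ^ d) 1 k
    simpa [← pow_mul, ← hk] using this
  have hfact : ∀ s : ℕ, 0 < s → (X : F[X]) ^ s - X = X * (X ^ (s - 1) - 1) := by
    intro s hs
    have hs' : s - 1 + 1 = s := by omega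
    rw [mul_sub, mul_one, ← pow_succ', hs']
  have hdvd : g ∣ (X ^ 2 ^ m - X : F[X]) := by
    rw [hg, hfact _ (by positivity), hfact _ (by positivity)]
    exact mul_dvd_mul_left X (key _ _ hnum)
  obtain ⟨h, hh⟩ := hdvd
  have hXm_ne : (X ^ 2 ^ m - X : F[X]) ≠ 0 :=
    FiniteField.X_pow_card_pow_sub_X_ne_zero F hm.ne' one_lt_two
  have hh_ne : h ≠ 0 := by
    rintro rfl
    rw [mul_zero] at hh
    exact hXm_ne hh
  have hroots_univ : (X ^ 2 ^ m - X : F[X]).roots = Finset.univ.val := by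
    have := FiniteField.roots_X_pow_card_sub_X F
    rwa [hcard] at this
  have hcard_m : Multiset.card (X ^ 2 ^ m - X : F[X]).roots = 2 ^ m := by
    rw [hroots_univ]
    simpa using hcard
  have hdeg_m : (X ^ 2 ^ m - X : F[X]).natDegree = 2 ^ m :=
    FiniteField.X_pow_card_pow_sub_X_natDegree_eq F hm.ne' one_lt_two
  have hdeg_h : h.natDegree = 2 ^ m - 2 ^ d := by
    have h1 := natDegree_mul hgne hh_ne
    rw [← hh, hdeg_m, hgdeg] at h1
    omega
  have hlow : 2 ^ d ≤ 2 ^ m := Nat.pow_le_pow_right (by norm_num) (Nat.le_of_dvd hm ⟨k, hk⟩)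
  have hcardg : Multiset.card g.roots = 2 ^ d := by
    have hmul : (X ^ 2 ^ m - X : F[X]).roots = g.roots + h.roots := by
      rw [hh]
      exact roots_mul (hh ▸ hXm_ne)
    have h1 : Multiset.card g.roots ≤ 2 ^ d := hgdeg ▸ card_roots' g
    have h2 : Multiset.card h.roots ≤ 2 ^ m - 2 ^ d := hdeg_h ▸ card_roots' h
    have h3 : Multiset.card g.roots + Multiset.card h.roots = 2 ^ m := by
      rw [← Multiset.card_add, ← hmul, hcard_m]
    omega
  have hset : {u : F | u ^ 2 ^ d = u} = ↑(g.roots.toFinset) := by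
    ext u
    simp only [Set.mem_setOf_eq, Finset.coe_sort_coe, Finset.mem_coe, Multiset.mem_toFinset,
      mem_roots (show (X ^ 2 ^ d - X : F[X]) ≠ 0 from hgne), IsRoot.def, hg, eval_sub, eval_pow, eval_X, sub_eq_zero]
  rw [hset, Set.ncard_coe_finset, Multiset.toFinset_card_of_nodup (nodup_roots hgsep), hcardg]

end AuxLemmas

/-- Dobbertin et al.: for `a, b, c ∈ F_{2^n}` the equation
`x^{2^r+1} + a x^{2^r} + b x + c = 0` has `0`, `1`, `2` or `2^{gcd(r,n)}+1`
solutions in `F_{2^n}`. -/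
theorem stmt_10 (n r : ℕ) (hn : 0 < n) (hr : 0 < r) (a b c : GaloisField 2 n) :
    Nat.card {x : GaloisField 2 n //
        x ^ (2 ^ r + 1) + a * x ^ (2 ^ r) + b * x + c = 0} ∈
      ({0, 1, 2, 2 ^ Nat.gcd r n + 1} : Set ℕ) := by
  classical
  letI : Fintype (GaloisField 2 n) := Fintype.ofFinite _
  have hcard : Fintype.card (GaloisField 2 n) = 2 ^ n := by
    rw [← Nat.card_eq_fintype_card]
    exact GaloisField.card 2 n hn.ne'
  have htwo : (2 : GaloisField 2 n) = 0 := by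
    have := CharP.cast_eq_zero (GaloisField 2 n) 2
    exact_mod_cast this
  set q : ℕ := 2 ^ r with hq
  have hq0 : q ≠ 0 := by positivity
  have hq1 : 1 ≤ q := Nat.one_le_two_pow
  have hq2 : 2 ≤ q := by rw [hq]; exact Nat.one_lt_two_pow hr.ne'
  have hadd : ∀ u v : GaloisField 2 n, (u + v) ^ q = u ^ q + v ^ q := fun u v => add_pow_char_pow u v 2 r
  have hucard : ∀ u : GaloisField 2 n, u ^ 2 ^ n = u := by
    intro u
    have := FiniteField.pow_card u
    rwa [hcard] at this
  set S : Set (GaloisField 2 n) := {x : GaloisField 2 n | x ^ (q + 1) + a * x ^ q + b * x + c = 0} with hS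
  have hgoal : Nat.card {x : GaloisField 2 n //
      x ^ (q + 1) + a * x ^ q + b * x + c = 0} = S.ncard := Nat.card_coe_set_eq S
  rw [hgoal]
  simp only [Set.mem_insert_iff, Set.mem_singleton_iff]
  rcases Set.eq_empty_or_nonempty S with hSe | ⟨x0, hx0⟩
  · left
    rw [hSe, Set.ncard_empty]
  -- x0 is a solution
  set α : GaloisField 2 n := x0 + a with hα
  set β : GaloisField 2 n := x0 ^ q + b with hβ
  have hx0' : x0 ^ q * x0 + a * x0 ^ q + b * x0 + c = 0 := by
    have := hx0
    rw [hS, Set.mem_setOf_eq, pow_succ] at this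
    exact this
  set T : Set (GaloisField 2 n) := {z : GaloisField 2 n | β * z ^ q + α * z = 1} with hT
  have hTz : ∀ z ∈ T, z ≠ 0 := by
    intro z hz hz0
    rw [hT, Set.mem_setOf_eq, hz0, zero_pow hq0, mul_zero, mul_zero, add_zero] at hz
    exact zero_ne_one hz
  -- S = insert x0 ((x0 + ·⁻¹) '' T)
  have hST : S = insert x0 ((fun z : GaloisField 2 n => x0 + z⁻¹) '' T) := by
    ext x
    constructor
    · intro hx
      by_cases hxx0 : x = x0
      · exact hxx0 ▸ Set.mem_insert _ _
      · right
        set y : GaloisField 2 n := x + x0 with hy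
        have hy0 : y ≠ 0 := by
          rw [hy]
          intro h0
          exact hxx0 (by linear_combination h0 - x0 * htwo)
        have hx' : (x0 ^ q + y ^ q) * (x0 + y) + a * (x0 ^ q + y ^ q) + b * (x0 + y) + c = 0 := by
          have hxval : x = x0 + y := by
            rw [hy]
            linear_combination (-x0) * htwo
          have := hx
          rw [hS, Set.mem_setOf_eq, hxval, pow_succ, hadd] at this
          exact this
        have hyeq : y ^ q * y + α * y ^ q + β * y = 0 := by
          rw [hα, hβ]
          linear_combination hx' - hx0'
        set z : GaloisField 2 n := y⁻¹ with hz
        have hz0 : z ≠ 0 := inv_ne_zero hy0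
        have hyz : y * z = 1 := mul_inv_cancel₀ hy0
        have hq1' : y ^ q * z ^ q = 1 := by rw [← mul_pow, hyz, one_pow]
        refine ⟨z, ?_, ?_⟩
        · rw [hT, Set.mem_setOf_eq]
          linear_combination (z ^ q * z) * hyeq - (y * z + α * z) * hq1' -
            (1 + β * z ^ q) * hyz - htwo
        · show x0 + z⁻¹ = x
          rw [hz, inv_inv, hy]
          linear_combination x0 * htwo
    · intro hx
      rcases hx with hx | ⟨z, hzT, rfl⟩
      · exact hx ▸ hx0
      · have hz0 : z ≠ 0 := hTz z hzT
        set y : GaloisField 2 n := z⁻¹ with hy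
        have hy0 : y ≠ 0 := inv_ne_zero hz0
        have hyz : y * z = 1 := inv_mul_cancel₀ hz0
        have hq1' : y ^ q * z ^ q = 1 := by rw [← mul_pow, hyz, one_pow]
        have hzT' : β * z ^ q + α * z = 1 := hzT
        have hyeq : y ^ q * y + α * y ^ q + β * y = 0 := by
          linear_combination (y ^ q * y) * hzT' - (α * y ^ q) * hyz - (β * y) * hq1' +
            (y ^ q * y) * htwo
        rw [hS, Set.mem_setOf_eq, pow_succ, hadd]
        rw [hα, hβ] at hyeq
        linear_combination hx0' + hyeq
  have hx0nm : x0 ∉ (fun z : GaloisField 2 n => x0 + z⁻¹) '' T := by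
    rintro ⟨z, hzT, hzeq⟩
    have hz0 : z ≠ 0 := hTz z hzT
    have hzz : z⁻¹ = 0 := by simpa using hzeq
    exact inv_ne_zero hz0 hzz
  have hinj : Set.InjOn (fun z : GaloisField 2 n => x0 + z⁻¹) T := by
    intro z1 h1 z2 h2 he
    have : z1⁻¹ = z2⁻¹ := by
      have := he
      simpa using this
    exact inv_injective this
  have hcardS : S.ncard = T.ncard + 1 := by
    rw [hST, Set.ncard_insert_of_notMem hx0nm, Set.ncard_image_of_injOn hinj]
  -- Now compute T.ncard
  have hTcard : T.ncard ∈ ({0, 1, 2 ^ Nat.gcd r n} : Set ℕ) := by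
    simp only [Set.mem_insert_iff, Set.mem_singleton_iff]
    rcases Set.eq_empty_or_nonempty T with hTe | ⟨z0, hz0T⟩
    · left; rw [hTe, Set.ncard_empty]
    have hz0' : β * z0 ^ q + α * z0 = 1 := hz0T
    set K : Set (GaloisField 2 n) := {w : GaloisField 2 n | β * w ^ q + α * w = 0} with hK
    have hTK : T = (fun w : GaloisField 2 n => z0 + w) '' K := by
      ext z
      constructor
      · intro hz
        have hz' : β * z ^ q + α * z = 1 := hz
        refine ⟨z0 + z, ?_, ?_⟩
        · rw [hK, Set.mem_setOf_eq, hadd]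
          linear_combination hz0' + hz' + htwo
        · show z0 + (z0 + z) = z
          linear_combination z0 * htwo
      · rintro ⟨w, hw, rfl⟩
        have hw' : β * w ^ q + α * w = 0 := hw
        rw [hT, Set.mem_setOf_eq, hadd]
        linear_combination hz0' + hw'
    have hinj2 : Set.InjOn (fun w : GaloisField 2 n => z0 + w) K := fun w1 _ w2 _ he => by simpa using he
    have hTKcard : T.ncard = K.ncard := by rw [hTK, Set.ncard_image_of_injOn hinj2]
    by_cases hβ0 : β = 0
    · by_cases hα0 : α = 0
      · exfalso
        rw [hβ0, hα0, zero_mul, zero_mul, add_zero] at hz0'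
        exact zero_ne_one hz0'
      · -- K = {0}
        have : K = {0} := by
          ext w
          simp only [hK, Set.mem_setOf_eq, hβ0, zero_mul, zero_add, Set.mem_singleton_iff]
          constructor
          · intro h
            exact (mul_eq_zero.mp h).resolve_left hα0
          · rintro rfl; rw [mul_zero]
        right; left
        rw [hTKcard, this, Set.ncard_singleton]
    · by_cases hα0 : α = 0
      · have : K = {0} := by
          ext w
          simp only [hK, Set.mem_setOf_eq, hα0, zero_mul, add_zero, Set.mem_singleton_iff]
          constructor
          · intro h
            rcases mul_eq_zero.mp h with h | h
            · exact absurd h hβ0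
            · exact pow_eq_zero_iff hq0 |>.mp h
          · rintro rfl; rw [zero_pow hq0, mul_zero]
        right; left
        rw [hTKcard, this, Set.ncard_singleton]
      · -- both nonzero
        set D : Set (GaloisField 2 n) := {w : GaloisField 2 n | w ^ (q - 1) = α * β⁻¹} with hD
        have hαβ : α * β⁻¹ ≠ 0 := mul_ne_zero hα0 (inv_ne_zero hβ0)
        have hq1e : q - 1 + 1 = q := by omega
        have hzD : (0 : GaloisField 2 n) ∉ D := by
          rw [hD, Set.mem_setOf_eq, zero_pow (by omega : q - 1 ≠ 0)]
          exact fun h => hαβ h.symm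
        have hββ : β * β⁻¹ = 1 := mul_inv_cancel₀ hβ0
        have hKD : K = insert 0 D := by
          ext w
          simp only [hK, hD, Set.mem_setOf_eq, Set.mem_insert_iff]
          constructor
          · intro hw
            by_cases hw0 : w = 0
            · exact Or.inl hw0
            right
            have h1 : β * w ^ q = α * w := by linear_combination hw - (α * w) * htwo
            have h2 : w ^ q = w ^ (q - 1) * w := by rw [← pow_succ, hq1e]
            have h3 : (β * w ^ (q - 1)) * w = α * w := by rw [mul_assoc, ← h2]; exact h1
            have h4 : β * w ^ (q - 1) = α := mul_right_cancel₀ hw0 h3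
            rw [← h4]
            field_simp
          · rintro (rfl | hw)
            · rw [zero_pow hq0, mul_zero, mul_zero, add_zero]
            · have hw0 : w ≠ 0 := by
                rintro rfl
                rw [zero_pow (by omega : q - 1 ≠ 0)] at hw
                exact hαβ hw.symm
              have h2 : w ^ q = w ^ (q - 1) * w := by rw [← pow_succ, hq1e]
              rw [h2]
              linear_combination (β * w) * hw + (α * w) * hββ + (α * w) * htwo
        have hKcard : K.ncard = D.ncard + 1 := by
          rw [hKD, Set.ncard_insert_of_notMem hzD]
        rcases Set.eq_empty_or_nonempty D with hDe | ⟨w0, hw0D⟩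
        · right; left
          rw [hTKcard, hKcard, hDe, Set.ncard_empty]
        · -- D nonempty : count is 2^gcd
          right; right
          have hw0' : w0 ^ (q - 1) = α * β⁻¹ := hw0D
          have hw00 : w0 ≠ 0 := by
            rintro rfl
            rw [zero_pow (by omega : q - 1 ≠ 0)] at hw0'
            exact hαβ hw0'.symm
          set U : Set (GaloisField 2 n) := {u : GaloisField 2 n | u ^ (q - 1) = 1} with hU
          have hDU : D = (fun u : GaloisField 2 n => w0 * u) '' U := by
            ext z
            constructor
            · intro hz
              have hz' : z ^ (q - 1) = α * β⁻¹ := hz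
              have hzne : z ≠ 0 := by
                rintro rfl
                rw [zero_pow (by omega : q - 1 ≠ 0)] at hz'
                exact hαβ hz'.symm
              refine ⟨w0⁻¹ * z, ?_, by field_simp⟩
              rw [hU, Set.mem_setOf_eq, mul_pow, inv_pow, hw0', hz']
              exact inv_mul_cancel₀ hαβ
            · rintro ⟨u, hu, rfl⟩
              have hu' : u ^ (q - 1) = 1 := hu
              rw [hD, Set.mem_setOf_eq, mul_pow, hw0', hu', mul_one]
          have hinj3 : Set.InjOn (fun u : GaloisField 2 n => w0 * u) U := fun u1 _ u2 _ he =>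
            mul_left_cancel₀ hw00 he
          have hDUcard : D.ncard = U.ncard := by rw [hDU, Set.ncard_image_of_injOn hinj3]
          -- U = fixed points of Frobenius^gcd minus 0
          set V : Set (GaloisField 2 n) := {u : GaloisField 2 n | u ^ 2 ^ Nat.gcd r n = u} with hV
          have hUV : U = V \ {0} := by
            ext u
            simp only [hU, hV, Set.mem_setOf_eq, Set.mem_diff, Set.mem_singleton_iff]
            constructor
            · intro hu
              have hune : u ≠ 0 := by
                rintro rfl
                rw [zero_pow (by omega : q - 1 ≠ 0)] at hu
                exact zero_ne_one hu
              refine ⟨?_, hune⟩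
              have huq : u ^ q = u := by
                calc u ^ q = u ^ (q - 1) * u := by rw [← pow_succ, hq1e]
                  _ = u := by rw [hu, one_mul]
              exact aux_pow_gcd u r n (hq ▸ huq) (hucard u)
            · rintro ⟨hu, hune⟩
              obtain ⟨t, ht⟩ : Nat.gcd r n ∣ r := Nat.gcd_dvd_left r n
              have huq : u ^ q = u := by
                rw [hq, ht]
                exact aux_pow_mul u (Nat.gcd r n) t hu
              have : u ^ (q - 1) * u = 1 * u := by
                rw [← pow_succ, hq1e, huq, one_mul]
              exact mul_right_cancel₀ hune this
          have hgcdpos : 0 < Nat.gcd r n := Nat.gcd_pos_of_pos_left n hr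
          have hVcard : V.ncard = 2 ^ Nat.gcd r n :=
            aux_ncard_fixed (GaloisField 2 n) (Nat.gcd r n) n hgcdpos hn (Nat.gcd_dvd_right r n) hcard
          have h0V : (0 : GaloisField 2 n) ∈ V := by
            rw [hV, Set.mem_setOf_eq, zero_pow (by positivity)]
          have hUcard : U.ncard = 2 ^ Nat.gcd r n - 1 := by
            rw [hUV, Set.ncard_diff_singleton_of_mem h0V, hVcard]
          have h2pos : 1 ≤ 2 ^ Nat.gcd r n := Nat.one_le_two_pow
          rw [hTKcard, hKcard, hDUcard, hUcard]
          omega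
  -- conclude
  rw [hcardS]
  simp only [Set.mem_insert_iff, Set.mem_singleton_iff] at hTcard
  rcases hTcard with h | h | h <;> omega
end

section
/- Let m be a positive integer with m ≡ -1 (mod k) for a positive integer k. Then gcd(2^k - 1, 2^m + 1) = 1 if k is odd, and gcd(2^k - 1, 2^m + 1) = 3 if k is even. -/
/-- if `k ∣ m + 1` (i.e. `m ≡ -1 (mod k)`), then
`gcd(2^k - 1, 2^m + 1) = 1` when `k` is odd and `= 3` when `k` is even. -/
theorem stmt_12 (m k : ℕ) (hm : 0 < m) (hk : 0 < k) (h : k ∣ m + 1) :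
    (Odd k → Nat.gcd (2 ^ k - 1) (2 ^ m + 1) = 1) ∧
    (Even k → Nat.gcd (2 ^ k - 1) (2 ^ m + 1) = 3) := by
  set d := Nat.gcd (2 ^ k - 1) (2 ^ m + 1) with hd
  obtain ⟨t, ht⟩ := h
  have h1 : (2 ^ k - 1) ∣ (2 ^ (m + 1) - 1) := by
    rw [ht, pow_mul]
    simpa using Nat.sub_dvd_pow_sub_pow (2 ^ k) 1 t
  have hdl : d ∣ 2 ^ k - 1 := Nat.gcd_dvd_left _ _
  have hdr : d ∣ 2 ^ m + 1 := Nat.gcd_dvd_right _ _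
  have h2 : d ∣ 2 ^ (m + 1) - 1 := hdl.trans h1
  have h3 : d ∣ 2 ^ (m + 1) + 2 := by
    have : 2 ^ (m + 1) + 2 = 2 * (2 ^ m + 1) := by ring
    rw [this]; exact hdr.mul_left 2
  have hpow : 1 ≤ 2 ^ (m + 1) := Nat.one_le_two_pow
  have hd3 : d ∣ 3 := by
    have := Nat.dvd_sub h3 h2
    have heq : 2 ^ (m + 1) + 2 - (2 ^ (m + 1) - 1) = 3 := by omega
    rwa [heq] at this
  constructor
  · intro ⟨s, hs⟩
    -- k odd: 3 ∤ 2^k - 1, so d = 1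
    have hne : ¬ (3 ∣ 2 ^ k - 1) := by
      intro h3k
      have h4 : (3 : ℕ) ∣ 4 ^ s - 1 := by
        simpa using Nat.sub_dvd_pow_sub_pow 4 1 s
      have hk2 : 2 ^ k = 2 * 4 ^ s := by
        rw [hs, pow_succ, pow_mul]; ring
      have h4p : 1 ≤ 4 ^ s := Nat.one_le_pow _ _ (by norm_num)
      have : (3 : ℕ) ∣ (2 ^ k - 1) - 2 * (4 ^ s - 1) := Nat.dvd_sub h3k (h4.mul_left 2)
      have heq : (2 ^ k - 1) - 2 * (4 ^ s - 1) = 1 := by omega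
      rw [heq] at this; omega
    rcases (Nat.dvd_prime Nat.prime_three).mp hd3 with h | h
    · exact h
    · exact absurd (h ▸ hdl) hne
  · intro hke
    -- k even: 3 ∣ 2^k - 1 and 3 ∣ 2^m + 1
    obtain ⟨s, hs⟩ := hke
    have h3k : (3 : ℕ) ∣ 2 ^ k - 1 := by
      have : 2 ^ k = 4 ^ s := by rw [hs, ← two_mul, pow_mul]; norm_num
      rw [this]
      simpa using Nat.sub_dvd_pow_sub_pow 4 1 s
    have hmodd : Odd m := by
      have : Even (m + 1) := ⟨s * t, by rw [ht, hs]; ring⟩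
      simpa [Nat.even_add_one] using this
    obtain ⟨r, hr⟩ := hmodd
    have h3m : (3 : ℕ) ∣ 2 ^ m + 1 := by
      have h4 : (3 : ℕ) ∣ 4 ^ r - 1 := by
        simpa using Nat.sub_dvd_pow_sub_pow 4 1 r
      have hm2 : 2 ^ m = 2 * 4 ^ r := by
        rw [hr, pow_succ, pow_mul]; ring
      have h4p : 1 ≤ 4 ^ r := Nat.one_le_pow _ _ (by norm_num)
      obtain ⟨q, hq⟩ := h4
      have : 2 ^ m + 1 = 3 * (2 * q + 1) := by omega
      rw [this]; exact Dvd.intro _ rfl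
    exact Nat.dvd_antisymm hd3 (Nat.dvd_gcd h3k h3m)
end

section
/- Let p be an odd prime, m positive, n = 2m, q = p^n. Let t ≡ 2 (mod 4) with t not ≡ 0 (mod p^m+1), s_1 = (t+2)/4, s_2 = (3t+2)/4, d_1 = s_1(p^m-1)+1, d_2 = s_2(p^m-1)+1, and l = gcd(t, p^m+1). Then the number of pairs (x,y) in F_q^2 with x^{d_1} + y^{d_1} = 0 and x^{d_2} + y^{d_2} = 0 equals ((p^n - 1)/2) * l + 1. -/
private lemma aux_sq_sub_one (P : ℕ) (h : 1 ≤ P) : (P - 1) * (P + 1) = P ^ 2 - 1 := by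
  obtain ⟨Q, rfl⟩ := Nat.exists_eq_add_of_le h
  have h1 : 1 + Q - 1 = Q := by omega
  have h2 : (1 + Q) ^ 2 = Q * (1 + Q + 1) + 1 := by ring
  rw [h1, h2, Nat.add_sub_cancel]

private lemma aux_card_torsion {G : Type*} [Group G] [Finite G] [IsCyclic G]
    {a : ℕ} (ha : a ∣ Nat.card G) (ha0 : a ≠ 0) :
    Nat.card {x : G // x ^ a = 1} = a := by
  obtain ⟨ζ, hζ⟩ := IsCyclic.exists_generator (α := G)
  have hord : orderOf ζ = Nat.card G := orderOf_eq_card_of_forall_mem_zpowers hζ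
  have hn0 : 0 < Nat.card G := Nat.card_pos
  obtain ⟨b, hb⟩ := ha
  have hb0 : 0 < b := by
    rcases Nat.eq_zero_or_pos b with h | h
    · subst h; simp at hb; omega
    · exact h
  have ha0' : 0 < a := Nat.pos_of_ne_zero ha0
  have hbdvd : b ∣ Nat.card G := ⟨a, by rw [hb]; ring⟩
  have hηord : orderOf (ζ ^ b) = a := by
    rw [orderOf_pow, hord, Nat.gcd_eq_right hbdvd, hb, Nat.mul_div_cancel _ hb0]
  have key : ∀ x : G, x ^ a = 1 ↔ x ∈ Subgroup.zpowers (ζ ^ b) := by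
    intro x
    constructor
    · intro hx
      obtain ⟨k, hk⟩ := (Submonoid.mem_powers_iff _ _).mp (mem_powers_iff_mem_zpowers.mpr (hζ x))
      have hdvd : Nat.card G ∣ k * a := by
        rw [← hord, orderOf_dvd_iff_pow_eq_one, pow_mul, hk, hx]
      obtain ⟨w, hw⟩ : b ∣ k := by
        have h1 : a * b ∣ a * k := by rw [← hb, Nat.mul_comm a k]; exact hdvd
        exact (Nat.mul_dvd_mul_iff_left ha0').mp h1
      exact Subgroup.mem_zpowers_iff.mpr ⟨(w : ℤ), by
        rw [zpow_natCast, ← pow_mul, ← hw, hk]⟩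
    · intro hx
      have h1 := orderOf_dvd_of_mem_zpowers hx
      rw [hηord] at h1
      exact orderOf_dvd_iff_pow_eq_one.mp h1
  calc Nat.card {x : G // x ^ a = 1}
      = Nat.card {x : G // x ∈ Subgroup.zpowers (ζ ^ b)} :=
        Nat.card_congr (Equiv.subtypeEquivRight key)
    _ = Nat.card (Subgroup.zpowers (ζ ^ b)) := rfl
    _ = a := by rw [Nat.card_zpowers, hηord]

/-- `p` odd prime, `q = p^{2m}`, `t ≡ 2 (mod 4)`, `t ≢ 0 (mod p^m+1)`,
`s₁ = (t+2)/4`, `s₂ = (3t+2)/4`, `dᵢ = sᵢ(p^m-1)+1`, `l = gcd(t, p^m+1)`.  The number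
of pairs `(x,y) ∈ F_q²` with `x^{d₁}+y^{d₁} = 0` and `x^{d₂}+y^{d₂} = 0` equals
`((p^{2m}-1)/2)·l + 1`. -/
theorem stmt_13 (p m t : ℕ) [Fact p.Prime] (hp : Odd p) (hm : 0 < m)
    (ht : t % 4 = 2) (ht' : ¬ (p ^ m + 1) ∣ t) :
    Nat.card {xy : GaloisField p (2 * m) × GaloisField p (2 * m) //
      xy.1 ^ ((t + 2) / 4 * (p ^ m - 1) + 1) +
        xy.2 ^ ((t + 2) / 4 * (p ^ m - 1) + 1) = 0 ∧
      xy.1 ^ ((3 * t + 2) / 4 * (p ^ m - 1) + 1) +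
        xy.2 ^ ((3 * t + 2) / 4 * (p ^ m - 1) + 1) = 0} =
    (p ^ (2 * m) - 1) / 2 * Nat.gcd t (p ^ m + 1) + 1 := by
  clear ht'
  have pp : p.Prime := Fact.out
  have hpodd : p % 2 = 1 := Nat.odd_iff.mp hp
  have hp3 : 3 ≤ p := by have := pp.two_le; omega
  set F := GaloisField p (2 * m) with hF
  letI : Fintype F := Fintype.ofFinite F
  letI : DecidableEq F := Classical.decEq F
  have hP3 : 3 ≤ p ^ m := le_trans hp3 (Nat.le_self_pow hm.ne' p)
  have hPodd : (p ^ m) % 2 = 1 := Nat.odd_iff.mp (hp.pow)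
  set P := p ^ m with hPdef
  obtain ⟨c, rfl⟩ : ∃ c, t = 4 * c + 2 := ⟨t / 4, by omega⟩
  have hs1 : (4 * c + 2 + 2) / 4 = c + 1 := by omega
  have hs2 : (3 * (4 * c + 2) + 2) / 4 = 3 * c + 2 := by omega
  rw [hs1, hs2]
  set d₁ := (c + 1) * (P - 1) + 1 with hd₁
  set d₂ := (3 * c + 2) * (P - 1) + 1 with hd₂
  set u := 2 * c + 1 with hu
  set g := Nat.gcd u (P + 1) with hg
  have hgu : g ∣ u := Nat.gcd_dvd_left _ _
  have hgP : g ∣ P + 1 := Nat.gcd_dvd_right _ _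
  have hg0 : 0 < g := Nat.gcd_pos_of_pos_left _ (by omega)
  have huodd : ¬ (2 ∣ u) := by omega
  have hgodd : ¬ (2 ∣ g) := fun h => huodd (h.trans hgu)
  have hg2 : Nat.Coprime g 2 := Nat.coprime_two_right.mpr (Nat.odd_iff.mpr (by omega))
  have h2d1 : 2 * d₁ = u * (P - 1) + (P + 1) := by
    have hPP : P + 1 = (P - 1) + 2 := by omega
    rw [hd₁, hu, hPP]; ring
  have hgd1 : g ∣ d₁ := by
    refine hg2.dvd_of_dvd_mul_left ?_
    rw [h2d1]
    exact Nat.dvd_add (hgu.mul_right _) hgP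
  have hcop : Nat.Coprime d₁ (P - 1) := by
    have h1 : d₁ % (P - 1) = 1 % (P - 1) := by
      rw [hd₁, Nat.add_comm]
      exact Nat.add_mul_mod_self_right 1 (c + 1) (P - 1)
    have h2 : Nat.gcd (P - 1) d₁ = 1 := by
      rw [Nat.gcd_rec, h1, Nat.mod_eq_of_lt (by omega), Nat.gcd_one_left]
    exact Nat.coprime_comm.mp h2
  set N := Nat.card Fˣ with hNdef
  have hcardF : Nat.card F = P ^ 2 := by
    have h1 := GaloisField.card p (2 * m) (by omega)
    exact h1.trans (by rw [hPdef, Nat.mul_comm 2 m, pow_mul])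
  have hN : N = (P - 1) * (P + 1) := by
    rw [hNdef, Nat.card_eq_fintype_card, Fintype.card_units, ← Nat.card_eq_fintype_card,
      hcardF, aux_sq_sub_one P (by omega)]
  set M := (P - 1) * g with hM
  have hMdvdN : M ∣ N := by rw [hM, hN]; exact Nat.mul_dvd_mul_left _ hgP
  have hgdvdN : g ∣ N := by rw [hN]; exact Dvd.dvd.mul_left hgP (P - 1)
  have hgcdM : Nat.gcd d₁ M = g := by
    rw [hM, hcop.symm.gcd_mul_left_cancel_right g]
    exact Nat.gcd_eq_right hgd1
  have hd21 : d₂ = d₁ + u * (P - 1) := by rw [hd₂, hd₁, hu]; ring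
  have hMdvd_e : M ∣ u * (P - 1) := by
    obtain ⟨u', hu'⟩ := hgu
    exact ⟨u', by rw [hM, hu']; ring⟩
  have hiff1 : ∀ z : Fˣ, (z ^ d₁ = -1 ∧ z ^ d₂ = -1) ↔ (z ^ d₁ = -1 ∧ z ^ M = 1) := by
    intro z
    have hzN : z ^ N = 1 := by rw [hNdef]; exact pow_card_eq_one'
    constructor
    · rintro ⟨h1, h2⟩
      refine ⟨h1, ?_⟩
      have he : z ^ (u * (P - 1)) = 1 := by
        have h3 : z ^ d₁ * z ^ (u * (P - 1)) = z ^ d₂ := by rw [← pow_add, ← hd21]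
        have h4 : z ^ d₁ * z ^ (u * (P - 1)) = z ^ d₁ * 1 := by
          rw [h3, h2, mul_one, h1]
        exact mul_left_cancel h4
      have hgcd : Nat.gcd ((P - 1) * u) ((P - 1) * (P + 1)) = M := by
        rw [Nat.gcd_mul_left, hM, hg]
      have hdvd : orderOf z ∣ M := by
        rw [← hgcd]
        refine Nat.dvd_gcd ?_ ?_
        · exact orderOf_dvd_iff_pow_eq_one.mpr (by rw [Nat.mul_comm (P - 1) u]; exact he)
        · rw [← hN]; exact orderOf_dvd_iff_pow_eq_one.mpr hzN
      exact orderOf_dvd_iff_pow_eq_one.mp hdvd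
    · rintro ⟨h1, hM1⟩
      refine ⟨h1, ?_⟩
      have he : z ^ (u * (P - 1)) = 1 := by
        obtain ⟨w, hw⟩ := hMdvd_e
        rw [hw, pow_mul, hM1, one_pow]
      rw [hd21, pow_add, h1, he, mul_one]
  -- existence of z₀
  obtain ⟨ζ, hζ⟩ := IsCyclic.exists_generator (α := Fˣ)
  have hord : orderOf ζ = N := orderOf_eq_card_of_forall_mem_zpowers hζ
  obtain ⟨h2, hh2⟩ : ∃ h2, P - 1 = 2 * h2 := ⟨(P - 1) / 2, by omega⟩
  have hh2pos : 0 < h2 := by omega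
  obtain ⟨v, hv⟩ := id hgP
  have hvpos : 0 < v := by
    rcases Nat.eq_zero_or_pos v with h | h
    · subst h; simp at hv
    · exact h
  obtain ⟨d', hd'⟩ := id hgd1
  have hcopd' : Nat.Coprime d' (P - 1) :=
    Nat.Coprime.coprime_dvd_left ⟨g, by rw [hd']; ring⟩ hcop
  obtain ⟨j, -, hj⟩ := Nat.exists_mul_mod_eq_one_of_coprime hcopd' (by omega)
  obtain ⟨w, hw⟩ : ∃ w, d' * j = (P - 1) * w + 1 :=
    ⟨d' * j / (P - 1), by
      have h := Nat.div_add_mod (d' * j) (P - 1)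
      rw [hj] at h
      exact h.symm⟩
  set A := h2 * (P + 1) with hA
  have hApos : 0 < A := Nat.mul_pos hh2pos (by omega)
  have hNeq : N = 2 * A := by rw [hN, hh2, hA]; ring
  have hne1 : ζ ^ A ≠ 1 := by
    intro h
    have hdvd : N ∣ A := hord ▸ orderOf_dvd_iff_pow_eq_one.mpr h
    have hle := Nat.le_of_dvd hApos hdvd
    omega
  have hsq : (ζ ^ A) ^ 2 = 1 := by
    rw [← pow_mul, (by rw [hNeq]; try ring : A * 2 = N), ← hord, pow_orderOf_eq_one]
  have hneg : ζ ^ A = -1 := by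
    have hval : ((ζ ^ A : Fˣ) : F) ^ 2 = 1 := by
      rw [← Units.val_pow_eq_pow_val, hsq, Units.val_one]
    have hfac : (((ζ ^ A : Fˣ) : F) - 1) * (((ζ ^ A : Fˣ) : F) + 1) = 0 := by
      linear_combination hval
    rcases mul_eq_zero.mp hfac with h | h
    · exfalso
      exact hne1 (Units.val_eq_one.mp (eq_of_sub_eq_zero h))
    · have hv1 : ((ζ ^ A : Fˣ) : F) = -1 := eq_neg_of_add_eq_zero_left h
      exact Units.ext (by rw [hv1, Units.val_neg, Units.val_one])
  set k := v * j * h2 with hk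
  set z₀ := ζ ^ k with hz₀
  have hz₀M : z₀ ^ M = 1 := by
    rw [hz₀, ← pow_mul]
    have hkM : k * M = N * (j * h2) := by rw [hk, hM, hN, hv]; ring
    rw [hkM, pow_mul, ← hord, pow_orderOf_eq_one, one_pow]
  have hz₀d₁ : z₀ ^ d₁ = -1 := by
    rw [hz₀, ← pow_mul]
    have hkd : k * d₁ = A + N * (h2 * w) := by
      have e1 : k * d₁ = (g * v) * h2 * (d' * j) := by rw [hk, hd']; ring
      rw [e1, hw, ← hv, hN, hA]; ring
    rw [hkd, pow_add]
    have h5 : ζ ^ (N * (h2 * w)) = 1 := by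
      rw [pow_mul, ← hord, pow_orderOf_eq_one, one_pow]
    rw [h5, mul_one, hneg]
  -- card of S
  set S := {z : Fˣ // z ^ d₁ = -1 ∧ z ^ d₂ = -1} with hS
  have cardS : Nat.card S = g := by
    have e1 : S ≃ {z : Fˣ // z ^ d₁ = -1 ∧ z ^ M = 1} := Equiv.subtypeEquivRight hiff1
    have e2 : {z : Fˣ // z ^ d₁ = -1 ∧ z ^ M = 1} ≃ {z : Fˣ // z ^ d₁ = 1 ∧ z ^ M = 1} := by
      refine Equiv.subtypeEquiv (Equiv.mulLeft z₀⁻¹) (fun z => ?_)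
      simp only [Equiv.coe_mulLeft]
      constructor
      · rintro ⟨h1, h2⟩
        constructor
        · rw [mul_pow, inv_pow, h1, hz₀d₁]
          exact inv_mul_cancel _
        · rw [mul_pow, inv_pow, h2, hz₀M]
          exact inv_mul_cancel _
      · rintro ⟨h1, h2⟩
        rw [mul_pow, inv_pow, inv_mul_eq_one] at h1 h2
        exact ⟨by rw [← h1, hz₀d₁], by rw [← h2, hz₀M]⟩
    have e3 : {z : Fˣ // z ^ d₁ = 1 ∧ z ^ M = 1} ≃ {z : Fˣ // z ^ g = 1} := by
      refine Equiv.subtypeEquivRight (fun z => ?_)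
      constructor
      · rintro ⟨h1, h2⟩
        have hdvd : orderOf z ∣ g := by
          rw [← hgcdM]
          exact Nat.dvd_gcd (orderOf_dvd_iff_pow_eq_one.mpr h1)
            (orderOf_dvd_iff_pow_eq_one.mpr h2)
        exact orderOf_dvd_iff_pow_eq_one.mp hdvd
      · intro h1
        have hz : orderOf z ∣ g := orderOf_dvd_iff_pow_eq_one.mpr h1
        exact ⟨orderOf_dvd_iff_pow_eq_one.mp (hz.trans hgd1),
          orderOf_dvd_iff_pow_eq_one.mp (hz.trans ⟨P - 1, by rw [hM]; ring⟩)⟩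
    rw [Nat.card_congr (e1.trans (e2.trans e3))]
    exact aux_card_torsion (by rw [← hNdef]; exact hgdvdN) (by omega)
  -- pairs
  have hd₁0 : d₁ ≠ 0 := by rw [hd₁]; exact Nat.succ_ne_zero _
  have hd₂0 : d₂ ≠ 0 := by rw [hd₂]; exact Nat.succ_ne_zero _
  let f : Option (Fˣ × S) → {xy : F × F //
      xy.1 ^ d₁ + xy.2 ^ d₁ = 0 ∧ xy.1 ^ d₂ + xy.2 ^ d₂ = 0} :=
    fun o => match o with
      | none => ⟨(0, 0), by
          refine ⟨?_, ?_⟩ <;> simp [zero_pow hd₁0, zero_pow hd₂0]⟩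
      | some (x, z) => ⟨((x : F), (z.1 : F) * (x : F)), by
          dsimp only
          obtain ⟨hz1, hz2⟩ := z.2
          have hv1 : ((z.1 : Fˣ) : F) ^ d₁ = -1 := by
            rw [← Units.val_pow_eq_pow_val, hz1, Units.val_neg, Units.val_one]
          have hv2 : ((z.1 : Fˣ) : F) ^ d₂ = -1 := by
            rw [← Units.val_pow_eq_pow_val, hz2, Units.val_neg, Units.val_one]
          constructor
          · rw [mul_pow, hv1]; ring
          · rw [mul_pow, hv2]; ring⟩
  have hfinj : Function.Injective f := by
    rintro (_ | ⟨x, z⟩) (_ | ⟨x', z'⟩) hyp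
    · rfl
    · exfalso
      have h1 : (0 : F) = (x' : F) := congrArg (fun s => s.1.1) hyp
      exact (Units.ne_zero x') h1.symm
    · exfalso
      have h1 : (x : F) = (0 : F) := congrArg (fun s => s.1.1) hyp
      exact (Units.ne_zero x) h1
    · have h1 : (x : F) = (x' : F) := congrArg (fun s => s.1.1) hyp
      have h2 : (z.1 : F) * (x : F) = (z'.1 : F) * (x' : F) := congrArg (fun s => s.1.2) hyp
      have hx : x = x' := Units.ext h1
      rw [← h1] at h2
      have hz : z.1 = z'.1 := Units.ext (mul_right_cancel₀ (Units.ne_zero x) h2)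
      subst hx
      exact congrArg some (Prod.ext rfl (Subtype.ext hz))
  have hfsurj : Function.Surjective f := by
    rintro ⟨⟨a, b⟩, hab1, hab2⟩
    by_cases ha : a = 0
    · refine ⟨none, ?_⟩
      have hb : b = 0 := by
        subst ha
        rw [zero_pow hd₁0, zero_add] at hab1
        exact (pow_eq_zero_iff hd₁0).mp hab1
      subst ha; subst hb; rfl
    · have hpa : a ^ d₁ ≠ 0 := fun h => ha ((pow_eq_zero_iff hd₁0).mp h)
      have hb : b ≠ 0 := by
        rintro rfl
        rw [zero_pow hd₁0, add_zero] at hab1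
        exact hpa hab1
      have hb1 : b ^ d₁ = -(a ^ d₁) := eq_neg_of_add_eq_zero_right hab1
      have hb2 : b ^ d₂ = -(a ^ d₂) := eq_neg_of_add_eq_zero_right hab2
      have hpa2 : a ^ d₂ ≠ 0 := fun h => ha ((pow_eq_zero_iff hd₂0).mp h)
      refine ⟨some (Units.mk0 a ha, ⟨Units.mk0 b hb * (Units.mk0 a ha)⁻¹, ?_, ?_⟩), ?_⟩
      · apply Units.ext
        rw [Units.val_pow_eq_pow_val, Units.val_mul, Units.val_inv_eq_inv_val,
          Units.val_mk0, Units.val_mk0, Units.val_neg, Units.val_one,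
          mul_pow, inv_pow, hb1, neg_mul, mul_inv_cancel₀ hpa]
      · apply Units.ext
        rw [Units.val_pow_eq_pow_val, Units.val_mul, Units.val_inv_eq_inv_val,
          Units.val_mk0, Units.val_mk0, Units.val_neg, Units.val_one,
          mul_pow, inv_pow, hb2, neg_mul, mul_inv_cancel₀ hpa2]
      · apply Subtype.ext
        show ((Units.mk0 a ha : F), ((Units.mk0 b hb * (Units.mk0 a ha)⁻¹ : Fˣ) : F)
          * (Units.mk0 a ha : F)) = (a, b)
        rw [Units.val_mul, Units.val_inv_eq_inv_val, Units.val_mk0, Units.val_mk0]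
        exact Prod.ext rfl (inv_mul_cancel_right₀ ha b)
  have hcards : Nat.card {xy : F × F //
      xy.1 ^ d₁ + xy.2 ^ d₁ = 0 ∧ xy.1 ^ d₂ + xy.2 ^ d₂ = 0} = N * g + 1 := by
    rw [Nat.card_congr (Equiv.ofBijective f ⟨hfinj, hfsurj⟩).symm, Finite.card_option,
      Nat.card_prod, cardS, ← hNdef]
  rw [hcards]
  -- final arithmetic
  have hq : p ^ (2 * m) = P ^ 2 := by rw [Nat.mul_comm 2 m, pow_mul]
  have hq1 : p ^ (2 * m) - 1 = N := by
    rw [hq, hN, aux_sq_sub_one P (by omega)]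
  obtain ⟨v2, hv2⟩ : 2 ∣ P + 1 := by omega
  have hgcdt : Nat.gcd (4 * c + 2) (P + 1) = 2 * g := by
    have h4c : 4 * c + 2 = 2 * u := by rw [hu]; ring
    have hgv : g = Nat.gcd u v2 := by
      rw [hg, hv2, Nat.Coprime.gcd_mul_left_cancel_right v2
        (Nat.coprime_two_left.mpr (Nat.odd_iff.mpr (by omega)))]
    rw [h4c, hv2, Nat.gcd_mul_left, hgv]
  obtain ⟨N2, hN2⟩ : 2 ∣ N := by
    rw [hN, hv2]
    exact Dvd.dvd.mul_left ⟨v2, rfl⟩ (P - 1)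
  rw [hgcdt, hq1, hN2, Nat.mul_div_cancel_left _ (by norm_num : 0 < 2)]
  ring
end

section
/- Let p = 2, m ≥ 1, n = 2m, q = 2^n, and let d_1 = s_1(2^m-1)+1, d_2 = s_2(2^m-1)+1 be Niho exponents. For a, b in F_q, let T_1(a,b) = Σ_{x in F_q} (-1)^{Tr(a x^{d_1} + b x^{d_2})}, where Tr is the absolute trace from F_q to F_2. Then T_1(a,b) = (V(a,b) - 1) * 2^m, where V(a,b) is the number of z in S = {z : z * z^{2^m} = 1} satisfying b^{2^m} z^{2 s_2 - 1} + a^{2^m} z^{s_1 + s_2 - 1} + a z^{s_2 - s_1} + b = 0. -/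
noncomputable instance (p n : ℕ) [Fact p.Prime] : Fintype (GaloisField p n) :=
  Fintype.ofFinite _

namespace Stmt15Aux

open Finset Polynomial

variable (m : ℕ)

abbrev F := GaloisField 2 (2 * m)

lemma hcard (hm : 0 < m) : Fintype.card (F m) = 2 ^ (2 * m) := by
  rw [← Nat.card_eq_fintype_card]
  exact GaloisField.card 2 (2 * m) (by omega)

lemma pow_q (hm : 0 < m) (x : F m) : x ^ (2 ^ (2 * m)) = x := by
  rw [← hcard m hm]; exact FiniteField.pow_card x

lemma pow_QQ (hm : 0 < m) (x : F m) : (x ^ 2 ^ m) ^ 2 ^ m = x := by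
  rw [← pow_mul, ← pow_add, ← two_mul]; exact pow_q m hm x

lemma fact_eq : 2 ^ (2 * m) - 1 = (2 ^ m - 1) * (2 ^ m + 1) := by
  have hQ1 : (1:ℕ) ≤ 2 ^ m := Nat.one_le_two_pow
  have e0 : 2 ^ (2 * m) = 2 ^ m * 2 ^ m := by rw [two_mul, pow_add]
  have e1 : (2 ^ m - 1) * (2 ^ m + 1) = 2 ^ m * (2 ^ m + 1) - (2 ^ m + 1) := by
    rw [Nat.sub_mul, one_mul]
  have e2 : 2 ^ m * (2 ^ m + 1) = 2 ^ m * 2 ^ m + 2 ^ m := by ring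
  omega

/-- iterated Frobenius as an algebra equiv over `ZMod 2`. -/
noncomputable def frobE (i : ℕ) : F m ≃ₐ[ZMod 2] F m :=
  AlgEquiv.ofBijective
    { toRingHom := iterateFrobenius (F m) 2 i,
      commutes' := fun r =>
        RingHom.congr_fun
          (RingHom.ext_zmod ((iterateFrobenius (F m) 2 i).comp (algebraMap (ZMod 2) (F m)))
            (algebraMap (ZMod 2) (F m))) r }
    ((Finite.injective_iff_bijective).mp (iterateFrobenius (F m) 2 i).injective)

lemma frobE_apply (i : ℕ) (x : F m) : frobE m i x = x ^ 2 ^ i := by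
  simp [frobE, AlgEquiv.ofBijective, iterateFrobenius_def]

lemma gen_order (hm : 0 < m) {g : (F m)ˣ} (hg : ∀ x : (F m)ˣ, x ∈ Subgroup.zpowers g) :
    orderOf g = 2 ^ (2 * m) - 1 := by
  classical
  rw [orderOf_eq_card_of_forall_mem_zpowers hg, Nat.card_eq_fintype_card, Fintype.card_units,
    hcard m hm]

lemma frobE_ne (hm : 0 < m) {i j : ℕ} (hij : i < j) (hj : j < 2 * m) :
    frobE m i ≠ frobE m j := by
  classical
  obtain ⟨g, hg⟩ := IsCyclic.exists_generator (α := (F m)ˣ)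
  have horder := gen_order m hm hg
  intro h
  have h1 : (g : F m) ^ 2 ^ i = (g : F m) ^ 2 ^ j := by
    have := congrArg (fun σ : F m ≃ₐ[ZMod 2] F m => σ (g : F m)) h
    simpa [frobE_apply] using this
  have h2 : g ^ 2 ^ i = g ^ 2 ^ j := Units.ext (by push_cast [h1]; rfl)
  have hle : 2 ^ i ≤ 2 ^ j := Nat.pow_le_pow_right (by norm_num) hij.le
  have h3 : g ^ (2 ^ i) * g ^ (2 ^ j - 2 ^ i) = g ^ (2 ^ i) * 1 := by
    rw [mul_one, ← pow_add, Nat.add_sub_cancel' hle, h2]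
  have h4 : g ^ (2 ^ j - 2 ^ i) = 1 := mul_left_cancel h3
  have h5 := Nat.le_of_dvd (by
      have : 2 ^ i < 2 ^ j := Nat.pow_lt_pow_right (by norm_num) hij
      omega) (orderOf_dvd_of_pow_eq_one h4)
  rw [horder] at h5
  have h6 : 2 ^ (j + 1) ≤ 2 ^ (2 * m) := Nat.pow_le_pow_right (by norm_num) (by omega)
  have h7 : 2 ^ j + 2 ^ j = 2 ^ (j + 1) := by ring
  have h8 : 0 < 2 ^ i := Nat.pow_pos (n := i) (by norm_num)
  omega

lemma trace_eq (hm : 0 < m) (x : F m) :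
    algebraMap (ZMod 2) (F m) (Algebra.trace (ZMod 2) (F m) x) =
      ∑ i ∈ range (2 * m), x ^ 2 ^ i := by
  rw [trace_eq_sum_automorphisms]
  have hinj : Set.InjOn (frobE m) (range (2 * m) : Finset ℕ) := by
    intro i hi j hj hij
    simp only [coe_range, Set.mem_Iio] at hi hj
    by_contra hne
    rcases Nat.lt_or_ge i j with h | h
    · exact frobE_ne m hm h hj hij
    · exact frobE_ne m hm (by omega) hi hij.symm
  classical
  have himg : (range (2 * m)).image (frobE m) = univ := by
    apply Finset.eq_univ_of_card
    rw [Finset.card_image_of_injOn hinj, Finset.card_range,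
      ← Nat.card_eq_fintype_card, IsGalois.card_aut_eq_finrank, GaloisField.finrank 2 (show 2 * m ≠ 0 by omega)]
  rw [← himg, Finset.sum_image hinj]
  exact Finset.sum_congr rfl fun i _ => frobE_apply m i x

lemma card_pow_eq_one (hm : 0 < m) {n : ℕ} (hn : 0 < n) (hdvd : n ∣ 2 ^ (2 * m) - 1) :
    Nat.card {x : F m // x ^ n = 1} = n := by
  classical
  obtain ⟨g, hg⟩ := IsCyclic.exists_generator (α := (F m)ˣ)
  have horder := gen_order m hm hg
  obtain ⟨t, ht⟩ := hdvd
  have hN : 0 < 2 ^ (2 * m) - 1 := by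
    have : 2 ^ 1 ≤ 2 ^ (2 * m) := Nat.pow_le_pow_right (by norm_num) (by omega)
    omega
  have htpos : 0 < t := by
    rcases Nat.eq_zero_or_pos t with h | h
    · rw [h, mul_zero] at ht; omega
    · exact h
  have hordh : orderOf (g ^ t) = n := by
    rw [orderOf_pow, horder, ht, Nat.gcd_eq_right ⟨n, by ring⟩, Nat.mul_div_cancel _ htpos]
  have hprim : IsPrimitiveRoot ((g ^ t : (F m)ˣ) : F m) n := by
    have := IsPrimitiveRoot.orderOf ((g ^ t : (F m)ˣ) : F m)
    rwa [orderOf_units, hordh] at this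
  have hset : (univ.filter fun x : F m => x ^ n = 1) = nthRootsFinset n (1 : F m) := by
    ext x
    simp [Polynomial.mem_nthRootsFinset hn (1 : F m)]
  rw [Nat.card_eq_fintype_card, Fintype.card_subtype, hset, hprim.card_nthRootsFinset]

lemma exists_root (hm : 0 < m) {z : F m} (hz : z ^ (2 ^ m + 1) = 1) :
    ∃ x : F m, x ≠ 0 ∧ x ^ (2 ^ m - 1) = z := by
  classical
  obtain ⟨g, hg⟩ := IsCyclic.exists_generator (α := (F m)ˣ)
  have horder := gen_order m hm hg
  have hzne : z ≠ 0 := by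
    intro h
    rw [h, zero_pow (Nat.succ_ne_zero (2 ^ m))] at hz
    exact zero_ne_one hz
  obtain ⟨k, hk0⟩ := (isOfFinOrder_of_finite g).mem_powers_iff_mem_zpowers.mpr
    (hg (Units.mk0 z hzne))
  have hk : g ^ k = Units.mk0 z hzne := hk0
  have hQ1 : 1 ≤ 2 ^ m := Nat.one_le_two_pow
  have h1 : g ^ (k * (2 ^ m + 1)) = 1 := by
    rw [pow_mul, hk]
    ext
    push_cast
    simpa using hz
  have h2 := orderOf_dvd_of_pow_eq_one h1
  rw [horder, fact_eq] at h2
  have h3 : (2 ^ m - 1) ∣ k :=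
    (Nat.mul_dvd_mul_iff_right (show 0 < 2 ^ m + 1 by omega)).mp h2
  obtain ⟨t, ht⟩ := h3
  refine ⟨(g : F m) ^ t, pow_ne_zero _ (Units.ne_zero g), ?_⟩
  have h4 : g ^ (t * (2 ^ m - 1)) = g ^ k := by rw [ht]; congr 1; exact Nat.mul_comm _ _
  calc ((g : F m) ^ t) ^ (2 ^ m - 1) = ((g ^ (t * (2 ^ m - 1)) : (F m)ˣ) : F m) := by
        rw [← pow_mul]; rfl
    _ = ((g ^ k : (F m)ˣ) : F m) := by rw [h4]
    _ = z := by rw [hk]; rfl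

/-! ### the half trace -/

noncomputable def sm (v : F m) : F m := ∑ i ∈ range m, v ^ 2 ^ i

lemma sm_add (v w : F m) : sm m (v + w) = sm m v + sm m w := by
  unfold sm
  rw [← Finset.sum_add_distrib]
  exact Finset.sum_congr rfl fun i _ => add_pow_char_pow ..

lemma sm_zero : sm m (0 : F m) = 0 := by
  unfold sm
  apply Finset.sum_eq_zero
  intro i _
  exact zero_pow (pow_ne_zero i (by norm_num))

lemma sm_sq (hm : 0 < m) {v : F m} (hv : v ^ 2 ^ m = v) : sm m v * sm m v = sm m v := by
  have h1 : sm m v * sm m v = ∑ i ∈ range m, v ^ 2 ^ (i + 1) := by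
    have hmap := map_sum (frobenius (F m) 2) (fun i => v ^ 2 ^ i) (range m)
    simp only [frobenius_def] at hmap
    unfold sm
    rw [← sq, hmap]
    exact Finset.sum_congr rfl fun i _ => by rw [← pow_mul, ← pow_succ]
  have A := Finset.sum_range_succ' (fun i => v ^ 2 ^ i) m
  have B := Finset.sum_range_succ (fun i => v ^ 2 ^ i) m
  have C : (∑ i ∈ range m, v ^ 2 ^ (i + 1)) + v ^ 2 ^ 0 =
      (∑ i ∈ range m, v ^ 2 ^ i) + v ^ 2 ^ m := by
    rw [← A, ← B]
  rw [hv] at C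
  simp only [pow_zero, pow_one] at C
  rw [h1]
  exact add_right_cancel C

lemma trace_s (hm : 0 < m) (x : F m) :
    algebraMap (ZMod 2) (F m) (Algebra.trace (ZMod 2) (F m) x) = sm m (x + x ^ 2 ^ m) := by
  rw [trace_eq m hm, sm_add]
  have hsplit : ∑ i ∈ range (2 * m), x ^ 2 ^ i
      = (∑ i ∈ range m, x ^ 2 ^ i) + ∑ i ∈ range m, x ^ 2 ^ (m + i) := by
    rw [← Finset.sum_range_add_sum_Ico _ (by omega : m ≤ 2 * m)]
    congr 1
    rw [Finset.sum_Ico_eq_sum_range, show 2 * m - m = m from by omega]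
  rw [hsplit]
  congr 1
  refine Finset.sum_congr rfl fun i _ => ?_
  rw [pow_add, pow_mul]

lemma trace_zero (hm : 0 < m) {v : F m} (hv : v ^ 2 ^ m = v) :
    Algebra.trace (ZMod 2) (F m) v = 0 := by
  have h := trace_s m hm v
  rw [hv, CharTwo.add_self_eq_zero, sm_zero] at h
  exact (algebraMap (ZMod 2) (F m)).injective (by rw [h, map_zero])

lemma zmod2_cases (c : ZMod 2) : c = 0 ∨ c = 1 := by revert c; decide

lemma eq_zero_or_one {x : F m} (h : x * x = x) : x = 0 ∨ x = 1 := by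
  rcases mul_eq_zero.mp (show x * (x - 1) = 0 by rw [mul_sub, h, mul_one, sub_self]) with h1 | h1
  · exact Or.inl h1
  · exact Or.inr (by rwa [sub_eq_zero] at h1)

lemma add_eq_zero_iff_char2 (p q : F m) : p + q = 0 ↔ p = q := by
  constructor
  · intro h
    have : p = p + (q + q) := by rw [CharTwo.add_self_eq_zero, add_zero]
    rw [this, ← add_assoc, h, zero_add]
  · intro h
    rw [h, CharTwo.add_self_eq_zero]

lemma card_K [DecidableEq (F m)] (hm : 0 < m) :
    (univ.filter fun t : F m => t ^ 2 ^ m = t).card = 2 ^ m := by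
  have hQ : (1:ℕ) ≤ 2 ^ m := Nat.one_le_two_pow
  have hsplit : (univ.filter fun t : F m => t ^ 2 ^ m = t)
      = insert (0 : F m) (univ.filter fun t : F m => t ^ (2 ^ m - 1) = 1) := by
    ext x
    simp only [mem_insert, mem_filter, mem_univ, true_and]
    constructor
    · intro hx
      rcases eq_or_ne x 0 with h | h
      · exact Or.inl h
      · right
        have hx' : x ^ (2 ^ m - 1) * x = 1 * x := by
          rw [one_mul, ← pow_succ, show 2 ^ m - 1 + 1 = 2 ^ m from by omega]
          exact hx
        exact mul_right_cancel₀ h hx'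
    · rintro (rfl | hx)
      · rw [zero_pow (by positivity : (0:ℕ) < 2 ^ m).ne']
      · rw [show (2:ℕ) ^ m = (2 ^ m - 1) + 1 from by omega, pow_succ, hx, one_mul]
  rw [hsplit, Finset.card_insert_of_notMem]
  · have hp2 : (2:ℕ) ^ 1 ≤ 2 ^ m := Nat.pow_le_pow_right (by norm_num) hm
    have hc := card_pow_eq_one m hm (n := 2 ^ m - 1) (by omega)
      ⟨2 ^ m + 1, fact_eq m⟩
    rw [Nat.card_eq_fintype_card, Fintype.card_subtype] at hc
    rw [hc]
    omega
  · simp only [mem_filter, mem_univ, true_and]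
    have hp2 : (2:ℕ) ^ 1 ≤ 2 ^ m := Nat.pow_le_pow_right (by norm_num) hm
    rw [zero_pow (show (2:ℕ) ^ m - 1 ≠ 0 from by omega)]
    exact zero_ne_one

lemma exists_sm_ne (hm : 0 < m) : ∃ t : F m, t ^ 2 ^ m = t ∧ sm m t ≠ 0 := by
  classical
  by_contra hcon
  push_neg at hcon
  set P : Polynomial (F m) := ∑ i ∈ range m, Polynomial.X ^ 2 ^ i with hP
  have hPne : P ≠ 0 := by
    intro h
    have hc : P.coeff 1 = 1 := by
      rw [hP, Polynomial.finset_sum_coeff]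
      rw [Finset.sum_eq_single 0]
      · simp
      · intro i _ hne
        rw [Polynomial.coeff_X_pow]
        have h2 : 2 ^ 1 ≤ 2 ^ i := Nat.pow_le_pow_right (by norm_num) (by omega)
        rw [if_neg (by omega)]
      · intro h0
        exact absurd (mem_range.mpr hm) h0
    rw [h] at hc
    simp at hc
  have hdeg : P.natDegree ≤ 2 ^ (m - 1) := by
    apply Polynomial.natDegree_sum_le_of_forall_le
    intro i hi
    rw [Polynomial.natDegree_X_pow]
    exact Nat.pow_le_pow_right (by norm_num) (by simp only [mem_range] at hi; omega)
  have hsub : (univ.filter fun t : F m => t ^ 2 ^ m = t) ⊆ P.roots.toFinset := by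
    intro t ht
    simp only [mem_filter, mem_univ, true_and] at ht
    rw [Multiset.mem_toFinset, Polynomial.mem_roots hPne]
    have : P.eval t = sm m t := by
      rw [hP, Polynomial.eval_finset_sum]
      unfold sm
      exact Finset.sum_congr rfl fun i _ => by rw [Polynomial.eval_pow, Polynomial.eval_X]
    rw [Polynomial.IsRoot, this]
    exact hcon t ht
  have h1 : (univ.filter fun t : F m => t ^ 2 ^ m = t).card ≤ P.natDegree :=
    le_trans (Finset.card_le_card hsub)
      (le_trans (Multiset.toFinset_card_le _) (Polynomial.card_roots' P))
  rw [card_K m hm] at h1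
  have h2 : 2 ^ (m - 1) + 2 ^ (m - 1) = 2 ^ m := by
    rw [← two_mul, ← pow_succ']
    congr 1
    omega
  have h3 : 0 < 2 ^ (m - 1) := Nat.pow_pos (by norm_num)
  omega

lemma char_sum [DecidableEq (F m)] (hm : 0 < m) (u : F m) :
    ∑ t ∈ univ.filter (fun t : F m => t ^ 2 ^ m = t),
        (-1 : ℤ) ^ (Algebra.trace (ZMod 2) (F m) (t * u)).val =
      if u ^ 2 ^ m = u then (2 ^ m : ℤ) else 0 := by
  by_cases hu : u ^ 2 ^ m = u
  · rw [if_pos hu]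
    have h1 : ∀ t ∈ univ.filter (fun t : F m => t ^ 2 ^ m = t),
        (-1 : ℤ) ^ (Algebra.trace (ZMod 2) (F m) (t * u)).val = 1 := by
      intro t ht
      simp only [mem_filter, mem_univ, true_and] at ht
      have : (t * u) ^ 2 ^ m = t * u := by rw [mul_pow, ht, hu]
      rw [trace_zero m hm this, ZMod.val_zero, pow_zero]
    rw [Finset.sum_congr rfl h1, Finset.sum_const, card_K m hm]
    simp
  · rw [if_neg hu]
    set w := u + u ^ 2 ^ m with hwdef
    have hw : w ≠ 0 := by
      intro h0
      exact hu ((add_eq_zero_iff_char2 m u (u ^ 2 ^ m)).mp h0).symm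
    have hwK : w ^ 2 ^ m = w := by
      rw [hwdef, add_pow_char_pow, pow_QQ m hm]
      exact add_comm _ _
    have hterm : ∀ t ∈ univ.filter (fun t : F m => t ^ 2 ^ m = t),
        (-1 : ℤ) ^ (Algebra.trace (ZMod 2) (F m) (t * u)).val
          = (if sm m (t * w) = 0 then (1:ℤ) else -1) := by
      intro t ht
      simp only [mem_filter, mem_univ, true_and] at ht
      have htr : algebraMap (ZMod 2) (F m) (Algebra.trace (ZMod 2) (F m) (t * u))
          = sm m (t * w) := by
        rw [trace_s m hm, hwdef]
        congr 1
        rw [mul_pow, ht, mul_add]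
      rcases zmod2_cases (Algebra.trace (ZMod 2) (F m) (t * u)) with h | h
      · rw [h, map_zero] at htr
        rw [h, ZMod.val_zero, pow_zero, if_pos htr.symm]
      · rw [h, map_one] at htr
        have hne : sm m (t * w) ≠ 0 := by rw [← htr]; exact one_ne_zero
        rw [h, if_neg hne, ZMod.val_one, pow_one]
    rw [Finset.sum_congr rfl hterm]
    have hre : ∑ t ∈ univ.filter (fun t : F m => t ^ 2 ^ m = t),
        (if sm m (t * w) = 0 then (1:ℤ) else -1)
        = ∑ v ∈ univ.filter (fun t : F m => t ^ 2 ^ m = t),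
        (if sm m v = 0 then (1:ℤ) else -1) := by
      apply Finset.sum_nbij' (i := fun t => t * w) (j := fun v => v * w⁻¹)
      · intro t ht
        simp only [mem_filter, mem_univ, true_and] at ht ⊢
        rw [mul_pow, ht, hwK]
      · intro v hv
        simp only [mem_filter, mem_univ, true_and] at hv ⊢
        rw [mul_pow, hv, inv_pow, hwK]
      · intro t _
        exact mul_inv_cancel_right₀ hw t
      · intro v _
        exact inv_mul_cancel_right₀ hw v
      · intro t _
        rfl
    rw [hre]
    obtain ⟨t₀, ht₀K, ht₀⟩ := exists_sm_ne m hm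
    have ht₀1 : sm m t₀ = 1 := by
      rcases eq_zero_or_one m (sm_sq m hm ht₀K) with h | h
      · exact absurd h ht₀
      · exact h
    rw [Finset.sum_ite, Finset.sum_const, Finset.sum_const]
    have hAB : ((univ.filter fun t : F m => t ^ 2 ^ m = t).filter fun v => sm m v = 0).card
        = ((univ.filter fun t : F m => t ^ 2 ^ m = t).filter fun v => ¬ sm m v = 0).card := by
      apply Finset.card_bij' (i := fun v _ => v + t₀) (j := fun v _ => v + t₀)
      · intro v hv
        simp only [mem_filter, mem_univ, true_and] at hv ⊢
        refine ⟨by rw [add_pow_char_pow, hv.1, ht₀K], ?_⟩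
        rw [sm_add, hv.2, zero_add, ht₀1]
        exact one_ne_zero
      · intro v hv
        simp only [mem_filter, mem_univ, true_and] at hv ⊢
        have hv1 : sm m v = 1 := by
          rcases eq_zero_or_one m (sm_sq m hm hv.1) with h | h
          · exact absurd h hv.2
          · exact h
        refine ⟨by rw [add_pow_char_pow, hv.1, ht₀K], ?_⟩
        rw [sm_add, hv1, ht₀1, CharTwo.add_self_eq_zero]
      · intro v _
        rw [add_assoc, CharTwo.add_self_eq_zero, add_zero]
      · intro v _
        rw [add_assoc, CharTwo.add_self_eq_zero, add_zero]
    rw [hAB, nsmul_eq_mul, nsmul_eq_mul]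
    ring

end Stmt15Aux

open Finset in
set_option maxHeartbeats 1000000 in
/-- Niho's lemma, part 2. -/
theorem stmt_15 (m s1 s2 : ℕ) (hm : 0 < m) (a b : GaloisField 2 (2 * m)) :
    (∑ x : GaloisField 2 (2 * m),
        (-1 : ℤ) ^ (Algebra.trace (ZMod 2) (GaloisField 2 (2 * m))
          (a * x ^ (s1 * (2 ^ m - 1) + 1) + b * x ^ (s2 * (2 ^ m - 1) + 1))).val) =
    ((Nat.card {z : GaloisField 2 (2 * m) // z * z ^ (2 ^ m) = 1 ∧
        b ^ (2 ^ m) * z ^ (2 * (s2 : ℤ) - 1) +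
          a ^ (2 ^ m) * z ^ ((s1 : ℤ) + (s2 : ℤ) - 1) +
          a * z ^ ((s2 : ℤ) - (s1 : ℤ)) + b = 0} : ℤ) - 1) * 2 ^ m := by
  classical
  have hQ1 : (1:ℕ) ≤ 2 ^ m := Nat.one_le_two_pow
  have hp2 : (2:ℕ) ^ 1 ≤ 2 ^ m := Nat.pow_le_pow_right (by norm_num) hm
  -- notation
  set E : GaloisField 2 (2 * m) → Prop := fun z =>
    b ^ (2 ^ m) * z ^ (2 * (s2 : ℤ) - 1) + a ^ (2 ^ m) * z ^ ((s1 : ℤ) + (s2 : ℤ) - 1) +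
      a * z ^ ((s2 : ℤ) - (s1 : ℤ)) + b = 0 with hE
  -- RHS as a filter card
  have hV : (Nat.card {z : GaloisField 2 (2 * m) // z * z ^ (2 ^ m) = 1 ∧ E z} : ℤ)
      = (((univ.filter (fun z : GaloisField 2 (2 * m) => z * z ^ (2 ^ m) = 1)).filter E).card
          : ℤ) := by
    rw [Nat.card_eq_fintype_card, Fintype.card_subtype, Finset.filter_filter]
  -- split off x = 0
  rw [← Finset.add_sum_erase _ _ (mem_univ (0 : GaloisField 2 (2 * m)))]
  have hf0 : a * (0 : GaloisField 2 (2 * m)) ^ (s1 * (2 ^ m - 1) + 1) +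
      b * (0 : GaloisField 2 (2 * m)) ^ (s2 * (2 ^ m - 1) + 1) = 0 := by
    rw [zero_pow (Nat.succ_ne_zero _), zero_pow (Nat.succ_ne_zero _), mul_zero, mul_zero,
      add_zero]
  rw [hf0, map_zero, ZMod.val_zero, pow_zero]
  -- fiberwise over S
  have hmaps : ∀ x ∈ (univ : Finset (GaloisField 2 (2 * m))).erase 0,
      (x ^ (2 ^ m - 1))⁻¹ ∈
        univ.filter (fun z : GaloisField 2 (2 * m) => z * z ^ (2 ^ m) = 1) := by
    intro x hx
    have hxne : x ≠ 0 := (Finset.mem_erase.mp hx).1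
    simp only [mem_filter, mem_univ, true_and]
    have hq : x ^ (2 ^ (2 * m) - 1) = 1 := by
      rw [← Stmt15Aux.hcard m hm]; exact FiniteField.pow_card_sub_one_eq_one x hxne
    have harith : ∀ k : ℕ, k + k * 2 ^ m = k * (2 ^ m + 1) := fun k => by ring
    rw [inv_pow, ← mul_inv, ← pow_mul, ← pow_add, harith, ← Stmt15Aux.fact_eq m, hq, inv_one]
  rw [← Finset.sum_fiberwise_of_maps_to hmaps]
  -- evaluate each inner (fiber) sum
  have hinner : ∀ z ∈ univ.filter (fun z : GaloisField 2 (2 * m) => z * z ^ (2 ^ m) = 1),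
      (∑ x ∈ ((univ : Finset (GaloisField 2 (2 * m))).erase 0).filter
          (fun x => (x ^ (2 ^ m - 1))⁻¹ = z),
        (-1 : ℤ) ^ (Algebra.trace (ZMod 2) (GaloisField 2 (2 * m))
          (a * x ^ (s1 * (2 ^ m - 1) + 1) + b * x ^ (s2 * (2 ^ m - 1) + 1))).val)
      = (if E z then ((2:ℤ) ^ m) else 0) - 1 := by
    intro z hz
    simp only [mem_filter, mem_univ, true_and] at hz
    have hzne : z ≠ 0 := by
      intro h; rw [h, zero_mul] at hz; exact zero_ne_one hz
    have hzQ : z ^ (2 ^ m) = z⁻¹ := eq_inv_of_mul_eq_one_right hz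
    have hz1 : z ^ (2 ^ m + 1) = 1 := by
      rw [pow_succ, hzQ, inv_mul_cancel₀ hzne]
    obtain ⟨x₀, hx₀ne, hx₀⟩ := Stmt15Aux.exists_root m hm (z := z⁻¹)
      (by rw [inv_pow, hz1, inv_one])
    set c : GaloisField 2 (2 * m) := a * (z ^ s1)⁻¹ + b * (z ^ s2)⁻¹ with hc
    set u : GaloisField 2 (2 * m) := x₀ * c with hu
    -- the fiber is x₀ • K*
    have hbij : (∑ x ∈ ((univ : Finset (GaloisField 2 (2 * m))).erase 0).filter
          (fun x => (x ^ (2 ^ m - 1))⁻¹ = z),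
        (-1 : ℤ) ^ (Algebra.trace (ZMod 2) (GaloisField 2 (2 * m))
          (a * x ^ (s1 * (2 ^ m - 1) + 1) + b * x ^ (s2 * (2 ^ m - 1) + 1))).val)
        = ∑ t ∈ (univ.filter (fun t : GaloisField 2 (2 * m) => t ^ 2 ^ m = t)).erase 0,
          (-1 : ℤ) ^ (Algebra.trace (ZMod 2) (GaloisField 2 (2 * m)) (t * u)).val := by
      apply Finset.sum_nbij' (i := fun x => x₀⁻¹ * x) (j := fun t => x₀ * t)
      · intro x hx
        simp only [mem_filter, Finset.mem_erase, mem_univ, true_and, and_true] at hx ⊢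
        obtain ⟨hxne, hxz⟩ := hx
        have hxQ1 : x ^ (2 ^ m - 1) = z⁻¹ := inv_eq_iff_eq_inv.mp hxz
        have htne : x₀⁻¹ * x ≠ 0 := mul_ne_zero (inv_ne_zero hx₀ne) hxne
        refine ⟨htne, ?_⟩
        have ht1 : (x₀⁻¹ * x) ^ (2 ^ m - 1) = 1 := by
          rw [mul_pow, inv_pow, hx₀, hxQ1, inv_inv, mul_inv_cancel₀ hzne]
        rw [show (2:ℕ) ^ m = (2 ^ m - 1) + 1 from by omega, pow_succ, ht1, one_mul]
      · intro t ht
        simp only [mem_filter, Finset.mem_erase, mem_univ, true_and, and_true] at ht ⊢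
        obtain ⟨htne, htK⟩ := ht
        have hxne : x₀ * t ≠ 0 := mul_ne_zero hx₀ne htne
        refine ⟨hxne, ?_⟩
        have ht1 : t ^ (2 ^ m - 1) = 1 := by
          have : t ^ (2 ^ m - 1) * t = 1 * t := by
            rw [one_mul, ← pow_succ, show 2 ^ m - 1 + 1 = 2 ^ m from by omega, htK]
          exact mul_right_cancel₀ htne this
        rw [mul_pow, hx₀, ht1, mul_one, inv_inv]
      · intro x _
        exact mul_inv_cancel_left₀ hx₀ne x
      · intro t _
        exact inv_mul_cancel_left₀ hx₀ne t
      · intro x hx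
        simp only [mem_filter, Finset.mem_erase, mem_univ, true_and] at hx
        obtain ⟨⟨hxne, -⟩, hxz⟩ := hx
        have hxQ1 : x ^ (2 ^ m - 1) = z⁻¹ := inv_eq_iff_eq_inv.mp hxz
        have hd : ∀ s : ℕ, x ^ (s * (2 ^ m - 1) + 1) = (z ^ s)⁻¹ * x := by
          intro s
          rw [pow_add, pow_one, mul_comm s (2 ^ m - 1), pow_mul, hxQ1, inv_pow]
        have harg : a * x ^ (s1 * (2 ^ m - 1) + 1) + b * x ^ (s2 * (2 ^ m - 1) + 1)
            = (x₀⁻¹ * x) * u := by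
          rw [hd, hd, hu, hc, mul_comm x₀⁻¹ x, mul_assoc, inv_mul_cancel_left₀ hx₀ne]
          ring
        rw [harg]
    rw [hbij]
    -- complete the K* sum to a K sum
    have h0K : (0 : GaloisField 2 (2 * m)) ∈
        univ.filter (fun t : GaloisField 2 (2 * m) => t ^ 2 ^ m = t) := by
      simp only [mem_filter, mem_univ, true_and]
      rw [zero_pow (by positivity : (0:ℕ) < 2 ^ m).ne']
    have hsum0 := Finset.add_sum_erase _
      (fun t : GaloisField 2 (2 * m) =>
        (-1 : ℤ) ^ (Algebra.trace (ZMod 2) (GaloisField 2 (2 * m)) (t * u)).val) h0K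
    simp only [zero_mul, map_zero, ZMod.val_zero, pow_zero] at hsum0
    have hKsum := Stmt15Aux.char_sum m hm u
    -- condition rewriting
    have hx₀Q : x₀ ^ 2 ^ m = x₀ * z⁻¹ := by
      rw [show (2:ℕ) ^ m = (2 ^ m - 1) + 1 from by omega, pow_succ, hx₀, mul_comm]
    have hinvpow : ∀ s : ℕ, ((z ^ s)⁻¹) ^ 2 ^ m = z ^ s := by
      intro s
      rw [← inv_pow, ← pow_mul, mul_comm s (2 ^ m), pow_mul, inv_pow, hzQ, inv_inv]
    have hcQ : c ^ 2 ^ m = a ^ 2 ^ m * z ^ s1 + b ^ 2 ^ m * z ^ s2 := by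
      rw [hc, add_pow_char_pow, mul_pow, mul_pow, hinvpow, hinvpow]
    have hcond : (u ^ 2 ^ m = u) ↔ E z := by
      have h1 : u ^ 2 ^ m = x₀ * (z⁻¹ * (a ^ 2 ^ m * z ^ s1 + b ^ 2 ^ m * z ^ s2)) := by
        rw [hu, mul_pow, hx₀Q, hcQ]; ring
      have h2 : (u ^ 2 ^ m = u) ↔
          z⁻¹ * (a ^ 2 ^ m * z ^ s1 + b ^ 2 ^ m * z ^ s2) = c := by
        rw [h1, hu]
        exact mul_right_inj' hx₀ne
      have hzp : (z ^ (s1 + s2 + 1)) ≠ 0 := pow_ne_zero _ hzne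
      have h3 : (z⁻¹ * (a ^ 2 ^ m * z ^ s1 + b ^ 2 ^ m * z ^ s2) = c)
          ↔ z ^ (s1 + s2 + 1) * (z⁻¹ * (a ^ 2 ^ m * z ^ s1 + b ^ 2 ^ m * z ^ s2))
            = z ^ (s1 + s2 + 1) * c := (mul_right_inj' hzp).symm
      have h4 : z ^ (s1 + s2 + 1) * (z⁻¹ * (a ^ 2 ^ m * z ^ s1 + b ^ 2 ^ m * z ^ s2))
          = a ^ 2 ^ m * z ^ (2 * s1 + s2) + b ^ 2 ^ m * z ^ (s1 + 2 * s2) := by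
        field_simp
        ring
      have h5 : z ^ (s1 + s2 + 1) * c = a * z ^ (s2 + 1) + b * z ^ (s1 + 1) := by
        rw [hc]
        field_simp
        ring
      have hzpow : ∀ (k : ℤ) (n : ℕ), k + ((s1 : ℤ) + 1) = (n : ℤ) →
          z ^ k * z ^ ((s1 : ℤ) + 1) = z ^ n := by
        intro k n hk
        rw [← zpow_natCast z n, ← hk, zpow_add₀ hzne k ((s1 : ℤ) + 1)]
      have hz_s11 : z ^ ((s1 : ℤ) + 1) ≠ 0 := zpow_ne_zero _ hzne
      have h6 : E z ↔
          (b ^ 2 ^ m * z ^ (2 * (s2 : ℤ) - 1) + a ^ 2 ^ m * z ^ ((s1 : ℤ) + (s2 : ℤ) - 1) +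
            a * z ^ ((s2 : ℤ) - (s1 : ℤ)) + b) * z ^ ((s1 : ℤ) + 1) = 0 := by
        rw [hE]
        constructor
        · intro h; rw [h, zero_mul]
        · intro h
          rcases mul_eq_zero.mp h with h | h
          · exact h
          · exact absurd h hz_s11
      have h7 : (b ^ 2 ^ m * z ^ (2 * (s2 : ℤ) - 1) + a ^ 2 ^ m * z ^ ((s1 : ℤ) + (s2 : ℤ) - 1) +
            a * z ^ ((s2 : ℤ) - (s1 : ℤ)) + b) * z ^ ((s1 : ℤ) + 1)
          = b ^ 2 ^ m * z ^ (s1 + 2 * s2) + a ^ 2 ^ m * z ^ (2 * s1 + s2) +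
            a * z ^ (s2 + 1) + b * z ^ (s1 + 1) := by
        rw [add_mul, add_mul, add_mul, mul_assoc, mul_assoc, mul_assoc]
        rw [hzpow _ (s1 + 2 * s2) (by push_cast; ring),
          hzpow _ (2 * s1 + s2) (by push_cast; ring),
          hzpow _ (s2 + 1) (by push_cast; ring)]
        congr 1
        rw [show ((s1 : ℤ) + 1) = ((s1 + 1 : ℕ) : ℤ) from by push_cast; ring, zpow_natCast]
      have h8 : b ^ 2 ^ m * z ^ (s1 + 2 * s2) + a ^ 2 ^ m * z ^ (2 * s1 + s2) +
            a * z ^ (s2 + 1) + b * z ^ (s1 + 1)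
          = (a ^ 2 ^ m * z ^ (2 * s1 + s2) + b ^ 2 ^ m * z ^ (s1 + 2 * s2)) +
            (a * z ^ (s2 + 1) + b * z ^ (s1 + 1)) := by ring
      rw [h2, h3, h4, h5, h6, h7, h8, Stmt15Aux.add_eq_zero_iff_char2]
    -- put it together
    rw [hcond] at hKsum
    rw [← hsum0] at hKsum
    -- hKsum : 1 + ∑_{K*} = if E z then 2^m else 0
    push_cast at hKsum ⊢
    linarith [hKsum]
  rw [Finset.sum_congr rfl hinner]
  rw [Finset.sum_sub_distrib, Finset.sum_const]
  rw [← Finset.sum_filter]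
  rw [Finset.sum_const]
  have hScard : (univ.filter (fun z : GaloisField 2 (2 * m) => z * z ^ (2 ^ m) = 1)).card
      = 2 ^ m + 1 := by
    have hset : (univ.filter (fun z : GaloisField 2 (2 * m) => z * z ^ (2 ^ m) = 1))
        = univ.filter (fun z : GaloisField 2 (2 * m) => z ^ (2 ^ m + 1) = 1) := by
      ext z
      simp only [mem_filter, mem_univ, true_and]
      rw [pow_succ, mul_comm z (z ^ 2 ^ m)]
    rw [hset]
    have hc := Stmt15Aux.card_pow_eq_one m hm (n := 2 ^ m + 1) (by omega)
      ⟨2 ^ m - 1, by rw [Stmt15Aux.fact_eq m]; ring⟩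
    rw [Nat.card_eq_fintype_card, Fintype.card_subtype] at hc
    exact hc
  rw [hScard, hV]
  push_cast
  ring
end

section
/- Let p = 2, m ≥ 1, n = 2m, q = 2^n, d_2 = s_2(2^m-1)+1. For a in F_{2^m} and b in F_q, let S(a,b) = Σ_{x in F_q} (-1)^{tr_m(a x^{2^m+1}) + Tr_n(b x^{d_2})}, where tr_m is the absolute trace on F_{2^m} and Tr_n the absolute trace on F_q (note x^{2^m+1} lies in F_{2^m}). Then S(a,b) = (U(a,b) - 1) * 2^m, where U(a,b) is the number of z in S = {z in F_q : z * z^{2^m} = 1} satisfying b^{2^m} z^{2(2 s_2 - 1)} + a^{1/2} z^{2 s_2 - 1} + b = 0, with a^{1/2} the unique square root of a in F_{2^m}. -/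
attribute [local instance] Classical.propDecidable

set_option linter.unusedSectionVars false
set_option linter.unusedTactic false

section Niho
variable {F : Type*} [Field F] [Fintype F] [CharP F 2] {m : ℕ}

noncomputable def trm (m : ℕ) (y : F) : F := ∑ i ∈ Finset.range m, y ^ (2 ^ i)

noncomputable def eps (t : F) : ℤ := if t = 0 then 1 else -1

lemma fr_add (k : ℕ) (u v : F) : (u + v) ^ (2 ^ k) = u ^ (2 ^ k) + v ^ (2 ^ k) :=
  add_pow_char_pow u v 2 k

lemma sq_inj : Function.Injective (fun u : F => u ^ 2) := fun u v h =>
  frobenius_inj F 2 (by simpa [frobenius_def] using h)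

lemma two_eq_zero : (2 : F) = 0 := by exact_mod_cast CharP.cast_eq_zero F 2

lemma add_self (t : F) : t + t = 0 := by
  calc t + t = 2 * t := by ring
  _ = 0 := by rw [two_eq_zero, zero_mul]

lemma trm_add (u v : F) : trm m (u + v) = trm m u + trm m v := by
  simp [trm, fr_add, Finset.sum_add_distrib]

lemma trm_zero : trm m (0 : F) = 0 := by simp [trm]

lemma trm_sq (y : F) : (trm m y) ^ 2 = ∑ i ∈ Finset.range m, y ^ (2 ^ (i + 1)) := by
  rw [trm, sum_pow_char]
  refine Finset.sum_congr rfl fun i _ => ?_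
  rw [← pow_mul, pow_succ]

lemma trm_idem {y : F} (hy : y ^ (2 ^ m) = y) : (trm m y) ^ 2 = trm m y := by
  rw [trm_sq]
  have h1 : ∑ i ∈ Finset.range (m + 1), y ^ (2 ^ i)
      = (∑ i ∈ Finset.range m, y ^ (2 ^ (i + 1))) + y ^ 2 ^ 0 := Finset.sum_range_succ' _ m
  have h2 : ∑ i ∈ Finset.range (m + 1), y ^ (2 ^ i)
      = (∑ i ∈ Finset.range m, y ^ (2 ^ i)) + y ^ (2 ^ m) := Finset.sum_range_succ _ m
  have h3 := h1.symm.trans h2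
  rw [hy, pow_zero, pow_one] at h3
  have := add_self y
  unfold trm
  linear_combination h3

lemma trm_mem {y : F} (hy : y ^ (2 ^ m) = y) : trm m y = 0 ∨ trm m y = 1 := by
  have h := trm_idem hy
  have h2 : trm m y * (trm m y - 1) = 0 := by linear_combination h
  rcases mul_eq_zero.1 h2 with h' | h'
  · exact Or.inl h'
  · exact Or.inr (by linear_combination h')

lemma eps_def (t : F) : eps t = if t = 0 then 1 else -1 := rfl

lemma eps_add {u v : F} (hu : u = 0 ∨ u = 1) (hv : v = 0 ∨ v = 1) :
    eps (u + v) = eps u * eps v := by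
  have hchar : (1 : F) + 1 = 0 := add_self 1
  rcases hu with h | h <;> rcases hv with h' | h' <;>
    simp [eps, h, h', hchar, one_ne_zero]


variable (F m) in
noncomputable def Kf : Finset F := Finset.univ.filter (fun y => y ^ (2 ^ m) = y)

lemma mem_Kf {y : F} : y ∈ Kf F m ↔ y ^ (2 ^ m) = y := by simp [Kf]

lemma Kf_add {u v : F} (hu : u ^ (2^m) = u) (hv : v ^ (2^m) = v) :
    (u + v) ^ (2^m) = u + v := by rw [fr_add, hu, hv]

lemma Kf_mul {u v : F} (hu : u ^ (2^m) = u) (hv : v ^ (2^m) = v) :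
    (u * v) ^ (2^m) = u * v := by rw [mul_pow, hu, hv]

lemma Kf_pow {u : F} (hu : u ^ (2^m) = u) (k : ℕ) : (u ^ k) ^ (2^m) = u ^ k := by
  rw [← pow_mul, mul_comm, pow_mul, hu]

lemma Kf_inv {u : F} (hu : u ^ (2^m) = u) : (u⁻¹) ^ (2^m) = u⁻¹ := by
  rw [inv_pow, hu]

section Card
variable (hm : 0 < m) (hF : Fintype.card F = 2 ^ (2 * m))

include hF in
lemma pow_cardF (x : F) : x ^ (2 ^ (2 * m)) = x := by
  rw [← hF]; exact FiniteField.pow_card x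

include hm in
lemma card_Kf_le : (Kf F m).card ≤ 2 ^ m := by
  classical
  set P : Polynomial F := Polynomial.X ^ (2 ^ m) - Polynomial.X with hP
  have hdeg : P.natDegree = 2 ^ m := by
    rw [hP]
    rw [Polynomial.natDegree_sub_eq_left_of_natDegree_lt] <;>
      simp [Polynomial.natDegree_X_pow, Polynomial.natDegree_X,
        Nat.one_lt_two_pow_iff, hm.ne']
  have hPne : P ≠ 0 := by
    intro h
    rw [h, Polynomial.natDegree_zero] at hdeg
    exact (pow_pos (two_pos : (0:ℕ) < 2) m).ne' hdeg.symm
  have hsub : Kf F m ⊆ P.roots.toFinset := by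
    intro y hy
    rw [Multiset.mem_toFinset, Polynomial.mem_roots hPne]
    simp [hP, Polynomial.IsRoot, sub_eq_zero, mem_Kf.1 hy]
  calc (Kf F m).card ≤ P.roots.toFinset.card := Finset.card_le_card hsub
  _ ≤ Multiset.card P.roots := Multiset.toFinset_card_le _
  _ ≤ P.natDegree := P.card_roots'
  _ = 2 ^ m := hdeg

include hm hF in
lemma card_Kf : (Kf F m).card = 2 ^ m := by
  classical
  -- lower bound via fibers of ψ : y ↦ y^{2^m} + y
  set ψ : F → F := fun y => y ^ (2 ^ m) + y with hψ
  have hψK : ∀ y : F, ψ y ∈ Kf F m := by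
    intro y
    rw [mem_Kf]
    simp only [hψ]
    rw [fr_add, ← pow_mul, ← pow_add, ← two_mul, pow_cardF hF]
    ring
  have hfib : ∀ w ∈ Kf F m,
      (Finset.univ.filter (fun y : F => ψ y = w)).card ≤ (Kf F m).card := by
    intro w _
    rcases (Finset.univ.filter (fun y : F => ψ y = w)).eq_empty_or_nonempty with h | ⟨y0, hy0⟩
    · simp [h]
    · rw [Finset.mem_filter] at hy0
      apply Finset.card_le_card_of_injOn (fun y => y + y0)
      · intro y hy
        rw [Finset.mem_coe, Finset.mem_filter] at hy
        show (y + y0) ∈ (Kf F m : Set F)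
        rw [Finset.mem_coe, mem_Kf]
        have : ψ (y + y0) = 0 := by
          have : ψ (y + y0) = ψ y + ψ y0 := by
            simp only [hψ, fr_add]; ring
          rw [this, hy.2, hy0.2, add_self]
        have h2 : (y + y0) ^ (2^m) + (y + y0) = 0 := this
        have := add_self (y + y0)
        linear_combination h2 - this
      · intro u _ v _ h
        have := add_right_cancel h
        exact this
  have hcount : Fintype.card F ≤ (Kf F m).card * (Kf F m).card := by
    rw [← Finset.card_univ,
      Finset.card_eq_sum_card_fiberwise (fun y _ => hψK y)]
    calc ∑ w ∈ Kf F m, (Finset.univ.filter (fun y : F => ψ y = w)).card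
        ≤ ∑ _w ∈ Kf F m, (Kf F m).card := Finset.sum_le_sum hfib
    _ = (Kf F m).card * (Kf F m).card := by rw [Finset.sum_const, smul_eq_mul]
  rw [hF] at hcount
  have hle := card_Kf_le (F := F) hm
  have hge : 2 ^ m ≤ (Kf F m).card := by
    by_contra h
    push_neg at h
    have : (Kf F m).card * (Kf F m).card < 2 ^ m * 2 ^ m :=
      Nat.mul_lt_mul_of_lt_of_lt h h
    rw [← pow_add, ← two_mul] at this
    omega
  omega

include hm hF in
lemma exists_trm_ne {w : F} (hw : w ^ (2^m) = w) (hw0 : w ≠ 0) :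
    ∃ y0 : F, y0 ^ (2^m) = y0 ∧ trm m (y0 * w) ≠ 0 := by
  classical
  by_contra hcon
  push_neg at hcon
  have hall : ∀ v ∈ Kf F m, trm m v = 0 := by
    intro v hv
    have h1 : (v * w⁻¹) ^ (2^m) = v * w⁻¹ := Kf_mul (mem_Kf.1 hv) (Kf_inv hw)
    have := hcon (v * w⁻¹) h1
    rwa [mul_assoc, inv_mul_cancel₀ hw0, mul_one] at this
  set Q : Polynomial F := ∑ i ∈ Finset.range m, Polynomial.X ^ (2 ^ i) with hQ
  have hcoeff : Q.coeff (2 ^ (m - 1)) = 1 := by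
    rw [hQ, Polynomial.finset_sum_coeff]
    have : ∀ i ∈ Finset.range m,
        (Polynomial.X ^ (2^i) : Polynomial F).coeff (2 ^ (m-1))
          = if i = m - 1 then 1 else 0 := by
      intro i hi
      rw [Polynomial.coeff_X_pow]
      congr 1
      simp only [eq_iff_iff]
      constructor
      · intro h
        exact (Nat.pow_right_injective le_rfl h).symm
      · intro h; rw [h]
    rw [Finset.sum_congr rfl this, Finset.sum_ite_eq' (Finset.range m) (m-1)]
    simp [Nat.sub_lt hm]
  have hQne : Q ≠ 0 := fun h => by simp [h] at hcoeff
  have hdeg : Q.natDegree ≤ 2 ^ (m - 1) :=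
    Polynomial.natDegree_sum_le_of_forall_le _ _ (fun i hi => by
      rw [Polynomial.natDegree_X_pow]
      exact Nat.pow_le_pow_right (by norm_num) (by
        have := Finset.mem_range.1 hi; omega))
  have hsub : Kf F m ⊆ Q.roots.toFinset := by
    intro v hv
    rw [Multiset.mem_toFinset, Polynomial.mem_roots hQne]
    have := hall v hv
    simp only [Polynomial.IsRoot, hQ, Polynomial.eval_finset_sum, Polynomial.eval_pow,
      Polynomial.eval_X]
    rwa [trm] at this
  have := calc (2:ℕ) ^ m = (Kf F m).card := (card_Kf hm hF).symm
    _ ≤ Q.roots.toFinset.card := Finset.card_le_card hsub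
    _ ≤ Multiset.card Q.roots := Multiset.toFinset_card_le _
    _ ≤ Q.natDegree := Q.card_roots'
    _ ≤ 2 ^ (m - 1) := hdeg
  have hlt : (2:ℕ) ^ (m-1) < 2 ^ m := Nat.pow_lt_pow_right one_lt_two (by omega)
  omega

include hm hF in
lemma char_sum {w : F} (hw : w ^ (2^m) = w) :
    ∑ y ∈ Kf F m, eps (trm m (y * w)) = if w = 0 then ((2:ℤ) ^ m) else 0 := by
  classical
  split_ifs with h
  · subst h
    have : ∀ y ∈ Kf F m, eps (trm m (y * 0)) = (1:ℤ) := by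
      intro y _; rw [mul_zero, trm_zero]; simp [eps]
    rw [Finset.sum_congr rfl this, Finset.sum_const, card_Kf hm hF]
    simp
  · obtain ⟨y0, hy0K, hy0⟩ := exists_trm_ne hm hF hw h
    have hy0val : trm m (y0 * w) = 1 := by
      rcases trm_mem (Kf_mul hy0K hw) with h' | h'
      · exact absurd h' hy0
      · exact h'
    have htrans : ∑ y ∈ Kf F m, eps (trm m (y * w))
        = ∑ y ∈ Kf F m, eps (trm m ((y + y0) * w)) := by
      refine Finset.sum_nbij' (fun y => y + y0) (fun y => y + y0) ?_ ?_ ?_ ?_ ?_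
      · intro y hy
        exact mem_Kf.2 (Kf_add (mem_Kf.1 hy) hy0K)
      · intro y hy
        exact mem_Kf.2 (Kf_add (mem_Kf.1 hy) hy0K)
      · intro y _
        have := add_self y0
        linear_combination this
      · intro y _
        have := add_self y0
        linear_combination this
      · intro y hy
        have := add_self y0
        have h2 : (y + y0) + y0 = y := by linear_combination this
        rw [h2]
    have hmul : ∀ y ∈ Kf F m, eps (trm m ((y + y0) * w))
        = eps (trm m (y * w)) * (-1) := by
      intro y hy
      have hsplit : (y + y0) * w = y * w + y0 * w := by ring
      rw [hsplit, trm_add, eps_add (trm_mem (Kf_mul (mem_Kf.1 hy) hw))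
        (trm_mem (Kf_mul hy0K hw)), hy0val]
      simp [eps, one_ne_zero]
    rw [Finset.sum_congr rfl hmul] at htrans
    rw [← Finset.sum_mul] at htrans
    have : ∑ y ∈ Kf F m, eps (trm m (y * w)) = 0 := by linarith [htrans]
    exact this

variable (F m) in
noncomputable def Sf : Finset F := Finset.univ.filter (fun z => z * z ^ (2 ^ m) = 1)

lemma mem_Sf {z : F} : z ∈ Sf F m ↔ z * z ^ (2 ^ m) = 1 := by simp [Sf]

lemma Sf_ne_zero {z : F} (hz : z ∈ Sf F m) : z ≠ 0 := by
  intro h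
  rw [mem_Sf, h] at hz
  simp at hz

lemma Sf_pow_eq_inv {z : F} (hz : z ∈ Sf F m) : z ^ (2 ^ m) = z⁻¹ := by
  exact eq_inv_of_mul_eq_one_right (mem_Sf.1 hz)

include hm hF in
lemma sk_sq (u : F) : (u ^ (2 ^ (2 * m - 1))) ^ 2 = u := by
  rw [← pow_mul, ← pow_succ]
  have : 2 * m - 1 + 1 = 2 * m := by omega
  rw [this, pow_cardF hF]

lemma norm_mem (x : F) (hF : Fintype.card F = 2 ^ (2 * m)) :
    (x ^ (2 ^ m + 1)) ^ (2 ^ m) = x ^ (2 ^ m + 1) := by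
  rw [← pow_mul, add_mul, one_mul, pow_add, ← pow_add 2 m m, ← two_mul, pow_cardF hF,
    pow_succ, mul_comm]

include hm hF in
lemma sum_split (f : F → ℤ) :
    ∑ x ∈ Finset.univ.erase (0 : F), f x
      = ∑ p ∈ ((Kf F m).erase 0) ×ˢ Sf F m, f (p.1 * p.2) := by
  classical
  refine (Finset.sum_bij'
    (fun (x : F) (hx : x ∈ Finset.univ.erase (0:F)) =>
      ((x ^ (2 ^ m + 1)) ^ (2 ^ (2 * m - 1)),
        x * ((x ^ (2 ^ m + 1)) ^ (2 ^ (2 * m - 1)))⁻¹))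
    (fun p _ => p.1 * p.2) ?_ ?_ ?_ ?_ ?_)
  · -- maps into product
    intro x hx
    have hx0 : x ≠ 0 := (Finset.mem_erase.1 hx).1
    set y := (x ^ (2 ^ m + 1)) ^ (2 ^ (2 * m - 1)) with hy
    have hysq : y ^ 2 = x ^ (2 ^ m + 1) := sk_sq hm hF _
    have hy0 : y ≠ 0 := by
      intro h
      rw [h, zero_pow two_ne_zero] at hysq
      exact pow_ne_zero _ hx0 hysq.symm
    have hyK : y ^ (2 ^ m) = y := Kf_pow (norm_mem x hF) _
    rw [Finset.mem_product]
    constructor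
    · exact Finset.mem_erase.2 ⟨hy0, mem_Kf.2 hyK⟩
    · rw [mem_Sf]
      have : x * y⁻¹ * (x * y⁻¹) ^ (2 ^ m) = x ^ (2 ^ m + 1) * (y * y ^ (2^m))⁻¹ := by
        rw [mul_pow, inv_pow, pow_add, pow_one]
        field_simp
      rw [this, hyK, ← sq, hysq, mul_inv_cancel₀ (pow_ne_zero _ hx0)]
  · -- product into erase 0
    intro p hp
    rw [Finset.mem_product] at hp
    refine Finset.mem_erase.2 ⟨?_, Finset.mem_univ _⟩
    exact mul_ne_zero (fun h => (Finset.mem_erase.1 hp.1).1 h) (Sf_ne_zero hp.2)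
  · -- left inverse
    intro x hx
    dsimp only
    have hx0 : x ≠ 0 := (Finset.mem_erase.1 hx).1
    set y := (x ^ (2 ^ m + 1)) ^ (2 ^ (2 * m - 1)) with hy
    have hysq : y ^ 2 = x ^ (2 ^ m + 1) := sk_sq hm hF _
    have hy0 : y ≠ 0 := by
      intro h
      rw [h, zero_pow two_ne_zero] at hysq
      exact pow_ne_zero _ hx0 hysq.symm
    rw [mul_comm x y⁻¹, ← mul_assoc, mul_inv_cancel₀ hy0, one_mul]
  · -- right inverse
    intro p hp
    rw [Finset.mem_product] at hp
    obtain ⟨hp1, hp2⟩ := hp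
    have hy0 : p.1 ≠ 0 := (Finset.mem_erase.1 hp1).1
    have hyK : p.1 ^ (2 ^ m) = p.1 := mem_Kf.1 (Finset.mem_erase.1 hp1).2
    have hz : p.2 * p.2 ^ (2 ^ m) = 1 := mem_Sf.1 hp2
    have hnorm : (p.1 * p.2) ^ (2 ^ m + 1) = p.1 ^ 2 := by
      rw [mul_pow, pow_add, pow_add, pow_one, pow_one]
      calc p.1 ^ 2 ^ m * p.1 * (p.2 ^ 2 ^ m * p.2)
          = p.1 ^ 2 ^ m * p.1 * (p.2 * p.2 ^ 2 ^ m) := by ring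
      _ = p.1 ^ 2 := by rw [hz, hyK, mul_one, sq]
    have hsk : ((p.1 * p.2) ^ (2 ^ m + 1)) ^ (2 ^ (2 * m - 1)) = p.1 := by
      rw [hnorm, ← pow_mul, mul_comm 2 (2 ^ (2*m-1)), pow_mul]
      exact sk_sq hm hF p.1
    rw [hsk, Prod.mk.injEq]
    refine ⟨rfl, ?_⟩
    rw [mul_comm p.1 p.2, mul_assoc, mul_inv_cancel₀ hy0, mul_one]
  · intro x hx
    dsimp only
    have hx0 : x ≠ 0 := (Finset.mem_erase.1 hx).1
    set y := (x ^ (2 ^ m + 1)) ^ (2 ^ (2 * m - 1)) with hy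
    have hysq : y ^ 2 = x ^ (2 ^ m + 1) := sk_sq hm hF _
    have hy0 : y ≠ 0 := by
      intro h
      rw [h, zero_pow two_ne_zero] at hysq
      exact pow_ne_zero _ hx0 hysq.symm
    have hxy : y * (x * y⁻¹) = x := by
      rw [mul_comm x y⁻¹, ← mul_assoc, mul_inv_cancel₀ hy0, one_mul]
    rw [hxy]

include hm hF in
lemma card_Sf : (Sf F m).card = 2 ^ m + 1 := by
  classical
  have h := sum_split hm hF (fun _ => (1 : ℤ))
  rw [Finset.sum_const, Finset.sum_const] at h
  have hcards : ((Finset.univ.erase (0:F)).card : ℤ)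
      = (((Kf F m).erase 0) ×ˢ Sf F m).card := by simpa using h
  have h1 : (Finset.univ.erase (0:F)).card = 2 ^ (2*m) - 1 := by
    rw [Finset.card_erase_of_mem (Finset.mem_univ _), Finset.card_univ, hF]
  have h2 : ((Kf F m).erase 0).card = 2 ^ m - 1 := by
    rw [Finset.card_erase_of_mem (mem_Kf.2 (by simp [zero_pow])), card_Kf hm hF]
  rw [Finset.card_product, h1, h2] at hcards
  have hc : (2:ℕ) ^ (2*m) - 1 = (2 ^ m - 1) * (Sf F m).card := by exact_mod_cast hcards
  have hq : (2:ℕ) ^ (2*m) = 2 ^ m * 2 ^ m := by rw [← pow_add, two_mul]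
  have hq2 : (2:ℕ) ≤ 2 ^ m := by
    calc (2:ℕ) = 2 ^ 1 := (pow_one 2).symm
    _ ≤ 2 ^ m := Nat.pow_le_pow_right (by norm_num) hm
  obtain ⟨k, hk⟩ : ∃ k, 2 ^ m = k + 2 := ⟨2 ^ m - 2, by omega⟩
  rw [hq, hk] at hc
  have e1 : (k + 2 - 1) = k + 1 := rfl
  have e2 : (k+2)*(k+2) = (k+1)*(k+3) + 1 := by ring
  rw [e1, e2, Nat.add_sub_cancel] at hc
  have := Nat.eq_of_mul_eq_mul_left (by omega : 0 < k + 1) hc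
  omega

lemma trm_sq' (y : F) : trm m (y ^ 2) = (trm m y) ^ 2 := by
  rw [trm_sq, trm]
  refine Finset.sum_congr rfl fun i _ => ?_
  rw [← pow_mul]
  congr 1
  rw [pow_succ]
  ring

lemma trn_split (v : F) : ∑ i ∈ Finset.range (2 * m), v ^ (2 ^ i)
    = trm m v + trm m (v ^ (2 ^ m)) := by
  rw [two_mul, Finset.sum_range_add, trm, trm]
  congr 1
  refine Finset.sum_congr rfl fun i _ => ?_
  rw [← pow_mul, ← pow_add]

section Main
variable (hm : 0 < m) (hF : Fintype.card F = 2 ^ (2 * m))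
variable {s2 : ℕ} {a b r : F} (ha : a ^ (2 ^ m) = a) (hr : r ^ 2 = a)

include ha hr in
lemma r_mem : r ^ (2 ^ m) = r := by
  apply sq_inj
  show (r ^ (2^m)) ^ 2 = r ^ 2
  calc (r ^ (2^m)) ^ 2 = (r ^ 2) ^ (2^m) := by
        rw [← pow_mul, ← pow_mul, mul_comm]
  _ = r ^ 2 := by rw [hr]; exact ha

/-- the element u = z^{2 s2 - 1} (as z^{2 s2} * z⁻¹) -/
lemma u_eq_zpow {z : F} (hz0 : z ≠ 0) :
    z ^ (2 * (s2:ℤ) - 1) = z ^ (2 * s2) * z⁻¹ := by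
  rw [zpow_sub₀ hz0, zpow_one, div_eq_mul_inv]
  congr 1
  rw [show (2 * (s2:ℤ)) = ((2 * s2 : ℕ) : ℤ) by push_cast; ring, zpow_natCast]

include hm hF ha hr in
lemma summand_eq {y z : F} (hy : y ^ (2 ^ m) = y) (hy0 : y ≠ 0)
    (hz : z * z ^ (2 ^ m) = 1) :
    (∑ i ∈ Finset.range m, (a * (y * z) ^ (2 ^ m + 1)) ^ (2 ^ i)) +
      (∑ i ∈ Finset.range (2 * m),
        (b * (y * z) ^ (s2 * (2 ^ m - 1) + 1)) ^ (2 ^ i))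
    = trm m (y * (r + b * (z ^ (2 * s2) * z⁻¹)⁻¹ + b ^ (2 ^ m) * (z ^ (2 * s2) * z⁻¹))) := by
  have hz0 : z ≠ 0 := by rintro rfl; simp at hz
  have hzinv : z ^ (2 ^ m) = z⁻¹ := eq_inv_of_mul_eq_one_right hz
  set u : F := z ^ (2 * s2) * z⁻¹ with hu
  have hu0 : u ≠ 0 := mul_ne_zero (pow_ne_zero _ hz0) (inv_ne_zero hz0)
  -- A) norm
  have hA : (y * z) ^ (2 ^ m + 1) = y ^ 2 := by
    rw [mul_pow, pow_add, pow_add, pow_one, pow_one]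
    calc y ^ 2 ^ m * y * (z ^ 2 ^ m * z) = y ^ 2 ^ m * y * (z * z ^ 2 ^ m) := by ring
    _ = y ^ 2 := by rw [hz, hy, mul_one, sq]
  -- B) first sum
  have hB : (∑ i ∈ Finset.range m, (a * (y * z) ^ (2 ^ m + 1)) ^ (2 ^ i))
      = trm m (r * y) := by
    have : a * (y * z) ^ (2 ^ m + 1) = (r * y) ^ 2 := by
      rw [hA, mul_pow, hr]
    rw [show (∑ i ∈ Finset.range m, (a * (y * z) ^ (2 ^ m + 1)) ^ (2 ^ i))
        = trm m (a * (y * z) ^ (2 ^ m + 1)) from rfl, this, trm_sq',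
      trm_idem (Kf_mul (r_mem ha hr) hy)]
  -- C) d-th power
  have hym1 : y ^ (2 ^ m - 1) = 1 := by
    have h1 : y ^ (2 ^ m - 1) * y = y := by
      rw [← pow_succ]
      have : 2 ^ m - 1 + 1 = 2 ^ m := by
        have := Nat.one_le_two_pow (n := m); omega
      rw [this, hy]
    have := mul_right_cancel₀ hy0 (h1.trans (one_mul y).symm)
    exact this
  have hzm1 : z ^ (2 ^ m - 1) = (z ^ 2)⁻¹ := by
    have h1 : z ^ (2 ^ m - 1) * z = z⁻¹ := by
      rw [← pow_succ]
      have : 2 ^ m - 1 + 1 = 2 ^ m := by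
        have := Nat.one_le_two_pow (n := m); omega
      rw [this, hzinv]
    field_simp
    calc z ^ (2^m - 1) * z ^ 2 = (z ^ (2^m-1) * z) * z := by ring
    _ = z⁻¹ * z := by rw [h1]
    _ = 1 := inv_mul_cancel₀ hz0
  have hC : (y * z) ^ (s2 * (2 ^ m - 1) + 1) = y * u⁻¹ := by
    rw [mul_pow]
    have hyd : y ^ (s2 * (2 ^ m - 1) + 1) = y := by
      rw [pow_add, pow_one, mul_comm s2, pow_mul, hym1, one_pow, one_mul]
    have hzd : z ^ (s2 * (2 ^ m - 1) + 1) = u⁻¹ := by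
      rw [pow_add, pow_one, mul_comm s2, pow_mul, hzm1, hu, mul_inv, inv_inv]
      congr 1
      rw [inv_pow, ← pow_mul]
    rw [hyd, hzd]
  -- u is inverted by frobenius^m
  have huinv : u ^ (2 ^ m) = u⁻¹ := by
    have h0 : u ^ (2 ^ m) = (z ^ (2 ^ m)) ^ (2 * s2) * (z ^ (2 ^ m))⁻¹ := by
      rw [hu, mul_pow, inv_pow, ← pow_mul, mul_comm (2 * s2), pow_mul]
    rw [h0, hzinv, hu]
    field_simp
    rw [one_div, inv_pow, inv_mul_cancel₀ (pow_ne_zero _ hz0)]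
  -- D,E) second sum
  have hD : (∑ i ∈ Finset.range (2 * m),
      (b * (y * z) ^ (s2 * (2 ^ m - 1) + 1)) ^ (2 ^ i))
      = trm m (y * (b * u⁻¹ + b ^ (2 ^ m) * u)) := by
    rw [hC, trn_split]
    have hv : (b * (y * u⁻¹)) ^ (2 ^ m) = b ^ (2 ^ m) * (y * u) := by
      rw [mul_pow, mul_pow, hy, inv_pow, huinv, inv_inv]
    rw [hv, ← trm_add]
    congr 1
    ring
  rw [hB, hD, ← trm_add]
  congr 1
  ring

/-- equivalence of the U-condition with vanishing of w z -/
lemma cond_iff {z : F} (hz : z * z ^ (2 ^ m) = 1) :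
    (b ^ (2 ^ m) * z ^ (2 * (2 * (s2:ℤ) - 1)) + r * z ^ (2 * (s2:ℤ) - 1) + b = 0)
    ↔ r + b * (z ^ (2 * s2) * z⁻¹)⁻¹ + b ^ (2 ^ m) * (z ^ (2 * s2) * z⁻¹) = 0 := by
  have hz0 : z ≠ 0 := by rintro rfl; simp at hz
  set u : F := z ^ (2 * s2) * z⁻¹ with hu
  have hu0 : u ≠ 0 := mul_ne_zero (pow_ne_zero _ hz0) (inv_ne_zero hz0)
  have h1 : z ^ (2 * (s2:ℤ) - 1) = u := u_eq_zpow hz0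
  have h2 : z ^ (2 * (2 * (s2:ℤ) - 1)) = u ^ 2 := by
    rw [show (2 * (2 * (s2:ℤ) - 1)) = (2 * (s2:ℤ) - 1) * 2 by ring, zpow_mul, h1]
    rw [show ((2:ℤ)) = ((2:ℕ):ℤ) from rfl, zpow_natCast]
  rw [h1, h2]
  constructor
  · intro h
    have : (r + b * u⁻¹ + b ^ (2 ^ m) * u) * u = 0 := by
      have he : (r + b * u⁻¹ + b ^ (2 ^ m) * u) * u
          = b ^ (2 ^ m) * u ^ 2 + r * u + b := by
        field_simp
        ring
      rw [he, h]
    rcases mul_eq_zero.1 this with h' | h'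
    · exact h'
    · exact absurd h' hu0
  · intro h
    have he : b ^ (2 ^ m) * u ^ 2 + r * u + b
        = (r + b * u⁻¹ + b ^ (2 ^ m) * u) * u := by
      field_simp
      ring
    rw [he, h, zero_mul]

include ha hr in
lemma w_mem (hF : Fintype.card F = 2 ^ (2 * m)) {z : F} (hz : z * z ^ (2 ^ m) = 1) :
    (r + b * (z ^ (2 * s2) * z⁻¹)⁻¹ + b ^ (2 ^ m) * (z ^ (2 * s2) * z⁻¹)) ^ (2 ^ m)
    = r + b * (z ^ (2 * s2) * z⁻¹)⁻¹ + b ^ (2 ^ m) * (z ^ (2 * s2) * z⁻¹) := by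
  have hz0 : z ≠ 0 := by rintro rfl; simp at hz
  have hzinv : z ^ (2 ^ m) = z⁻¹ := eq_inv_of_mul_eq_one_right hz
  set u : F := z ^ (2 * s2) * z⁻¹ with hu
  have huinv : u ^ (2 ^ m) = u⁻¹ := by
    have h0 : u ^ (2 ^ m) = (z ^ (2 ^ m)) ^ (2 * s2) * (z ^ (2 ^ m))⁻¹ := by
      rw [hu, mul_pow, inv_pow, ← pow_mul, mul_comm (2 * s2), pow_mul]
    rw [h0, hzinv, hu]
    field_simp
    rw [one_div, inv_pow, inv_mul_cancel₀ (pow_ne_zero _ hz0)]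
  rw [fr_add, fr_add, mul_pow, mul_pow, huinv, inv_pow, huinv, inv_inv, r_mem ha hr,
    ← pow_mul, ← pow_add, ← two_mul, pow_cardF hF]
  ring

end Main
end Card
end Niho

/-- Niho's lemma, part 1: for `q = 2^{2m}`, `a ∈ F_{2^m}` (encoded as
`a^{2^m} = a`), `b ∈ F_q`, and `d₂ = s₂(2^m-1)+1`, the sum
`S(a,b) = Σ_{x∈F_q} (-1)^{tr_m(a x^{2^m+1}) + Tr_n(b x^{d₂})}` equals
`(U(a,b) - 1)·2^m`, where `U(a,b)` is the number of `z ∈ S = {z : z·z^{2^m} = 1}`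
with `b̄ z^{2(2s₂-1)} + a^{1/2} z^{2s₂-1} + b = 0`, and `a^{1/2}` (here `r`) is the
unique square root of `a`.  The traces `tr_m` and `Tr_n` are computed as
`Σ_{i<m} y^{2^i}` and `Σ_{i<2m} y^{2^i}` (values in the prime field `{0,1} ⊆ F_q`),
and `(-1)^ε` is `1` if `ε = 0` and `-1` if `ε = 1`. -/
theorem stmt_16 (m s2 : ℕ) (hm : 0 < m) (a b : GaloisField 2 (2 * m))
    (ha : a ^ (2 ^ m) = a) (r : GaloisField 2 (2 * m)) (hr : r ^ 2 = a) :
    (∑ x : GaloisField 2 (2 * m),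
        if (∑ i ∈ Finset.range m, (a * x ^ (2 ^ m + 1)) ^ (2 ^ i)) +
            (∑ i ∈ Finset.range (2 * m),
              (b * x ^ (s2 * (2 ^ m - 1) + 1)) ^ (2 ^ i)) = 0
        then (1 : ℤ) else -1) =
    ((Nat.card {z : GaloisField 2 (2 * m) // z * z ^ (2 ^ m) = 1 ∧
        b ^ (2 ^ m) * z ^ (2 * (2 * (s2 : ℤ) - 1)) +
          r * z ^ (2 * (s2 : ℤ) - 1) + b = 0} : ℤ) - 1) * 2 ^ m := by
  classical
  have hF : Fintype.card (GaloisField 2 (2 * m)) = 2 ^ (2 * m) := by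
    rw [← Nat.card_eq_fintype_card]
    exact GaloisField.card 2 (2 * m) (by omega)
  set wz : GaloisField 2 (2 * m) → GaloisField 2 (2 * m) := fun z =>
    r + b * (z ^ (2 * s2) * z⁻¹)⁻¹ + b ^ (2 ^ m) * (z ^ (2 * s2) * z⁻¹) with hwz
  set f : GaloisField 2 (2 * m) → ℤ := fun x =>
    if (∑ i ∈ Finset.range m, (a * x ^ (2 ^ m + 1)) ^ (2 ^ i)) +
        (∑ i ∈ Finset.range (2 * m),
          (b * x ^ (s2 * (2 ^ m - 1) + 1)) ^ (2 ^ i)) = 0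
    then (1 : ℤ) else -1 with hf
  -- RHS count
  have hU : (Nat.card {z : GaloisField 2 (2 * m) // z * z ^ (2 ^ m) = 1 ∧
      b ^ (2 ^ m) * z ^ (2 * (2 * (s2 : ℤ) - 1)) +
        r * z ^ (2 * (s2 : ℤ) - 1) + b = 0})
      = ((Sf (GaloisField 2 (2 * m)) m).filter (fun z => wz z = 0)).card := by
    rw [Nat.card_eq_fintype_card, Fintype.card_subtype]
    have h1 : (Sf (GaloisField 2 (2 * m)) m).filter (fun z => wz z = 0)
        = Finset.univ.filter
            (fun z : GaloisField 2 (2 * m) => z * z ^ (2 ^ m) = 1 ∧ wz z = 0) := by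
      rw [Sf, Finset.filter_filter]
    rw [h1]
    congr 1
    apply Finset.filter_congr
    intro z _
    constructor
    · rintro ⟨h1, h2⟩
      exact ⟨h1, (cond_iff h1).1 h2⟩
    · rintro ⟨h1, h2⟩
      exact ⟨h1, (cond_iff h1).2 h2⟩
  -- split off x = 0
  rw [show (∑ x : GaloisField 2 (2 * m), f x)
      = f 0 + ∑ x ∈ Finset.univ.erase (0 : GaloisField 2 (2 * m)), f x from
    (Finset.add_sum_erase Finset.univ f (Finset.mem_univ 0)).symm]
  have hf0 : f 0 = 1 := by
    rw [hf]
    norm_num [zero_pow]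
  -- bijection and summand
  have hsum : ∑ x ∈ Finset.univ.erase (0 : GaloisField 2 (2 * m)), f x
      = ∑ z ∈ Sf (GaloisField 2 (2 * m)) m, ((if wz z = 0 then (2:ℤ)^m else 0) - 1) := by
    rw [sum_split hm hF f, Finset.sum_product]
    have hstep : ∀ y ∈ (Kf (GaloisField 2 (2 * m)) m).erase 0,
        ∀ z ∈ Sf (GaloisField 2 (2 * m)) m,
        f (y * z) = eps (trm m (y * wz z)) := by
      intro y hy z hz
      have hy0 : y ≠ 0 := (Finset.mem_erase.1 hy).1
      have hyK : y ^ (2^m) = y := mem_Kf.1 (Finset.mem_erase.1 hy).2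
      have hzS : z * z ^ (2^m) = 1 := mem_Sf.1 hz
      simp only [hf, eps_def, hwz]
      rw [summand_eq hm hF ha hr hyK hy0 hzS]
    rw [Finset.sum_congr rfl (fun y hy => Finset.sum_congr rfl (fun z hz => hstep y hy z hz))]
    rw [Finset.sum_comm]
    refine Finset.sum_congr rfl fun z hz => ?_
    have hwK : (wz z) ^ (2 ^ m) = wz z := w_mem ha hr hF (mem_Sf.1 hz)
    rw [Finset.sum_erase_eq_sub (mem_Kf.2 (by simp [zero_pow]))]
    rw [char_sum hm hF hwK]
    congr 1
    rw [zero_mul, trm_zero]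
    simp [eps]
  rw [hsum, hf0, Finset.sum_sub_distrib, Finset.sum_const, card_Sf hm hF, ← Finset.sum_filter,
    Finset.sum_const, hU]
  simp only [nsmul_eq_mul, smul_eq_mul, mul_one]
  push_cast
  ring
end

section
/- Let p = 2, m ≥ 1, n = 2m, q = 2^n, and d_2 = s_2(2^m-1)+1 with s_2 not ≡ 2^{-1} (mod 2^m+1). Set l = gcd(2 s_2 - 1, 2^m + 1). Then for every (a,b) in F_{2^m} × F_q with (a,b) ≠ (0,0), the sum S(a,b) = Σ_{x in F_q} (-1)^{tr_m(a x^{2^m+1}) + Tr_n(b x^{d_2})} takes a value in the set { -2^m, (l-1) 2^m, (2l-1) 2^m }. -/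
attribute [local instance] Classical.propDecidable

open Finset Polynomial

namespace Stmt17

/-- trace-type sum -/
def trF {F : Type*} [CommRing F] (m : ℕ) (z : F) : F := ∑ i ∈ Finset.range m, z ^ 2 ^ i

set_option linter.unusedSectionVars false
variable {F : Type*} [Field F] [Fintype F]

lemma card_root_le {P : F[X]} (hP : P ≠ 0) {s : Finset F} (h : ∀ z ∈ s, P.IsRoot z) :
    s.card ≤ P.natDegree :=
  calc s.card ≤ P.roots.toFinset.card :=
        Finset.card_le_card (fun z hz => Multiset.mem_toFinset.2
          ((Polynomial.mem_roots hP).2 (h z hz)))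
    _ ≤ Multiset.card P.roots := Multiset.toFinset_card_le _
    _ ≤ P.natDegree := Polynomial.card_roots' P

lemma card_pow_eq_one {k : ℕ} (hk : 0 < k) (hkd : k ∣ Fintype.card F - 1) :
    (Finset.univ.filter fun x : F => x ^ k = 1).card = k := by
  apply le_antisymm
  · have hmon : (X ^ k - C (1:F)).Monic := monic_X_pow_sub_C 1 hk.ne'
    have hdeg : (X ^ k - C (1:F)).natDegree = k := natDegree_X_pow_sub_C
    calc _ ≤ (X ^ k - C (1:F)).natDegree := by
          apply card_root_le hmon.ne_zero
          intro z hz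
          simp only [mem_filter, mem_univ, true_and] at hz
          simp [Polynomial.IsRoot, hz]
      _ = k := hdeg
  · obtain ⟨g, hg⟩ := IsCyclic.exists_generator (α := Fˣ)
    have hog : orderOf g = Fintype.card F - 1 := by
      rw [orderOf_eq_card_of_forall_mem_zpowers hg, Nat.card_eq_fintype_card, Fintype.card_units]
    have hcard1 : 0 < Fintype.card F - 1 := by
      have := Fintype.one_lt_card (α := F)
      omega
    set t : Fˣ := g ^ (orderOf g / k) with ht
    have hot : orderOf t = k := orderOf_pow_orderOf_div (by omega) (hog ▸ hkd)
    have htk : (t : F) ^ k = 1 := by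
      have h1 : t ^ k = 1 := by rw [← hot]; exact pow_orderOf_eq_one t
      calc (t:F)^k = ((t^k : Fˣ) : F) := by push_cast; ring
        _ = 1 := by rw [h1]; rfl
    calc k = (Finset.range k).card := (Finset.card_range k).symm
      _ ≤ _ := by
          apply Finset.card_le_card_of_injOn (fun i => (t : F) ^ i)
          · intro i _
            simp only [Finset.mem_coe, mem_filter, mem_univ, true_and]
            rw [← pow_mul, mul_comm, pow_mul, htk, one_pow]
          · intro i hi j hj hij
            simp only [coe_range, Set.mem_Iio] at hi hj
            have : (t ^ i : Fˣ) = t ^ j := by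
              apply Units.ext; push_cast; exact hij
            exact pow_injOn_Iio_orderOf (by simpa [hot]) (by simpa [hot]) this


section TraceLemmas
variable [CharP F 2] (m : ℕ)

lemma trF_add (x y : F) : trF m (x + y) = trF m x + trF m y := by
  unfold trF
  rw [← Finset.sum_add_distrib]
  exact Finset.sum_congr rfl fun i _ => add_pow_char_pow ..

lemma trF_zero : trF m (0 : F) = 0 := by
  unfold trF
  apply Finset.sum_eq_zero
  intro i _
  exact zero_pow (by positivity)

lemma trF_sq {z : F} (hz : z ^ 2 ^ m = z) : trF m (z * z) = trF m z := by
  unfold trF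
  have h1 : ∀ i : ℕ, (z * z) ^ 2 ^ i = z ^ 2 ^ (i + 1) := by
    intro i
    rw [pow_succ', pow_mul]
    ring
  calc ∑ i ∈ Finset.range m, (z * z) ^ 2 ^ i = ∑ i ∈ Finset.range m, z ^ 2 ^ (i + 1) :=
        Finset.sum_congr rfl fun i _ => h1 i
    _ = ∑ i ∈ Finset.range m, z ^ 2 ^ i := by
        have hs := (Finset.sum_range_succ' (fun i => z ^ 2 ^ i) m).symm.trans
          (Finset.sum_range_succ (fun i => z ^ 2 ^ i) m)
        simp only [pow_zero, pow_one, hz] at hs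
        exact add_right_cancel hs

lemma trF_mem {z : F} (hz : z ^ 2 ^ m = z) : trF m z = 0 ∨ trF m z = 1 := by
  have hsq : trF m z * trF m z = trF m z := by
    have h1 : trF m z * trF m z = trF m z ^ 2 := by ring
    rw [h1]
    have h2 : trF m z ^ 2 = ∑ i ∈ Finset.range m, (z ^ 2 ^ i) ^ 2 := by
      unfold trF; exact sum_pow_char 2 _ _
    have h3 : ∀ i : ℕ, (z ^ 2 ^ i : F) ^ 2 = (z * z) ^ 2 ^ i := by
      intro i; rw [← pow_mul, mul_comm (2^i) 2, pow_mul]; ring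
    rw [h2, Finset.sum_congr rfl fun i _ => h3 i]
    exact trF_sq m hz
  rcases mul_eq_zero.1 (show trF m z * (trF m z - 1) = 0 by rw [mul_sub, mul_one, hsq, sub_self]) with h | h
  · exact Or.inl h
  · exact Or.inr (sub_eq_zero.1 h)

lemma trF_two_mul (z : F) : trF (2 * m) z = trF m z + trF m (z ^ 2 ^ m) := by
  unfold trF
  rw [two_mul, Finset.sum_range_add]
  congr 1
  apply Finset.sum_congr rfl
  intro i _
  rw [← pow_mul, ← pow_add]

end TraceLemmas


section Counting
variable [CharP F 2] {m : ℕ} (hm : 0 < m) (hcard : Fintype.card F = 2 ^ (2 * m))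

lemma two_pow_fact : (2 ^ m - 1) * (2 ^ m + 1) = 2 ^ (2 * m) - 1 := by
  have hQ1 : 1 ≤ 2 ^ m := Nat.one_le_two_pow
  have h2 : (2:ℕ) ^ (2 * m) = 2 ^ m * 2 ^ m := by rw [two_mul, pow_add]
  rw [h2]
  have hq1 : 1 ≤ 2 ^ m * 2 ^ m := Nat.one_le_iff_ne_zero.2 (by positivity)
  zify [hQ1, hq1]
  ring

include hm in
lemma Ks_mem_iff (y : F) : (y ^ 2 ^ m = y ∧ y ≠ 0) ↔ y ^ (2 ^ m - 1) = 1 := by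
  have hQ1 : 1 ≤ 2 ^ m := Nat.one_le_two_pow
  have hQ2 : 2 ≤ 2 ^ m := Nat.one_lt_two_pow_iff.2 hm.ne'
  have hQm : 2 ^ m - 1 + 1 = 2 ^ m := by omega
  constructor
  · rintro ⟨h1, h2⟩
    have : y ^ (2 ^ m - 1) * y = 1 * y := by
      rw [one_mul, ← pow_succ, hQm, h1]
    exact mul_right_cancel₀ h2 this
  · intro h1
    have hy0 : y ≠ 0 := by
      intro h; rw [h, zero_pow (by omega)] at h1; exact one_ne_zero h1.symm
    refine ⟨?_, hy0⟩
    calc y ^ 2 ^ m = y ^ (2 ^ m - 1) * y := by rw [← pow_succ, hQm]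
      _ = y := by rw [h1, one_mul]

include hm hcard in
lemma Ks_card : (Finset.univ.filter fun y : F => y ^ 2 ^ m = y ∧ y ≠ 0).card = 2 ^ m - 1 := by
  have h1 : (Finset.univ.filter fun y : F => y ^ 2 ^ m = y ∧ y ≠ 0)
      = Finset.univ.filter fun y : F => y ^ (2 ^ m - 1) = 1 := by
    apply Finset.filter_congr
    intro y _
    exact Ks_mem_iff hm y
  rw [h1, card_pow_eq_one (Nat.sub_pos_of_lt (Nat.one_lt_two_pow_iff.2 hm.ne'))]
  rw [hcard, ← two_pow_fact]
  exact Dvd.intro _ rfl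

include hm hcard in
lemma K_card : (Finset.univ.filter fun y : F => y ^ 2 ^ m = y).card = 2 ^ m := by
  have hsplit := Finset.card_filter_add_card_filter_not
    (s := Finset.univ.filter fun y : F => y ^ 2 ^ m = y) (p := fun y => y ≠ 0)
  rw [Finset.filter_filter] at hsplit
  have h2 : ((Finset.univ.filter fun y : F => y ^ 2 ^ m = y).filter fun y => ¬ y ≠ 0) = {0} := by
    ext z
    simp only [Finset.mem_filter, Finset.mem_univ, true_and, Finset.mem_singleton, not_not]
    constructor
    · rintro ⟨_, h⟩; exact h
    · rintro rfl; exact ⟨zero_pow (by positivity), rfl⟩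
  rw [h2] at hsplit
  have h3 := Ks_card hm hcard
  have hQ1 : 1 ≤ 2 ^ m := Nat.one_le_two_pow
  simp only [Finset.card_singleton] at hsplit
  omega

include hm hcard in
lemma exists_trF_one : ∃ z0 : F, z0 ^ 2 ^ m = z0 ∧ trF m z0 = 1 := by
  by_contra hcon
  push_neg at hcon
  have hall : ∀ z : F, z ^ 2 ^ m = z → trF m z = 0 := by
    intro z hz
    rcases trF_mem m hz with h | h
    · exact h
    · exact absurd h (hcon z hz)
  set P : F[X] := ∑ i ∈ Finset.range m, X ^ 2 ^ i with hP
  have hP1 : P.coeff 1 = 1 := by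
    rw [hP, Polynomial.finset_sum_coeff]
    rw [Finset.sum_eq_single_of_mem 0 (Finset.mem_range.2 hm)]
    · simp
    · intro i _ hi
      rw [Polynomial.coeff_X_pow]
      have : 2 ^ i ≠ 1 := by
        have := Nat.one_lt_two_pow_iff.2 hi; omega
      simp [this.symm]
  have hPne : P ≠ 0 := by
    intro h; rw [h] at hP1; simp at hP1
  have hdeg : P.natDegree ≤ 2 ^ (m - 1) := by
    apply Polynomial.natDegree_sum_le_of_forall_le
    intro i hi
    rw [Polynomial.natDegree_X_pow]
    exact Nat.pow_le_pow_right (by norm_num) (by simp only [Finset.mem_range] at hi; omega)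
  have hroots : (Finset.univ.filter fun y : F => y ^ 2 ^ m = y).card ≤ P.natDegree := by
    apply card_root_le hPne
    intro z hz
    simp only [Finset.mem_filter, Finset.mem_univ, true_and] at hz
    have : Polynomial.eval z P = trF m z := by
      rw [hP, Polynomial.eval_finset_sum]
      unfold trF
      exact Finset.sum_congr rfl fun i _ => by simp
    rw [Polynomial.IsRoot, this, hall z hz]
  rw [K_card hm hcard] at hroots
  have : 2 ^ (m - 1) < 2 ^ m := Nat.pow_lt_pow_right (by norm_num) (by omega)
  omega

include hm hcard in
lemma sum_eps :
    ∑ z ∈ Finset.univ.filter (fun y : F => y ^ 2 ^ m = y ∧ y ≠ 0),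
      (if trF m z = 0 then (1:ℤ) else -1) = -1 := by
  obtain ⟨z0, hz0K, hz0tr⟩ := exists_trF_one hm hcard
  set K := Finset.univ.filter fun y : F => y ^ 2 ^ m = y with hK
  have hsplit := Finset.sum_filter_add_sum_filter_not K (fun z => z ≠ 0)
    (fun z => if trF m z = 0 then (1:ℤ) else -1)
  have hKfil : K.filter (fun z => z ≠ 0)
      = Finset.univ.filter (fun y : F => y ^ 2 ^ m = y ∧ y ≠ 0) := Finset.filter_filter _ _ _
  have hKfil2 : K.filter (fun z => ¬ z ≠ 0) = {0} := by
    ext z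
    simp only [hK, Finset.filter_filter, Finset.mem_filter, Finset.mem_univ, true_and,
      Finset.mem_singleton, not_not]
    constructor
    · rintro ⟨_, h⟩; exact h
    · rintro rfl; exact ⟨zero_pow (by positivity), rfl⟩
  have hzero : ∑ z ∈ K.filter (fun z => ¬ z ≠ 0), (if trF m z = 0 then (1:ℤ) else -1) = 1 := by
    rw [hKfil2, Finset.sum_singleton, if_pos (trF_zero m)]
  have htotal : ∑ z ∈ K, (if trF m z = 0 then (1:ℤ) else -1) = 0 := by
    rw [Finset.sum_ite, Finset.sum_const, Finset.sum_const]
    have hAB : (K.filter fun z => trF m z = 0).card = (K.filter fun z => ¬ trF m z = 0).card := by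
      apply Finset.card_bij' (i := fun z _ => z + z0) (j := fun z _ => z + z0)
      · intro z hz
        simp only [hK, Finset.mem_filter, Finset.mem_univ, true_and] at hz ⊢
        obtain ⟨hz1, hz2⟩ := hz
        refine ⟨by rw [add_pow_char_pow, hz1, hz0K], ?_⟩
        rw [trF_add, hz2, hz0tr, zero_add]
        exact one_ne_zero
      · intro z hz
        simp only [hK, Finset.mem_filter, Finset.mem_univ, true_and] at hz ⊢
        obtain ⟨hz1, hz2⟩ := hz
        have hz2' : trF m z = 1 := (trF_mem m hz1).resolve_left hz2
        refine ⟨by rw [add_pow_char_pow, hz1, hz0K], ?_⟩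
        rw [trF_add, hz2', hz0tr]
        have : (1 : F) + 1 = 0 := CharTwo.add_self_eq_zero 1
        rw [this]
      · intro z _
        rw [add_assoc, CharTwo.add_self_eq_zero, add_zero]
      · intro z _
        rw [add_assoc, CharTwo.add_self_eq_zero, add_zero]
    rw [hAB]
    push_cast
    ring
  rw [hKfil, hzero] at hsplit
  rw [htotal] at hsplit
  omega

include hm hcard in
lemma inner_sum {g : F} (hg : g ^ 2 ^ m = g) :
    ∑ y ∈ Finset.univ.filter (fun y : F => y ^ 2 ^ m = y ∧ y ≠ 0),
      (if trF m (y * g) = 0 then (1:ℤ) else -1)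
    = if g = 0 then ((2:ℤ) ^ m - 1) else -1 := by
  by_cases hg0 : g = 0
  · rw [if_pos hg0]
    have : ∀ y ∈ Finset.univ.filter (fun y : F => y ^ 2 ^ m = y ∧ y ≠ 0),
        (if trF m (y * g) = 0 then (1:ℤ) else -1) = 1 := by
      intro y _
      rw [hg0, mul_zero, if_pos (trF_zero m)]
    rw [Finset.sum_congr rfl this, Finset.sum_const, Ks_card hm hcard]
    have hQ1 : 1 ≤ 2 ^ m := Nat.one_le_two_pow
    rw [nsmul_eq_mul, Nat.cast_sub hQ1]
    push_cast
    ring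
  · rw [if_neg hg0]
    have heq : ∑ y ∈ Finset.univ.filter (fun y : F => y ^ 2 ^ m = y ∧ y ≠ 0),
        (if trF m (y * g) = 0 then (1:ℤ) else -1)
      = ∑ z ∈ Finset.univ.filter (fun y : F => y ^ 2 ^ m = y ∧ y ≠ 0),
        (if trF m z = 0 then (1:ℤ) else -1) := by
      refine Finset.sum_nbij' (fun y => y * g) (fun z => z * g⁻¹) ?_ ?_ ?_ ?_ ?_
      · intro y hy
        simp only [Finset.mem_filter, Finset.mem_univ, true_and] at hy ⊢
        obtain ⟨hy1, hy2⟩ := hy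
        exact ⟨by rw [mul_pow, hy1, hg], mul_ne_zero hy2 hg0⟩
      · intro z hz
        simp only [Finset.mem_filter, Finset.mem_univ, true_and] at hz ⊢
        obtain ⟨hz1, hz2⟩ := hz
        refine ⟨?_, mul_ne_zero hz2 (inv_ne_zero hg0)⟩
        rw [mul_pow, hz1, inv_pow, hg]
      · intro y _
        field_simp
      · intro z _
        field_simp
      · intro y _
        rfl
    rw [heq, sum_eps hm hcard]

end Counting


theorem main_aux {F : Type*} [Field F] [Fintype F] [CharP F 2] (m s2 : ℕ) (hm : 0 < m)
    (hs2 : 1 ≤ s2) (hcard : Fintype.card F = 2 ^ (2 * m))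
    (a b : F) (ha : a ^ 2 ^ m = a) (hab : ¬(a = 0 ∧ b = 0)) :
    (∑ x : F,
        if (∑ i ∈ Finset.range m, (a * x ^ (2 ^ m + 1)) ^ 2 ^ i) +
            (∑ i ∈ Finset.range (2 * m), (b * x ^ (s2 * (2 ^ m - 1) + 1)) ^ 2 ^ i) = 0
        then (1 : ℤ) else -1) ∈
      ({-2 ^ m, ((Nat.gcd (2 * s2 - 1) (2 ^ m + 1) : ℤ) - 1) * 2 ^ m,
        (2 * (Nat.gcd (2 * s2 - 1) (2 ^ m + 1) : ℤ) - 1) * 2 ^ m} : Set ℤ) := by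
  have hQ1 : 1 ≤ 2 ^ m := Nat.one_le_two_pow
  have hQ2 : 2 ≤ 2 ^ m := Nat.one_lt_two_pow_iff.2 hm.ne'
  have hq2 : (2 : ℕ) ^ (2 * m) = 2 ^ m * 2 ^ m := by rw [two_mul, pow_add]
  have hxq : ∀ x : F, x ^ (2 ^ m * 2 ^ m) = x := by
    intro x
    rw [← hq2, ← hcard]
    exact FiniteField.pow_card x
  set e := 2 * s2 - 1 with he
  set d := s2 * (2 ^ m - 1) + 1 with hd
  set n0 := 2 ^ m + 1 with hn0
  set l := Nat.gcd e n0 with hl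
  have hn0ne : n0 ≠ 0 := by omega
  have hdne : d ≠ 0 := by omega
  have hde : d + e = s2 * n0 := by
    rw [hd, he, hn0]
    have h1 : 1 ≤ 2 * s2 := by omega
    zify [hQ1, h1]
    ring
  set r := a ^ 2 ^ (m - 1) with hr
  have hmm : m - 1 + 1 = m := by omega
  have hrr : r * r = a := by
    rw [hr, ← pow_add]
    have h2 : 2 ^ (m - 1) + 2 ^ (m - 1) = 2 ^ m := by
      calc 2 ^ (m-1) + 2 ^ (m-1) = 2 * 2 ^ (m-1) := by ring
        _ = 2 ^ (m-1+1) := (pow_succ' 2 (m-1)).symm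
        _ = 2 ^ m := by rw [hmm]
    rw [h2, ha]
  have hrK : r ^ 2 ^ m = r := by
    rw [hr, ← pow_mul, mul_comm, pow_mul, ha]
  -- the three key finsets
  set U := Finset.univ.filter (fun u : F => u ^ n0 = 1) with hU
  set Ks := Finset.univ.filter (fun y : F => y ^ 2 ^ m = y ∧ y ≠ 0) with hKs
  set cc : F → F := fun v => r + (b * v ^ 2 ^ m + b ^ 2 ^ m * v) with hcc
  set gg : F → F := fun u => cc (u ^ e) with hgg
  -- cardinalities
  have hUdvd : n0 ∣ Fintype.card F - 1 := by
    rw [hcard, ← two_pow_fact]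
    exact Dvd.intro_left _ rfl
  have hUcard : U.card = n0 := by
    rw [hU]
    exact card_pow_eq_one (by omega) hUdvd
  have hKscard : Ks.card = 2 ^ m - 1 := Ks_card hm hcard
  -- elements of U are nonzero
  have hUne : ∀ u : F, u ^ n0 = 1 → u ≠ 0 := by
    intro u hu h0
    rw [h0, zero_pow hn0ne] at hu
    exact zero_ne_one hu
  -- cc is 2^m-stable
  have hccK : ∀ w : F, (cc w) ^ 2 ^ m = cc w := by
    intro w
    show (r + (b * w ^ 2 ^ m + b ^ 2 ^ m * w)) ^ 2 ^ m = _
    rw [add_pow_char_pow, add_pow_char_pow, hrK, mul_pow, mul_pow, ← pow_mul w, hxq w,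
      ← pow_mul b, hxq b]
    show r + (b ^ 2 ^ m * w + b * w ^ 2 ^ m) = r + (b * w ^ 2 ^ m + b ^ 2 ^ m * w)
    ring
  -- the summand as a trace expression
  show (∑ x : F, if trF m (a * x ^ n0) + trF (2 * m) (b * x ^ d) = 0 then (1:ℤ) else -1) ∈ _
  set N := (U.filter fun u => gg u = 0).card with hN
  -- main sum computation
  have htot : (∑ x : F, if trF m (a * x ^ n0) + trF (2 * m) (b * x ^ d) = 0
      then (1:ℤ) else -1) = ((N : ℤ) - 1) * 2 ^ m := by
    have hsplit0 := Finset.add_sum_erase Finset.univ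
      (fun x : F => if trF m (a * x ^ n0) + trF (2 * m) (b * x ^ d) = 0 then (1:ℤ) else -1)
      (Finset.mem_univ 0)
    have hf0 : (if trF m (a * (0:F) ^ n0) + trF (2 * m) (b * (0:F) ^ d) = 0
        then (1:ℤ) else -1) = 1 := by
      rw [zero_pow hn0ne, zero_pow hdne, mul_zero, mul_zero, trF_zero, trF_zero, add_zero,
        if_pos rfl]
    -- the product decomposition
    have hinj : Set.InjOn (fun p : F × F => p.1 * p.2) ↑(Ks ×ˢ U) := by
      rintro ⟨y1, u1⟩ h1 ⟨y2, u2⟩ h2 h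
      simp only [Finset.coe_product, Set.mem_prod, Finset.mem_coe, hKs, hU,
        Finset.mem_filter, Finset.mem_univ, true_and] at h1 h2
      obtain ⟨⟨hy1, hy1ne⟩, hu1⟩ := h1
      obtain ⟨⟨hy2, hy2ne⟩, hu2⟩ := h2
      simp only at h
      have hpow : ∀ (y u : F), y ^ 2 ^ m = y → u ^ n0 = 1 → (y * u) ^ n0 = y * y := by
        intro y u hy hu
        rw [mul_pow, hu, mul_one, hn0, pow_succ, hy]
      have hsq : y1 * y1 = y2 * y2 := by
        rw [← hpow y1 u1 hy1 hu1, ← hpow y2 u2 hy2 hu2, h]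
      have hy12 : y1 = y2 := by
        apply frobenius_inj F 2
        rw [frobenius_def, frobenius_def, sq, sq, hsq]
      refine Prod.ext hy12 ?_
      simp only
      rw [hy12] at h
      exact mul_left_cancel₀ hy2ne h
    have himg : (Ks ×ˢ U).image (fun p : F × F => p.1 * p.2) = Finset.univ.erase 0 := by
      apply Finset.eq_of_subset_of_card_le
      · intro x hx
        simp only [Finset.mem_image] at hx
        obtain ⟨⟨y, u⟩, hp, rfl⟩ := hx
        simp only [Finset.mem_product, hKs, hU, Finset.mem_filter, Finset.mem_univ,
          true_and] at hp
        exact Finset.mem_erase.2 ⟨mul_ne_zero hp.1.2 (hUne u hp.2), Finset.mem_univ _⟩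
      · rw [Finset.card_image_of_injOn hinj, Finset.card_product, hUcard, hKscard,
          Finset.card_erase_of_mem (Finset.mem_univ 0), Finset.card_univ, hcard, hn0,
          two_pow_fact]
    have hsum2 : ∑ x ∈ Finset.univ.erase (0:F),
        (if trF m (a * x ^ n0) + trF (2 * m) (b * x ^ d) = 0 then (1:ℤ) else -1)
        = ∑ p ∈ Ks ×ˢ U,
          (if trF m (a * (p.1 * p.2) ^ n0) + trF (2 * m) (b * (p.1 * p.2) ^ d) = 0
            then (1:ℤ) else -1) := by
      rw [← himg]
      rw [Finset.sum_image (fun x hx y hy hxy => hinj hx hy hxy)]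
    -- per-element identity
    have hterm : ∀ u ∈ U, ∀ y ∈ Ks,
        (if trF m (a * (y * u) ^ n0) + trF (2 * m) (b * (y * u) ^ d) = 0 then (1:ℤ) else -1)
        = (if trF m (y * gg u) = 0 then (1:ℤ) else -1) := by
      intro u hu y hy
      simp only [hU, Finset.mem_filter, Finset.mem_univ, true_and] at hu
      simp only [hKs, Finset.mem_filter, Finset.mem_univ, true_and] at hy
      obtain ⟨hy1, hy2⟩ := hy
      have hyu_pow : (y * u) ^ n0 = y * y := by
        rw [mul_pow, hu, mul_one, hn0, pow_succ, hy1]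
      have hyQ1 : y ^ (2 ^ m - 1) = 1 := (Ks_mem_iff hm y).1 ⟨hy1, hy2⟩
      have hyd : y ^ d = y := by
        rw [hd, pow_succ, mul_comm s2 _, pow_mul, hyQ1, one_pow, one_mul]
      have hwU : (u ^ e) ^ n0 = 1 := by
        rw [← pow_mul, mul_comm, pow_mul, hu, one_pow]
      have hue_ne : u ^ e ≠ 0 := pow_ne_zero _ (hUne u hu)
      have hud : u ^ d = (u ^ e) ^ 2 ^ m := by
        have h1 : u ^ d * u ^ e = 1 := by
          rw [← pow_add, hde, mul_comm, pow_mul, hu, one_pow]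
        have h2 : (u ^ e) ^ 2 ^ m * u ^ e = 1 := by
          rw [← pow_succ, ← hn0, hwU]
        exact mul_right_cancel₀ hue_ne (h1.trans h2.symm)
      have hterm1 : trF m (a * (y * u) ^ n0) = trF m (r * y) := by
        rw [hyu_pow]
        have h3 : a * (y * y) = (r * y) * (r * y) := by rw [← hrr]; ring
        rw [h3]
        exact trF_sq m (by rw [mul_pow, hrK, hy1])
      have hterm2 : trF (2 * m) (b * (y * u) ^ d)
          = trF m (y * (b * (u ^ e) ^ 2 ^ m + b ^ 2 ^ m * u ^ e)) := by
        rw [mul_pow, hyd, hud, trF_two_mul]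
        have hz : (b * (y * (u ^ e) ^ 2 ^ m)) ^ 2 ^ m = b ^ 2 ^ m * (y * u ^ e) := by
          rw [mul_pow, mul_pow, ← pow_mul (u ^ e), hxq (u ^ e), hy1]
        rw [hz, ← trF_add]
        congr 1
        ring
      have hcond : trF m (a * (y * u) ^ n0) + trF (2 * m) (b * (y * u) ^ d)
          = trF m (y * gg u) := by
        rw [hterm1, hterm2, ← trF_add]
        congr 1
        show r * y + y * (b * (u ^ e) ^ 2 ^ m + b ^ 2 ^ m * u ^ e)
          = y * (r + (b * (u ^ e) ^ 2 ^ m + b ^ 2 ^ m * u ^ e))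
        ring
      rw [hcond]
    -- inner sums
    have hinner : ∀ u ∈ U,
        (∑ y ∈ Ks, if trF m (y * gg u) = 0 then (1:ℤ) else -1)
        = if gg u = 0 then ((2:ℤ) ^ m - 1) else -1 := by
      intro u _
      exact inner_sum hm hcard (g := gg u) (hccK (u ^ e))
    -- assemble
    set M := (U.filter fun u => ¬ gg u = 0).card with hM
    have hNM : N + M = n0 := by
      rw [hN, hM, Finset.card_filter_add_card_filter_not, hUcard]
    have houter : (∑ u ∈ U, if gg u = 0 then ((2:ℤ) ^ m - 1) else -1)
        = (N : ℤ) * ((2:ℤ) ^ m - 1) + (M : ℤ) * (-1) := by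
      rw [Finset.sum_ite, Finset.sum_const, Finset.sum_const, nsmul_eq_mul, nsmul_eq_mul]
    have hNMz : (N : ℤ) + (M : ℤ) = (2:ℤ) ^ m + 1 := by
      have := hNM
      rw [hn0] at this
      exact_mod_cast congrArg (Nat.cast : ℕ → ℤ) this
    calc (∑ x : F, if trF m (a * x ^ n0) + trF (2 * m) (b * x ^ d) = 0 then (1:ℤ) else -1)
        = (if trF m (a * (0:F) ^ n0) + trF (2 * m) (b * (0:F) ^ d) = 0 then (1:ℤ) else -1)
          + ∑ x ∈ Finset.univ.erase (0:F),
            (if trF m (a * x ^ n0) + trF (2 * m) (b * x ^ d) = 0 then (1:ℤ) else -1) :=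
          hsplit0.symm
      _ = 1 + ∑ p ∈ Ks ×ˢ U,
            (if trF m (a * (p.1 * p.2) ^ n0) + trF (2 * m) (b * (p.1 * p.2) ^ d) = 0
              then (1:ℤ) else -1) := by rw [hf0, hsum2]
      _ = 1 + ∑ y ∈ Ks, ∑ u ∈ U,
            (if trF m (a * (y * u) ^ n0) + trF (2 * m) (b * (y * u) ^ d) = 0
              then (1:ℤ) else -1) := by rw [Finset.sum_product]
      _ = 1 + ∑ u ∈ U, ∑ y ∈ Ks,
            (if trF m (a * (y * u) ^ n0) + trF (2 * m) (b * (y * u) ^ d) = 0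
              then (1:ℤ) else -1) := by rw [Finset.sum_comm]
      _ = 1 + ∑ u ∈ U, ∑ y ∈ Ks, (if trF m (y * gg u) = 0 then (1:ℤ) else -1) := by
            congr 1
            exact Finset.sum_congr rfl fun u hu =>
              Finset.sum_congr rfl fun y hy => hterm u hu y hy
      _ = 1 + ∑ u ∈ U, (if gg u = 0 then ((2:ℤ) ^ m - 1) else -1) := by
            congr 1
            exact Finset.sum_congr rfl hinner
      _ = 1 + ((N : ℤ) * ((2:ℤ) ^ m - 1) + (M : ℤ) * (-1)) := by rw [houter]
      _ = ((N : ℤ) - 1) * 2 ^ m := by linear_combination -hNMz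
  -- now the structure of N
  have hldvd_e : l ∣ e := Nat.gcd_dvd_left e n0
  have hldvd_n0 : l ∣ n0 := Nat.gcd_dvd_right e n0
  have hlpos : 0 < l := Nat.gcd_pos_of_pos_right e (by omega)
  set V := U.filter (fun v => cc v = 0) with hV
  have hmaps : ∀ u ∈ U.filter (fun u => gg u = 0), u ^ e ∈ V := by
    intro u hu
    simp only [Finset.mem_filter, hU, Finset.mem_univ, true_and] at hu
    simp only [hV, Finset.mem_filter, hU, Finset.mem_univ, true_and]
    exact ⟨by rw [← pow_mul, mul_comm, pow_mul, hu.1, one_pow], hu.2⟩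
  have hNfib : N = ∑ v ∈ V, (U.filter fun u => u ^ e = v).card := by
    rw [hN, Finset.card_eq_sum_card_fiberwise hmaps]
    apply Finset.sum_congr rfl
    intro v hv
    simp only [hV, Finset.mem_filter] at hv
    congr 1
    ext u
    simp only [Finset.mem_filter, hU, Finset.mem_univ, true_and]
    constructor
    · rintro ⟨⟨h1, _⟩, h3⟩
      exact ⟨h1, h3⟩
    · rintro ⟨h1, h3⟩
      refine ⟨⟨h1, ?_⟩, h3⟩
      show cc (u ^ e) = 0
      rw [h3]
      exact hv.2
  have hUne' : ∀ u : F, u ^ n0 = 1 → u ≠ 0 := hUne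
  have hfib : ∀ v ∈ V, (U.filter fun u => u ^ e = v).card = 0
      ∨ (U.filter fun u => u ^ e = v).card = l := by
    intro v hv
    rcases Finset.eq_empty_or_nonempty (U.filter fun u => u ^ e = v) with hemp | ⟨u0, hu0⟩
    · left
      rw [hemp, Finset.card_empty]
    · right
      simp only [Finset.mem_filter, hU, Finset.mem_univ, true_and] at hu0
      obtain ⟨hu0U, hu0e⟩ := hu0
      have hu0ne : u0 ≠ 0 := hUne u0 hu0U
      have hvne : v ≠ 0 := by
        rw [← hu0e]
        exact pow_ne_zero _ hu0ne
      have hKercard : (Finset.univ.filter fun t : F => t ^ l = 1).card = l :=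
        card_pow_eq_one hlpos (dvd_trans hldvd_n0 hUdvd)
      rw [← hKercard]
      apply Finset.card_bij' (i := fun u _ => u * u0⁻¹) (j := fun t _ => u0 * t)
      · intro u hu
        simp only [Finset.mem_filter, hU, Finset.mem_univ, true_and] at hu
        obtain ⟨huU, hue⟩ := hu
        simp only [Finset.mem_filter, Finset.mem_univ, true_and]
        have hre : (u * u0⁻¹) ^ e = 1 := by
          rw [mul_pow, inv_pow, hue, hu0e, mul_inv_cancel₀ hvne]
        have hrn : (u * u0⁻¹) ^ n0 = 1 := by
          rw [mul_pow, inv_pow, huU, hu0U, inv_one, mul_one]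
        have h1 := orderOf_dvd_of_pow_eq_one hre
        have h2 := orderOf_dvd_of_pow_eq_one hrn
        exact orderOf_dvd_iff_pow_eq_one.1 (Nat.dvd_gcd h1 h2)
      · intro t ht
        simp only [Finset.mem_filter, Finset.mem_univ, true_and] at ht
        simp only [Finset.mem_filter, hU, Finset.mem_univ, true_and]
        have htn : t ^ n0 = 1 := by
          obtain ⟨c, hc⟩ := hldvd_n0
          rw [hc, pow_mul, ht, one_pow]
        have hte : t ^ e = 1 := by
          obtain ⟨c, hc⟩ := hldvd_e
          rw [hc, pow_mul, ht, one_pow]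
        constructor
        · rw [mul_pow, hu0U, htn, mul_one]
        · rw [mul_pow, hu0e, hte, mul_one]
      · intro u _
        rw [mul_comm u u0⁻¹, ← mul_assoc, mul_inv_cancel₀ hu0ne, one_mul]
      · intro t _
        rw [mul_comm u0 t, mul_assoc, mul_inv_cancel₀ hu0ne, mul_one]
  set k := (V.filter fun v => (U.filter fun u => u ^ e = v).card ≠ 0).card with hk
  have hNlk : N = l * k := by
    rw [hNfib, ← Finset.sum_filter_ne_zero]
    have hconst : ∀ v ∈ V.filter (fun v => (U.filter fun u => u ^ e = v).card ≠ 0),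
        (U.filter fun u => u ^ e = v).card = l := by
      intro v hv
      have hv' := Finset.mem_filter.1 hv
      exact (hfib v hv'.1).resolve_left hv'.2
    rw [Finset.sum_congr rfl hconst, Finset.sum_const, smul_eq_mul, ← hk, mul_comm]
  have hV2 : V.card ≤ 2 := by
    by_cases hb : b = 0
    · have hane : a ≠ 0 := fun h => hab ⟨h, hb⟩
      have hrne : r ≠ 0 := by
        rw [hr]
        exact pow_ne_zero _ hane
      have hVempty : V = ∅ := by
        apply Finset.eq_empty_of_forall_notMem
        intro v hv
        simp only [hV, Finset.mem_filter, hU, Finset.mem_univ, true_and] at hv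
        apply hrne
        have := hv.2
        show r = 0
        rw [show cc v = r + (b * v ^ 2 ^ m + b ^ 2 ^ m * v) from rfl, hb] at this
        have hQne : (2:ℕ) ^ m ≠ 0 := by positivity
        rw [zero_mul, zero_pow hQne, zero_mul, add_zero, add_zero] at this
        exact this
      rw [hVempty, Finset.card_empty]
      omega
    · set P : F[X] := Polynomial.C (b ^ 2 ^ m) * Polynomial.X ^ 2
        + Polynomial.C r * Polynomial.X + Polynomial.C b with hP
      have hPdeg : P.natDegree = 2 := Polynomial.natDegree_quadratic (pow_ne_zero _ hb)
      have hPne : P ≠ 0 := fun h => by rw [h] at hPdeg; simp at hPdeg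
      have hroots : ∀ v ∈ V, P.IsRoot v := by
        intro v hv
        simp only [hV, Finset.mem_filter, hU, Finset.mem_univ, true_and] at hv
        obtain ⟨hvU, hvc⟩ := hv
        have hvc' : r + (b * v ^ 2 ^ m + b ^ 2 ^ m * v) = 0 := hvc
        have hv1 : v ^ 2 ^ m * v = 1 := by
          rw [← pow_succ, ← hn0, hvU]
        show P.eval v = 0
        rw [hP]
        simp only [Polynomial.eval_add, Polynomial.eval_mul, Polynomial.eval_pow,
          Polynomial.eval_C, Polynomial.eval_X]
        linear_combination v * hvc' - b * hv1
      have := card_root_le hPne hroots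
      rwa [hPdeg] at this
  have hk2 : k ≤ 2 := le_trans (Finset.card_filter_le _ _) hV2
  rw [htot, hNlk]
  simp only [Set.mem_insert_iff, Set.mem_singleton_iff]
  interval_cases k
  · left
    push_cast
    ring
  · right; left
    push_cast
    ring
  · right; right
    push_cast
    ring

end Stmt17

/-- for `q = 2^{2m}`, `d₂ = s₂(2^m-1)+1` with `s₂ ≢ 2⁻¹ (mod 2^m+1)`
(i.e. `2s₂ ≢ 1`), `l = gcd(2s₂-1, 2^m+1)`, `a ∈ F_{2^m}` and `b ∈ F_q` with
`(a,b) ≠ (0,0)`, the sum `S(a,b) = Σ_{x∈F_q} (-1)^{tr_m(a x^{2^m+1}) + Tr_n(b x^{d₂})}`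
lies in `{-2^m, (l-1)·2^m, (2l-1)·2^m}`.  Traces are computed as `Σ_{i<m} y^{2^i}`
resp. `Σ_{i<2m} y^{2^i}` with values in the prime field `{0,1} ⊆ F_q`. -/
theorem stmt_17 (m s2 : ℕ) (hm : 0 < m) (hs2 : 1 ≤ s2)
    (hs2' : ¬ 2 * s2 ≡ 1 [MOD 2 ^ m + 1])
    (a b : GaloisField 2 (2 * m)) (ha : a ^ (2 ^ m) = a)
    (hab : ¬ (a = 0 ∧ b = 0)) :
    (∑ x : GaloisField 2 (2 * m),
        if (∑ i ∈ Finset.range m, (a * x ^ (2 ^ m + 1)) ^ (2 ^ i)) +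
            (∑ i ∈ Finset.range (2 * m),
              (b * x ^ (s2 * (2 ^ m - 1) + 1)) ^ (2 ^ i)) = 0
        then (1 : ℤ) else -1) ∈
      ({-2 ^ m, ((Nat.gcd (2 * s2 - 1) (2 ^ m + 1) : ℤ) - 1) * 2 ^ m,
        (2 * (Nat.gcd (2 * s2 - 1) (2 ^ m + 1) : ℤ) - 1) * 2 ^ m} : Set ℤ) := by
  have hcard : Fintype.card (GaloisField 2 (2 * m)) = 2 ^ (2 * m) := by
    have h := GaloisField.card 2 (2 * m) (by omega)
    rwa [Nat.card_eq_fintype_card] at h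
  exact Stmt17.main_aux m s2 hm hs2 hcard a b ha hab
end

section
/- Let p be an odd prime, m ≥ 1, n = 2m, q = p^n. Let d_1 = s_1(p^m-1)+1, d_2 = s_2(p^m-1)+1 be Niho exponents. For a, b in F_q and λ in F_p^*, define T_2(a,b) = Σ_{x in F_q} ζ_p^{Tr(a x^{d_1} + b x^{d_2})} where ζ_p = e^{2πi/p} and Tr is the absolute trace F_q → F_p. Then for all λ in F_p^*, T_2(λa, λb) = (W(a,b) - 1) p^m, where W(a,b) is the number of u in S = {u in F_q : u * u^{p^m} = 1} satisfying b^{p^m} u^{2s_2-1} + a^{p^m} u^{s_1+s_2-1} + a u^{s_2-s_1} + b = 0. In particular T_2(λa, λb) is independent of λ in F_p^* and is an integer multiple of p^m minus p^m. -/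
open Finset Polynomial

private lemma zeta_pow_nat (p : ℕ) (hp : p ≠ 0) (k : ℕ) :
    Complex.exp (2 * Real.pi * Complex.I / p) ^ k =
      Complex.exp (2 * Real.pi * Complex.I / p) ^ (k % p) := by
  conv_lhs => rw [← Nat.mod_add_div k p]
  rw [pow_add, pow_mul, (Complex.isPrimitiveRoot_exp p hp).pow_eq_one, one_pow, mul_one]

private lemma zeta_add (p : ℕ) [NeZero p] (s t : ZMod p) :
    Complex.exp (2 * Real.pi * Complex.I / p) ^ (s + t).val =
      Complex.exp (2 * Real.pi * Complex.I / p) ^ s.val *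
      Complex.exp (2 * Real.pi * Complex.I / p) ^ t.val := by
  rw [← pow_add, ZMod.val_add, ← zeta_pow_nat p (NeZero.ne p)]

private lemma zeta_eq_one_iff (p : ℕ) [NeZero p] (t : ZMod p) :
    Complex.exp (2 * Real.pi * Complex.I / p) ^ t.val = 1 ↔ t = 0 := by
  constructor
  · intro h
    have hd := ((Complex.isPrimitiveRoot_exp p (NeZero.ne p)).pow_eq_one_iff_dvd _).mp h
    have hlt := ZMod.val_lt t
    have h0 : t.val = 0 := Nat.eq_zero_of_dvd_of_lt hd hlt
    exact (ZMod.val_eq_zero t).mp h0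
  · rintro rfl; simp

private noncomputable def frobAlg (p n : ℕ) [Fact p.Prime] :
    GaloisField p n ≃ₐ[ZMod p] GaloisField p n :=
  AlgEquiv.ofBijective
    { toRingHom := frobenius (GaloisField p n) p,
      commutes' := fun c => by
        show frobenius (GaloisField _ _) _ _ = _
        rw [frobenius_def, ← map_pow, ZMod.pow_card] }
    (Finite.injective_iff_bijective.mp (frobenius (GaloisField p n) p).injective)

private lemma tr_frob (p n : ℕ) [Fact p.Prime] (z : GaloisField p n) :
    Algebra.trace (ZMod p) (GaloisField p n) (z ^ p) =
      Algebra.trace (ZMod p) (GaloisField p n) z := by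
  have h := Algebra.trace_eq_of_algEquiv (frobAlg p n) z
  have h2 : frobAlg p n z = z ^ p := rfl
  rw [h2] at h
  exact h

private lemma tr_frob_pow (p n : ℕ) [Fact p.Prime] (k : ℕ) (z : GaloisField p n) :
    Algebra.trace (ZMod p) (GaloisField p n) (z ^ p ^ k) =
      Algebra.trace (ZMod p) (GaloisField p n) z := by
  induction k with
  | zero => simp
  | succ k ih => rw [pow_succ, pow_mul, tr_frob, ih]


private lemma card_nthRootsFinset_of_dvd {F : Type*} [Field F] [Fintype F] [DecidableEq F]
    {d : ℕ} (hdvd : d ∣ Fintype.card F - 1) :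
    (Polynomial.nthRootsFinset d (1 : F)).card = d := by
  obtain ⟨g, hg⟩ := IsCyclic.exists_generator (α := Fˣ)
  have hog : orderOf g = Fintype.card F - 1 := by
    rw [orderOf_eq_card_of_forall_mem_zpowers hg, Nat.card_eq_fintype_card,
      Fintype.card_units]
  obtain ⟨c, hc⟩ := hdvd
  have hcard1 : 0 < Fintype.card F - 1 := by
    have := Fintype.one_lt_card (α := F)
    omega
  have hc0 : 0 < c := by
    rcases Nat.eq_zero_or_pos c with h | h
    · subst h; omega
    · exact h
  have hord : orderOf (g ^ c) = d := by
    rw [orderOf_pow, hog, hc, Nat.gcd_eq_right (Dvd.intro_left d rfl),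
      Nat.mul_div_cancel _ hc0]
  have hprim : IsPrimitiveRoot ((g ^ c : Fˣ) : F) d := by
    have h1 : IsPrimitiveRoot (g ^ c) (orderOf (g ^ c)) := IsPrimitiveRoot.orderOf _
    rw [hord] at h1
    exact IsPrimitiveRoot.coe_units_iff.mpr h1
  exact hprim.card_nthRootsFinset


private lemma exists_tr_ne_zero (p n : ℕ) [Fact p.Prime] :
    ∃ y : GaloisField p n, Algebra.trace (ZMod p) (GaloisField p n) y ≠ 0 := by
  by_contra hall
  push_neg at hall
  apply Algebra.trace_ne_zero (ZMod p) (GaloisField p n)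
  ext y
  simp [hall]

set_option maxHeartbeats 2000000

/-- `p` an odd prime, `q = p^{2m}`, Niho exponents `dᵢ = sᵢ(p^m-1)+1`.
For `a, b ∈ F_q` and any `λ ∈ F_p^*`,
`T₂(λa, λb) = Σ_{x∈F_q} ζ_p^{Tr(λa x^{d₁} + λb x^{d₂})} = (W(a,b) - 1)·p^m`,
where `ζ_p = exp(2πi/p)`, `Tr` is the absolute trace, and `W(a,b)` is the number of
`u ∈ S = {u : u·u^{p^m} = 1}` with
`b̄ u^{2s₂-1} + ā u^{s₁+s₂-1} + a u^{s₂-s₁} + b = 0` (`x̄ = x^{p^m}`, exponents of `u`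
taken as integers, via inverses in `S` when negative).  In particular the value is
independent of `λ`. -/
theorem stmt_18 (p m s1 s2 : ℕ) [Fact p.Prime] (hp : Odd p) (hm : 0 < m)
    (a b : GaloisField p (2 * m)) (lam : ZMod p) (hlam : lam ≠ 0) :
    (∑ x : GaloisField p (2 * m),
        Complex.exp (2 * Real.pi * Complex.I / p) ^
          (Algebra.trace (ZMod p) (GaloisField p (2 * m))
            (algebraMap (ZMod p) (GaloisField p (2 * m)) lam * a *
                x ^ (s1 * (p ^ m - 1) + 1) +
              algebraMap (ZMod p) (GaloisField p (2 * m)) lam * b *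
                x ^ (s2 * (p ^ m - 1) + 1))).val) =
    ((Nat.card {u : GaloisField p (2 * m) // u * u ^ (p ^ m) = 1 ∧
        b ^ (p ^ m) * u ^ (2 * (s2 : ℤ) - 1) +
          a ^ (p ^ m) * u ^ ((s1 : ℤ) + (s2 : ℤ) - 1) +
          a * u ^ ((s2 : ℤ) - (s1 : ℤ)) + b = 0} : ℂ) - 1) * (p : ℂ) ^ m := by
  classical
  have hp' : p.Prime := Fact.out
  have hp2 : p ≠ 2 := by
    rintro rfl
    rw [Nat.odd_iff] at hp
    omega
  have hp3 : 3 ≤ p := by have := hp'.two_le; omega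
  have hp0 : p ≠ 0 := hp'.ne_zero
  revert a b
  set F := GaloisField p (2 * m) with hFdef
  intro a b
  set ζ : ℂ := Complex.exp (2 * Real.pi * Complex.I / p) with hzeta
  set Tr : F → ZMod p := fun z => Algebra.trace (ZMod p) F z with hTrdef
  have hQ3 : 3 ≤ p ^ m := le_trans hp3 (Nat.le_self_pow hm.ne' p)
  set Q := p ^ m with hQdef
  set d := Q - 1 with hddef
  have hd1 : d + 1 = Q := by omega
  have hd0 : 0 < d := by omega
  have hcard : Fintype.card F = Q ^ 2 := by
    rw [← Nat.card_eq_fintype_card, GaloisField.card p (2 * m) (by omega), hQdef,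
      ← pow_mul, mul_comm]
  have hfac : d * (Q + 1) = Q ^ 2 - 1 := by
    obtain ⟨k, hk⟩ : ∃ k, Q = k + 1 := ⟨Q - 1, by omega⟩
    have h1 : (k + 1) ^ 2 = k * (k + 2) + 1 := by ring
    rw [hddef, hk]
    show k * (k + 2) = (k + 1) ^ 2 - 1
    rw [h1, Nat.add_sub_cancel]
  -- the subfield with Q elements, as a finset
  set K0 : Finset F := Polynomial.nthRootsFinset d (1 : F) with hK0def
  set Kf : Finset F := insert 0 K0 with hKfdef
  have hmemK0 : ∀ y : F, y ∈ K0 ↔ y ^ d = 1 := fun y => Polynomial.mem_nthRootsFinset hd0 (1 : F)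
  have h0K0 : (0 : F) ∉ K0 := by
    rw [hmemK0]
    rw [zero_pow hd0.ne']
    exact fun h => one_ne_zero h.symm
  have hmemKf : ∀ y : F, y ∈ Kf ↔ y ^ Q = y := by
    intro y
    rw [hKfdef, Finset.mem_insert, hmemK0]
    constructor
    · rintro (rfl | h)
      · exact zero_pow (by omega)
      · rw [← hd1, pow_succ, h, one_mul]
    · intro h
      rcases eq_or_ne y 0 with rfl | hy0
      · exact Or.inl rfl
      · right
        have : y ^ d * y = 1 * y := by rw [← pow_succ, hd1, h, one_mul]
        exact mul_right_cancel₀ hy0 this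
  have hcardK0 : K0.card = d :=
    card_nthRootsFinset_of_dvd (by rw [hcard]; exact ⟨Q + 1, hfac.symm⟩)
  have hcardKf : Kf.card = Q := by
    rw [hKfdef, Finset.card_insert_of_notMem h0K0, hcardK0]
    omega
  -- trace lemmas
  have htrQ : ∀ z : F, Tr (z ^ Q) = Tr z := fun z => tr_frob_pow p (2 * m) m z
  have htwo : (2 : ZMod p) ≠ 0 := by
    intro h
    have : ((2 : ℕ) : ZMod p) = 0 := by exact_mod_cast h
    rw [ZMod.natCast_eq_zero_iff] at this
    have := Nat.le_of_dvd (by norm_num) this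
    omega
  have htr_eigen : ∀ z : F, z ^ Q = -z → Tr z = 0 := by
    intro z hz
    have h1 : Tr z = -Tr z := by
      conv_lhs => rw [← htrQ z, hz]
      show Algebra.trace (ZMod p) F (-z) = _
      rw [map_neg]
    have h2 : (2 : ZMod p) * Tr z = 0 := by
      rw [two_mul]
      nth_rewrite 1 [h1]
      ring
    rcases mul_eq_zero.mp h2 with h | h
    · exact absurd h htwo
    · exact h
  have hexk : ∃ k : F, k ^ Q = k ∧ Tr k ≠ 0 := by
    obtain ⟨y, hy⟩ := exists_tr_ne_zero p (2 * m)
    refine ⟨y + y ^ Q, ?_, ?_⟩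
    · have hyQ2 : (y ^ Q) ^ Q = y := by
        rw [← pow_mul, ← pow_two, ← hcard]
        exact FiniteField.pow_card y
      rw [hQdef, add_pow_char_pow, ← hQdef, hyQ2, add_comm]
    · have : Tr (y + y ^ Q) = 2 * Tr y := by
        show Algebra.trace (ZMod p) F _ = _
        rw [map_add]
        show Tr y + Tr (y ^ Q) = _
        rw [htrQ, two_mul]
      rw [this]
      exact mul_ne_zero htwo hy
  -- the key character sum over the subfield
  haveI : NeZero p := ⟨hp0⟩
  have hchar : ∀ w : F,
      (∑ y ∈ Kf, ζ ^ (Tr (w * y)).val) = if w ^ Q = -w then (Q : ℂ) else 0 := by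
    intro w
    by_cases hw : w ^ Q = -w
    · rw [if_pos hw]
      have hterm : ∀ y ∈ Kf, ζ ^ (Tr (w * y)).val = 1 := by
        intro y hy
        have h1 : (w * y) ^ Q = -(w * y) := by
          rw [mul_pow, hw, (hmemKf y).mp hy]; ring
        rw [htr_eigen _ h1]
        simp
      rw [Finset.sum_congr rfl hterm, Finset.sum_const, hcardKf]
      simp
    · rw [if_neg hw]
      set v := w ^ Q + w with hvdef
      have hv0 : v ≠ 0 := fun h => hw (eq_neg_of_add_eq_zero_left h)
      have hvK : v ^ Q = v := by
        have hwQ2 : (w ^ Q) ^ Q = w := by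
          rw [← pow_mul, ← pow_two, ← hcard]
          exact FiniteField.pow_card w
        rw [hvdef, hQdef, add_pow_char_pow, ← hQdef, hwQ2, add_comm]
      obtain ⟨k, hkK, hktr⟩ := hexk
      set y₀ := v⁻¹ * k with hy0def
      have hy0K : y₀ ^ Q = y₀ := by
        rw [hy0def, mul_pow, inv_pow, hvK, hkK]
      have hvy0 : v * y₀ = k := by
        rw [hy0def, ← mul_assoc, mul_inv_cancel₀ hv0, one_mul]
      have htr2 : Tr k = 2 * Tr (w * y₀) := by
        have h1 : Tr (w ^ Q * y₀) = Tr (w * y₀) := by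
          have h2 : (w * y₀) ^ Q = w ^ Q * y₀ := by rw [mul_pow, hy0K]
          rw [← h2, htrQ]
        have h3 : k = w ^ Q * y₀ + w * y₀ := by rw [← hvy0, hvdef]; ring
        rw [h3]
        show Algebra.trace (ZMod p) F _ = _
        rw [map_add]
        show Tr (w ^ Q * y₀) + Tr (w * y₀) = _
        rw [h1]; ring
      have htr0 : Tr (w * y₀) ≠ 0 := by
        intro h
        rw [h, mul_zero] at htr2
        exact hktr htr2
      set S := ∑ y ∈ Kf, ζ ^ (Tr (w * y)).val with hSdef
      have hshift : ζ ^ (Tr (w * y₀)).val * S = S := by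
        rw [hSdef, Finset.mul_sum]
        have hterm : ∀ y ∈ Kf,
            ζ ^ (Tr (w * y₀)).val * ζ ^ (Tr (w * y)).val = ζ ^ (Tr (w * (y₀ + y))).val := by
          intro y hy
          rw [hzeta, ← zeta_add]
          congr 1
          have : Tr (w * (y₀ + y)) = Tr (w * y₀) + Tr (w * y) := by
            have h4 : w * (y₀ + y) = w * y₀ + w * y := by ring
            rw [h4]
            exact map_add (Algebra.trace (ZMod p) F) _ _
          rw [this]
        rw [Finset.sum_congr rfl hterm]
        refine Finset.sum_nbij' (fun y => y₀ + y) (fun y => y - y₀) ?_ ?_ ?_ ?_ ?_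
        · intro y hy
          rw [hmemKf] at hy ⊢
          rw [hQdef, add_pow_char_pow, ← hQdef, hy0K, hy]
        · intro y hy
          rw [hmemKf] at hy ⊢
          rw [hQdef, sub_pow_char_pow, ← hQdef, hy0K, hy]
        · intro y _; ring
        · intro y _; ring
        · intro y _; rfl
      have hne1 : ζ ^ (Tr (w * y₀)).val ≠ 1 := by
        rw [hzeta]
        intro h
        exact htr0 ((zeta_eq_one_iff p _).mp h)
      have hfin : (ζ ^ (Tr (w * y₀)).val - 1) * S = 0 := by
        rw [sub_mul, one_mul, hshift, sub_self]
      rcases mul_eq_zero.mp hfin with h | h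
      · exact absurd (by rwa [sub_eq_zero] at h) hne1
      · exact h
  -- abbreviations for the coefficients
  set lam' : F := algebraMap (ZMod p) F lam with hlamdef
  have hlam'0 : lam' ≠ 0 := by
    rw [hlamdef]
    exact fun h => hlam ((map_eq_zero_iff _ (algebraMap (ZMod p) F).injective).mp h)
  have hlamQ : lam' ^ Q = lam' := by
    rw [hlamdef, hQdef, ← map_pow, ZMod.pow_card_pow]
  set P : F → F := fun v => b ^ Q * v ^ (2 * (s2 : ℤ) - 1) +
      a ^ Q * v ^ ((s1 : ℤ) + (s2 : ℤ) - 1) + a * v ^ ((s2 : ℤ) - (s1 : ℤ)) + b with hPdef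
  set f : F → ℂ :=
    fun x => ζ ^ (Tr (lam' * a * x ^ (s1 * d + 1) + lam' * b * x ^ (s2 * d + 1))).val with hfdef
  -- nonzero elements and the power map fibration
  set s0 : Finset F := Finset.univ.erase 0 with hs0def
  have hcs0 : s0.card = Q ^ 2 - 1 := by
    rw [hs0def, Finset.card_erase_of_mem (Finset.mem_univ 0), Finset.card_univ, hcard]
  set U : Finset F := s0.image (fun x => x ^ d) with hUdef
  have hfiber : ∀ x₀ : F, x₀ ≠ 0 →
      s0.filter (fun x => x ^ d = x₀ ^ d) = K0.image (fun y => x₀ * y) := by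
    intro x₀ hx₀
    ext x
    constructor
    · intro hx
      obtain ⟨hxs, hxd⟩ := Finset.mem_filter.mp hx
      have hx0 : x ≠ 0 := (Finset.mem_erase.mp hxs).1
      refine Finset.mem_image.mpr ⟨x₀⁻¹ * x, ?_, ?_⟩
      · rw [hmemK0, mul_pow, inv_pow, hxd, inv_mul_cancel₀ (pow_ne_zero _ hx₀)]
      · rw [← mul_assoc, mul_inv_cancel₀ hx₀, one_mul]
    · intro hx
      obtain ⟨y, hy, rfl⟩ := Finset.mem_image.mp hx
      rw [hmemK0] at hy
      have hy0 : y ≠ 0 := by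
        intro h
        rw [h, zero_pow hd0.ne'] at hy
        exact one_ne_zero hy.symm
      refine Finset.mem_filter.mpr ⟨?_, ?_⟩
      · exact Finset.mem_erase.mpr ⟨mul_ne_zero hx₀ hy0, Finset.mem_univ _⟩
      · rw [mul_pow, hy, mul_one]
  -- each fiber has d elements
  have hfibcard : ∀ u ∈ U, (s0.filter (fun x => x ^ d = u)).card = d := by
    intro u hu
    obtain ⟨x₀, hx₀s, hx₀d⟩ := Finset.mem_image.mp hu
    have hx₀ : x₀ ≠ 0 := (Finset.mem_erase.mp hx₀s).1
    have hfs : s0.filter (fun x => x ^ d = u) = K0.image (fun y => x₀ * y) := by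
      rw [← hx₀d]; exact hfiber x₀ hx₀
    rw [hfs, Finset.card_image_of_injective _ (mul_right_injective₀ hx₀), hcardK0]
  -- cardinality of the image
  have hUcard : U.card = Q + 1 := by
    have h1 : s0.card = ∑ u ∈ U, (s0.filter (fun x => x ^ d = u)).card :=
      Finset.card_eq_sum_card_fiberwise (fun x hx => Finset.mem_image_of_mem _ hx)
    rw [Finset.sum_congr rfl hfibcard, Finset.sum_const, smul_eq_mul, hcs0] at h1
    have h2 : U.card * d = (Q + 1) * d := by
      rw [← h1, ← hfac, mul_comm]
    exact Nat.eq_of_mul_eq_mul_right hd0 h2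
  -- membership in U
  have hUpow : ∀ u ∈ U, u ^ (Q + 1) = 1 := by
    intro u hu
    obtain ⟨x₀, hx₀s, hx₀d⟩ := Finset.mem_image.mp hu
    have hx₀ : x₀ ≠ 0 := (Finset.mem_erase.mp hx₀s).1
    rw [← hx₀d, ← pow_mul, hfac, ← hcard]
    exact FiniteField.pow_card_sub_one_eq_one x₀ hx₀
  have hUmem : ∀ u : F, u ∈ U ↔ u ^ (Q + 1) = 1 := by
    have hsub : U ⊆ Polynomial.nthRootsFinset (Q + 1) (1 : F) := by
      intro u hu
      exact (Polynomial.mem_nthRootsFinset (by omega) (1 : F)).mpr (hUpow u hu)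
    have hcardRU : (Polynomial.nthRootsFinset (Q + 1) (1 : F)).card = Q + 1 :=
      card_nthRootsFinset_of_dvd (by rw [hcard]; exact ⟨d, by rw [← hfac]; ring⟩)
    have hUeq : U = Polynomial.nthRootsFinset (Q + 1) (1 : F) :=
      Finset.eq_of_subset_of_card_le hsub (by rw [hcardRU, hUcard])
    intro u
    rw [hUeq, Polynomial.mem_nthRootsFinset (by omega : 0 < Q + 1)]
  -- the inner sums
  have hinner : ∀ u ∈ U, (∑ x ∈ s0.filter (fun x => x ^ d = u), f x)
      = (if P u⁻¹ = 0 then (Q : ℂ) else 0) - 1 := by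
    intro u hu
    obtain ⟨x₀, hx₀s, hx₀d⟩ := Finset.mem_image.mp hu
    have hx₀ : x₀ ≠ 0 := (Finset.mem_erase.mp hx₀s).1
    have hu0 : u ≠ 0 := by rw [← hx₀d]; exact pow_ne_zero _ hx₀
    have huQ1 : u ^ (Q + 1) = 1 := hUpow u hu
    have huQ : u ^ Q = u⁻¹ :=
      eq_inv_of_mul_eq_one_left (by rw [← pow_succ, huQ1])
    have hx₀Q : x₀ ^ Q = x₀ * u := by
      rw [← hd1, pow_succ, hx₀d, mul_comm]
    set w : F := x₀ * (lam' * a * u ^ s1 + lam' * b * u ^ s2) with hwdef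
    have hfs : s0.filter (fun x => x ^ d = u) = K0.image (fun y => x₀ * y) := by
      rw [← hx₀d]; exact hfiber x₀ hx₀
    rw [hfs, Finset.sum_image (fun y _ z _ h => mul_left_cancel₀ hx₀ h)]
    have hterm : ∀ y ∈ K0, f (x₀ * y) = ζ ^ (Tr (w * y)).val := by
      intro y hy
      have hyd : y ^ d = 1 := (hmemK0 y).mp hy
      have hpow : ∀ s : ℕ, (x₀ * y) ^ (s * d + 1) = x₀ * y * u ^ s := by
        intro s
        calc (x₀ * y) ^ (s * d + 1) = ((x₀ * y) ^ d) ^ s * (x₀ * y) := by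
              rw [pow_add, pow_one, mul_comm s d, pow_mul]
          _ = x₀ * y * u ^ s := by rw [mul_pow, hyd, mul_one, hx₀d, mul_comm]
      have harg : lam' * a * (x₀ * y) ^ (s1 * d + 1) + lam' * b * (x₀ * y) ^ (s2 * d + 1)
          = w * y := by
        rw [hpow s1, hpow s2, hwdef]; ring
      rw [hfdef]
      show ζ ^ (Tr (lam' * a * (x₀ * y) ^ (s1 * d + 1) +
        lam' * b * (x₀ * y) ^ (s2 * d + 1))).val = _
      rw [harg]
    rw [Finset.sum_congr rfl hterm]
    have hK0Kf : (∑ y ∈ K0, ζ ^ (Tr (w * y)).val)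
        = (∑ y ∈ Kf, ζ ^ (Tr (w * y)).val) - 1 := by
      rw [hKfdef, Finset.sum_insert h0K0]
      have h0 : Tr (w * 0) = 0 := by
        show Algebra.trace (ZMod p) F (w * 0) = 0
        rw [mul_zero, map_zero]
      rw [h0]
      simp
    rw [hK0Kf, hchar w]
    -- condition equivalence
    have hwQ : w ^ Q = x₀ * u * (lam' * a ^ Q * (u⁻¹) ^ s1 + lam' * b ^ Q * (u⁻¹) ^ s2) := by
      rw [hwdef, mul_pow, hx₀Q, hQdef, add_pow_char_pow, ← hQdef]
      congr 1
      rw [mul_pow, mul_pow, mul_pow, mul_pow, hlamQ, ← pow_mul, mul_comm s1 Q, pow_mul, huQ,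
        ← pow_mul, mul_comm s2 Q, pow_mul, huQ]
    have hcond : (w ^ Q = -w) ↔ P u⁻¹ = 0 := by
      rw [eq_neg_iff_add_eq_zero]
      have hexpand : w ^ Q + w = lam' * x₀ * (u ^ (s2 : ℤ) * P u⁻¹) := by
        rw [hwQ, hwdef, hPdef]
        have h2s : (2 * (s2 : ℤ) - 1) = (s2 : ℤ) + (s2 : ℤ) - 1 := by ring
        simp only [inv_zpow, h2s, zpow_sub₀ hu0, zpow_add₀ hu0, zpow_one, zpow_natCast,
          inv_pow]
        set X := u ^ s1 with hXdef
        set Y := u ^ s2 with hYdef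
        have hX0 : X ≠ 0 := pow_ne_zero _ hu0
        have hY0 : Y ≠ 0 := pow_ne_zero _ hu0
        field_simp
        have hXi : X * X⁻¹ = 1 := mul_inv_cancel₀ hX0
        have hYi : Y * Y⁻¹ = 1 := mul_inv_cancel₀ hY0
        linear_combination (-(x₀ * u * lam' * a ^ Q * X⁻¹ * (1 + Y * Y⁻¹) +
          x₀ * u * lam' * b ^ Q * Y⁻¹ * (X * X⁻¹) +
          (x₀ * lam' * a * X + x₀ * lam' * b * Y) * (X * X⁻¹) * (1 + Y * Y⁻¹))) * hYi +
          (-(x₀ * u * lam' * b ^ Q * Y⁻¹ + x₀ * lam' * a * X + x₀ * lam' * b * Y)) * hXi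
      rw [hexpand]
      constructor
      · intro h
        rcases mul_eq_zero.mp h with h1 | h1
        · exact absurd h1 (mul_ne_zero hlam'0 hx₀)
        · rcases mul_eq_zero.mp h1 with h2 | h2
          · exact absurd h2 (zpow_ne_zero _ hu0)
          · exact h2
      · intro h
        rw [h, mul_zero, mul_zero]
    rw [if_congr hcond rfl rfl]
  -- assemble the full sum
  have hsum0 : (∑ x ∈ s0, f x) = ∑ u ∈ U, ∑ x ∈ s0.filter (fun x => x ^ d = u), f x :=
    (Finset.sum_fiberwise_of_maps_to (fun x hx => Finset.mem_image_of_mem _ hx) f).symm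
  set N : ℕ := (U.filter (fun u => P u⁻¹ = 0)).card with hNdef
  have hTval : (∑ x ∈ s0, f x) = (N : ℂ) * (Q : ℂ) - ((Q : ℂ) + 1) := by
    rw [hsum0, Finset.sum_congr rfl hinner, Finset.sum_sub_distrib, Finset.sum_const]
    rw [← Finset.sum_filter, Finset.sum_const, hUcard, hNdef]
    simp only [nsmul_eq_mul, smul_eq_mul, mul_one]
    push_cast
    ring
  -- the zero term
  have hf0 : f 0 = 1 := by
    rw [hfdef]
    show ζ ^ (Tr (lam' * a * (0 : F) ^ (s1 * d + 1) + lam' * b * (0 : F) ^ (s2 * d + 1))).val = 1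
    rw [zero_pow (by omega : s1 * d + 1 ≠ 0), zero_pow (by omega : s2 * d + 1 ≠ 0),
      mul_zero, mul_zero, add_zero]
    have h0 : Tr (0 : F) = 0 := by
      show Algebra.trace (ZMod p) F 0 = 0
      rw [map_zero]
    rw [h0]
    simp
  have htotal : (∑ x : F, f x) = ((N : ℂ) - 1) * (Q : ℂ) := by
    rw [← Finset.add_sum_erase Finset.univ f (Finset.mem_univ 0), ← hs0def, hf0, hTval]
    ring
  -- identify N with the Nat.card
  have hWN : Nat.card {u : F // u * u ^ Q = 1 ∧ P u = 0} = N := by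
    rw [Nat.card_eq_fintype_card, Fintype.card_subtype, hNdef]
    refine Finset.card_bij' (fun u _ => u⁻¹) (fun u _ => u⁻¹) ?_ ?_ ?_ ?_
    · intro u hu
      obtain ⟨_, ha1, ha2⟩ := Finset.mem_filter.mp hu
      have h3 : u ^ (Q + 1) = 1 := by rw [pow_succ, mul_comm]; exact ha1
      refine Finset.mem_filter.mpr ⟨?_, ?_⟩
      · rw [hUmem, inv_pow, h3, inv_one]
      · rw [inv_inv]; exact ha2
    · intro v hv
      obtain ⟨h1, h2⟩ := Finset.mem_filter.mp hv
      have hv1 : v ^ (Q + 1) = 1 := (hUmem v).mp h1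
      refine Finset.mem_filter.mpr ⟨Finset.mem_univ _, ?_, ?_⟩
      · rw [inv_pow, ← mul_inv_rev, ← pow_succ, hv1, inv_one]
      · exact h2
    · intro u _; exact inv_inv u
    · intro u _; exact inv_inv u
  -- finish
  have hfinal : (∑ x : F, f x) =
      ((Nat.card {u : F // u * u ^ Q = 1 ∧ P u = 0} : ℂ) - 1) * (Q : ℂ) := by
    rw [hWN, htotal]
  rw [hQdef] at hfinal
  push_cast at hfinal ⊢
  exact hfinal
end
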